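/- arXiv:1206.6673 — 11 statements merged into one kernel-verified Lean document; each statement's English description precedes it below -/
import Mathlib

section
/- For all integers N ≥ 1 and l with 0 ≤ l ≤ N, one has (1/N) · Σ_{n=1}^{N-1} sin²(n l π/N) / sin²(n π/N) = l(N−l)/N. -/
open Real Finset

lemma cos_sum_zero (N k : ℕ) (hk1 : 1 ≤ k) (hk : k < N) :
    ∑ n ∈ Finset.range N, Real.cos (2 * Real.pi * k * n / N) = 0 := by
  have hNpos : 0 < N := lt_of_le_of_lt (Nat.zero_le k) hk
  have hN0 : (0:ℝ) < N := by exact_mod_cast hNpos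
  set θ : ℝ := 2 * Real.pi * k / N with hθ
  set z : ℂ := Complex.exp (θ * Complex.I) with hz
  have hzn : ∀ n : ℕ, (z ^ n).re = Real.cos (2 * Real.pi * k * n / N) := by
    intro n
    rw [hz, ← Complex.exp_nat_mul]
    have : (n : ℂ) * (↑θ * Complex.I) = ((2 * Real.pi * k * n / N : ℝ) : ℂ) * Complex.I := by
      push_cast [hθ]; ring
    rw [this, Complex.exp_ofReal_mul_I_re]
  have hθ1 : 0 < θ := by
    rw [hθ]
    have : (0:ℝ) < k := by exact_mod_cast hk1
    positivity
  have hθ2 : θ < 2 * Real.pi := by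
    rw [hθ, div_lt_iff₀ hN0]
    have hkN : (k:ℝ) < N := by exact_mod_cast hk
    nlinarith [Real.pi_pos]
  have hz1 : z ≠ 1 := by
    intro h
    rw [hz, Complex.exp_eq_one_iff] at h
    obtain ⟨m, hm⟩ := h
    have hI : (θ : ℂ) = m * (2 * Real.pi) := by
      apply mul_right_cancel₀ Complex.I_ne_zero
      rw [hm]; ring
    have hre : θ = m * (2 * Real.pi) := by exact_mod_cast hI
    rcases lt_trichotomy m 0 with h' | h' | h'
    · have hm1 : (m:ℝ) ≤ -1 := by exact_mod_cast (by omega : m ≤ -1)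
      nlinarith [Real.pi_pos]
    · rw [h'] at hre; push_cast at hre; linarith
    · have hm1 : (1:ℝ) ≤ (m:ℝ) := by exact_mod_cast h'
      nlinarith [Real.pi_pos]
  have hzN : z ^ N = 1 := by
    rw [hz, ← Complex.exp_nat_mul, Complex.exp_eq_one_iff]
    refine ⟨k, ?_⟩
    have hNc : (N:ℂ) ≠ 0 := by exact_mod_cast hNpos.ne'
    rw [hθ]
    push_cast
    field_simp
  have hsum : ∑ n ∈ Finset.range N, z ^ n = 0 := by
    rw [geom_sum_eq hz1, hzN]; simp
  calc ∑ n ∈ Finset.range N, Real.cos (2 * Real.pi * k * n / N)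
      = (∑ n ∈ Finset.range N, z ^ n).re := by
        rw [Complex.re_sum]; exact Finset.sum_congr rfl fun n _ => (hzn n).symm
    _ = 0 := by rw [hsum]; simp

lemma cos_sum_Icc (N k : ℕ) (hk1 : 1 ≤ k) (hk : k < N) :
    ∑ n ∈ Finset.Icc 1 (N-1), Real.cos (2 * Real.pi * k * n / N) = -1 := by
  have hN : 0 < N := lt_of_le_of_lt (Nat.zero_le k) hk
  have hIcc : Finset.Icc 1 (N-1) = Finset.Ico 1 N := by
    rw [← Finset.Ico_add_one_right_eq_Icc]
    congr 1
    omega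
  have h0 := cos_sum_zero N k hk1 hk
  rw [Finset.range_eq_Ico, Finset.sum_eq_sum_Ico_succ_bot hN] at h0
  simp only [Nat.cast_zero, mul_zero, zero_div, Real.cos_zero] at h0
  rw [hIcc]
  linarith

lemma key_trig (x : ℝ) (hx : Real.sin x ≠ 0) (l : ℕ) :
    Real.sin (((l:ℝ)+2)*x)^2 / Real.sin x ^2
      = 2 * (Real.sin (((l:ℝ)+1)*x)^2 / Real.sin x ^2)
        - Real.sin ((l:ℝ)*x)^2 / Real.sin x ^2
        + 2 * Real.cos (2*((l:ℝ)+1)*x) := by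
  have h1 : Real.sin (((l:ℝ)+2)*x)
      = Real.sin (((l:ℝ)+1)*x) * Real.cos x + Real.cos (((l:ℝ)+1)*x) * Real.sin x := by
    rw [show ((l:ℝ)+2)*x = ((l:ℝ)+1)*x + x by ring, Real.sin_add]
  have h2 : Real.sin ((l:ℝ)*x)
      = Real.sin (((l:ℝ)+1)*x) * Real.cos x - Real.cos (((l:ℝ)+1)*x) * Real.sin x := by
    rw [show (l:ℝ)*x = ((l:ℝ)+1)*x - x by ring, Real.sin_sub]
  have h3 : Real.cos (2*((l:ℝ)+1)*x)
      = Real.cos (((l:ℝ)+1)*x)^2 - Real.sin (((l:ℝ)+1)*x)^2 := by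
    rw [show 2*((l:ℝ)+1)*x = 2*(((l:ℝ)+1)*x) by ring]
    exact Real.cos_two_mul' _
  have hpyth := Real.sin_sq_add_cos_sq x
  field_simp
  rw [h1, h2, show 2 * x * ((l:ℝ)+1) = 2*((l:ℝ)+1)*x by ring, show x * ((l:ℝ)+1) = ((l:ℝ)+1)*x by ring, h3]
  nlinarith [hpyth, Real.sin_sq_add_cos_sq (((l:ℝ)+1)*x)]

lemma F_val (N : ℕ) (hN : 1 ≤ N) :
    ∀ l, l ≤ N →
      ∑ n ∈ Finset.Icc 1 (N-1),
        (Real.sin (n * l * Real.pi / N)) ^ 2 / (Real.sin (n * Real.pi / N)) ^ 2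
      = (l : ℝ) * ((N : ℝ) - l) := by
  have hNR : (0:ℝ) < N := by exact_mod_cast hN
  have hsin : ∀ m ∈ Finset.Icc 1 (N-1), Real.sin ((m:ℝ) * Real.pi / N) ≠ 0 := by
    intro m hm
    rw [Finset.mem_Icc] at hm
    have h1 : 1 ≤ m := hm.1
    have h2 : m < N := by omega
    have hmR : (0:ℝ) < m := by exact_mod_cast h1
    have hmN : (m:ℝ) < N := by exact_mod_cast h2
    apply ne_of_gt
    apply Real.sin_pos_of_pos_of_lt_pi
    · positivity
    · rw [div_lt_iff₀ hNR]
      nlinarith [Real.pi_pos]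
  intro l
  induction l using Nat.twoStepInduction with
  | zero =>
    intro _
    simp
  | one =>
    intro _
    have hone : ∀ m ∈ Finset.Icc 1 (N-1),
        (Real.sin ((m:ℝ) * (1:ℕ) * Real.pi / N)) ^ 2 / (Real.sin ((m:ℝ) * Real.pi / N)) ^ 2
        = 1 := by
      intro m hm
      simp only [Nat.cast_one, mul_one]
      exact div_self (pow_ne_zero 2 (hsin m hm))
    rw [Finset.sum_congr rfl hone, Finset.sum_const, Nat.card_Icc, nsmul_eq_mul, mul_one]
    rw [show N - 1 + 1 - 1 = N - 1 by omega]
    push_cast [Nat.cast_sub hN]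
    ring
  | more l ih1 ih2 =>
    intro hl
    have hl1 : l + 1 ≤ N := by omega
    have hl0 : l ≤ N := by omega
    have e1 := ih1 hl0
    have e2 := ih2 hl1
    have step : ∀ m ∈ Finset.Icc 1 (N-1),
        (Real.sin ((m:ℝ) * (l+2 : ℕ) * Real.pi / N)) ^ 2 / (Real.sin ((m:ℝ) * Real.pi / N)) ^ 2
        = 2 * ((Real.sin ((m:ℝ) * (l+1 : ℕ) * Real.pi / N)) ^ 2 / (Real.sin ((m:ℝ) * Real.pi / N)) ^ 2)
          - (Real.sin ((m:ℝ) * (l:ℕ) * Real.pi / N)) ^ 2 / (Real.sin ((m:ℝ) * Real.pi / N)) ^ 2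
          + 2 * Real.cos (2 * Real.pi * (l+1 : ℕ) * m / N) := by
      intro m hm
      have h := key_trig ((m:ℝ) * Real.pi / N) (hsin m hm) l
      have a1 : ((l:ℝ)+2) * ((m:ℝ) * Real.pi / N) = (m:ℝ) * (l+2 : ℕ) * Real.pi / N := by
        push_cast; ring
      have a2 : ((l:ℝ)+1) * ((m:ℝ) * Real.pi / N) = (m:ℝ) * (l+1 : ℕ) * Real.pi / N := by
        push_cast; ring
      have a3 : (l:ℝ) * ((m:ℝ) * Real.pi / N) = (m:ℝ) * (l:ℕ) * Real.pi / N := by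
        push_cast; ring
      have a4 : 2*((l:ℝ)+1) * ((m:ℝ) * Real.pi / N) = 2 * Real.pi * (l+1 : ℕ) * m / N := by
        push_cast; ring
      rw [a1, a2, a3, a4] at h
      exact h
    rw [Finset.sum_congr rfl step]
    rw [Finset.sum_add_distrib, Finset.sum_sub_distrib, ← Finset.mul_sum, ← Finset.mul_sum]
    rw [e1, e2, cos_sum_Icc N (l+1) (by omega) (by omega)]
    push_cast
    ring

theorem cycle_two_point_resistance (N l : ℕ) (hN : 1 ≤ N) (hl : l ≤ N) :
    (1 / (N : ℝ)) * ∑ n ∈ Finset.Icc 1 (N - 1),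
      (Real.sin (n * l * Real.pi / N)) ^ 2 / (Real.sin (n * Real.pi / N)) ^ 2
    = (l : ℝ) * ((N : ℝ) - l) / N := by
  rw [F_val N hN l hl, one_div, inv_mul_eq_div]
end

section
/- For all integers N ≥ 1 and l with 0 ≤ l ≤ N, one has (1/N) · Σ_{n=1}^{N-1} (1 − cos(n l π/N)) / (1 − cos(n π/N)) = l − (1/N)·( l²/2 + (1 − (−1)^l)/4 ). -/
open Real Finset

/-- Fejér-type kernel coefficients: `pgA l θ = l + 2 ∑_{m=1}^{l-1} (l-m) cos (mθ)`. -/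
noncomputable def pgA (l : ℕ) (θ : ℝ) : ℝ :=
  (∑ m ∈ Finset.range l, 2 * ((l : ℝ) - (m : ℝ)) * Real.cos ((m : ℝ) * θ)) - (l : ℝ)

lemma pgA_rec (θ : ℝ) (l : ℕ) :
    pgA (l + 2) θ = 2 * pgA (l + 1) θ - pgA l θ + 2 * Real.cos (((l : ℝ) + 1) * θ) := by
  simp only [pgA]
  rw [Finset.sum_range_succ, Finset.sum_range_succ,
    Finset.sum_range_succ (f := fun m => 2 * (((l + 1 : ℕ) : ℝ) - (m : ℝ)) * Real.cos ((m : ℝ) * θ))]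
  have h : ∑ m ∈ Finset.range l, 2 * (((l + 2 : ℕ) : ℝ) - (m : ℝ)) * Real.cos ((m : ℝ) * θ)
      = ∑ m ∈ Finset.range l, (2 * (2 * (((l + 1 : ℕ) : ℝ) - (m : ℝ)) * Real.cos ((m : ℝ) * θ))
          - 2 * ((l : ℝ) - (m : ℝ)) * Real.cos ((m : ℝ) * θ)) :=
    Finset.sum_congr rfl fun m _ => by push_cast; ring
  rw [h, Finset.sum_sub_distrib, ← Finset.mul_sum]
  push_cast
  ring

lemma pgA_key (θ : ℝ) (l : ℕ) :
    (1 - Real.cos θ) * pgA l θ = 1 - Real.cos ((l : ℝ) * θ) := by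
  induction l using Nat.twoStepInduction with
  | zero => simp [pgA]
  | one => simp [pgA]; ring
  | more l ih0 ih1 =>
      rw [pgA_rec]
      have tc : Real.cos (((l : ℝ) + 2) * θ)
          = 2 * Real.cos θ * Real.cos (((l : ℝ) + 1) * θ) - Real.cos ((l : ℝ) * θ) := by
        have h1 := Real.cos_add (((l : ℝ) + 1) * θ) θ
        have h2 := Real.cos_sub (((l : ℝ) + 1) * θ) θ
        rw [show ((l : ℝ) + 1) * θ + θ = ((l : ℝ) + 2) * θ by ring] at h1
        rw [show ((l : ℝ) + 1) * θ - θ = (l : ℝ) * θ by ring] at h2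
        linarith
      push_cast at ih0 ih1 ⊢
      linear_combination 2 * ih1 - ih0 + tc

lemma pg_cos_sum (N m : ℕ) (hN : 1 ≤ N) (hm1 : 1 ≤ m) (hmN : m < N) :
    ∑ n ∈ Finset.Icc 1 (N - 1), Real.cos ((m : ℝ) * ((n : ℝ) * Real.pi / N))
      = (-(-1 : ℝ) ^ m - 1) / 2 := by
  have hN0 : (0 : ℝ) < N := by exact_mod_cast Nat.lt_of_lt_of_le Nat.zero_lt_one hN
  have hm0 : (0 : ℝ) < m := by exact_mod_cast hm1
  have hmN' : (m : ℝ) < N := by exact_mod_cast hmN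
  set φ : ℝ := (m : ℝ) * Real.pi / N with hφdef
  have hφpos : 0 < φ := by positivity
  have hφlt : φ < Real.pi := by
    rw [hφdef, div_lt_iff₀ hN0]
    nlinarith [Real.pi_pos]
  have hs : 0 < Real.sin (φ / 2) :=
    Real.sin_pos_of_pos_of_lt_pi (by linarith) (by linarith [Real.pi_pos])
  set g : ℕ → ℝ := fun i => Real.sin ((i : ℝ) * φ + φ / 2) with hgdef
  have hterm : ∀ i : ℕ, 2 * Real.sin (φ / 2) * Real.cos (((1 + i : ℕ) : ℝ) * φ)
      = g (i + 1) - g i := by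
    intro i
    have hsin : Real.sin φ = 2 * Real.sin (φ / 2) * Real.cos (φ / 2) := by
      have h := Real.sin_two_mul (φ / 2)
      rw [show 2 * (φ / 2) = φ by ring] at h
      exact h
    have hcos : Real.cos φ = 1 - 2 * Real.sin (φ / 2) ^ 2 := by
      have h1 := Real.cos_two_mul (φ / 2)
      have h2 := Real.sin_sq_add_cos_sq (φ / 2)
      rw [show 2 * (φ / 2) = φ by ring] at h1
      nlinarith
    simp only [hgdef]
    push_cast
    rw [show (1 + (i : ℝ)) * φ = ((i : ℝ) * φ + φ / 2) + φ / 2 by ring,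
      show ((i : ℝ) + 1) * φ + φ / 2 = ((i : ℝ) * φ + φ / 2) + φ by ring,
      Real.cos_add, Real.sin_add ((i : ℝ) * φ + φ / 2) φ, hsin, hcos]
    ring
  have htel : 2 * Real.sin (φ / 2) *
      (∑ i ∈ Finset.range (N - 1), Real.cos (((1 + i : ℕ) : ℝ) * φ)) = g (N - 1) - g 0 := by
    rw [Finset.mul_sum, ← Finset.sum_range_sub g (N - 1)]
    exact Finset.sum_congr rfl fun i _ => hterm i
  have hg0 : g 0 = Real.sin (φ / 2) := by simp [hgdef]
  have hgN : g (N - 1) = -((-1 : ℝ) ^ m * Real.sin (φ / 2)) := by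
    have hNφ : ((N - 1 : ℕ) : ℝ) * φ + φ / 2 = (m : ℝ) * Real.pi - φ / 2 := by
      rw [Nat.cast_sub hN]
      have hφN : φ * N = (m : ℝ) * Real.pi := by rw [hφdef, div_mul_cancel₀ _ hN0.ne']
      linear_combination hφN
    rw [hgdef]
    simp only []
    rw [hNφ, Real.sin_nat_mul_pi_sub]
  have hIcc : ∑ n ∈ Finset.Icc 1 (N - 1), Real.cos ((m : ℝ) * ((n : ℝ) * Real.pi / N))
      = ∑ i ∈ Finset.range (N - 1), Real.cos (((1 + i : ℕ) : ℝ) * φ) := by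
    rw [show Finset.Icc 1 (N - 1) = Finset.Ico 1 N by
        rw [← Finset.Ico_add_one_right_eq_Icc]; congr 1; omega,
      Finset.sum_Ico_eq_sum_range]
    refine Finset.sum_congr rfl fun i _ => ?_
    congr 1
    rw [hφdef]
    push_cast
    ring
  have h2s : (0 : ℝ) < 2 * Real.sin (φ / 2) := by positivity
  rw [hIcc]
  apply mul_left_cancel₀ h2s.ne'
  rw [htel, hgN, hg0]
  ring

lemma pgV (k : ℕ) : ∑ i ∈ Finset.range k, ((-1 : ℝ) ^ i - 1) = (1 - (-1 : ℝ) ^ k) / 2 - k := by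
  induction k with
  | zero => simp
  | succ k ih =>
    rw [Finset.sum_range_succ, ih]
    push_cast
    ring

lemma pgW (k : ℕ) : ∑ i ∈ Finset.range k, (((k : ℝ) + 1) - ((i : ℝ) + 1)) * ((-1 : ℝ) ^ i - 1)
    = -(((k : ℝ) + 1) ^ 2 / 2 - ((k : ℝ) + 1) + (1 - (-1 : ℝ) ^ (k + 1)) / 4) := by
  induction k with
  | zero => norm_num
  | succ k ih =>
    rw [Finset.sum_range_succ]
    have h : ∑ i ∈ Finset.range k, ((((k + 1 : ℕ) : ℝ) + 1) - ((i : ℝ) + 1)) * ((-1 : ℝ) ^ i - 1)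
        = ∑ i ∈ Finset.range k,
            ((((k : ℝ) + 1) - ((i : ℝ) + 1)) * ((-1 : ℝ) ^ i - 1) + ((-1 : ℝ) ^ i - 1)) :=
      Finset.sum_congr rfl fun i _ => by push_cast; ring
    rw [h, Finset.sum_add_distrib, ih, pgV]
    push_cast
    ring

theorem path_graph_two_point_resistance (N l : ℕ) (hN : 1 ≤ N) (hl : l ≤ N) :
    (1 / (N : ℝ)) * ∑ n ∈ Finset.Icc 1 (N - 1),
      (1 - Real.cos (n * l * Real.pi / N)) / (1 - Real.cos (n * Real.pi / N))
    = (l : ℝ) - (1 / (N : ℝ)) * ((l : ℝ) ^ 2 / 2 + (1 - (-1 : ℝ) ^ l) / 4) := by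
  have hN0 : (0 : ℝ) < N := by exact_mod_cast Nat.lt_of_lt_of_le Nat.zero_lt_one hN
  have hcard : ((Finset.Icc 1 (N - 1)).card : ℝ) = (N : ℝ) - 1 := by
    rw [Nat.card_Icc, show N - 1 + 1 - 1 = N - 1 by omega, Nat.cast_sub hN, Nat.cast_one]
  have hsum : ∑ n ∈ Finset.Icc 1 (N - 1),
      (1 - Real.cos (n * l * Real.pi / N)) / (1 - Real.cos (n * Real.pi / N))
      = ∑ n ∈ Finset.Icc 1 (N - 1), pgA l ((n : ℝ) * Real.pi / N) := by
    refine Finset.sum_congr rfl fun n hn => ?_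
    obtain ⟨hn1, hn2⟩ := Finset.mem_Icc.mp hn
    have hnN : n < N := by omega
    have hnR : (0 : ℝ) < n := by exact_mod_cast hn1
    have hnNR : (n : ℝ) < N := by exact_mod_cast hnN
    set θ : ℝ := (n : ℝ) * Real.pi / N with hθdef
    have hθpos : 0 < θ := by positivity
    have hθlt : θ < Real.pi := by
      rw [hθdef, div_lt_iff₀ hN0]
      nlinarith [Real.pi_pos]
    have hsh : 0 < Real.sin (θ / 2) :=
      Real.sin_pos_of_pos_of_lt_pi (by linarith) (by linarith [Real.pi_pos])
    have hden : 0 < 1 - Real.cos θ := by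
      have h1 := Real.cos_two_mul (θ / 2)
      have h2 := Real.sin_sq_add_cos_sq (θ / 2)
      rw [show 2 * (θ / 2) = θ by ring] at h1
      nlinarith
    have hkey := pgA_key θ l
    rw [show (n : ℝ) * (l : ℝ) * Real.pi / N = (l : ℝ) * θ by rw [hθdef]; ring,
      div_eq_iff hden.ne']
    linear_combination -hkey
  rw [hsum]
  have hswap : ∑ n ∈ Finset.Icc 1 (N - 1), pgA l ((n : ℝ) * Real.pi / N)
      = (∑ m ∈ Finset.range l, 2 * ((l : ℝ) - (m : ℝ)) *
          ∑ n ∈ Finset.Icc 1 (N - 1), Real.cos ((m : ℝ) * ((n : ℝ) * Real.pi / N)))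
        - ((N : ℝ) - 1) * (l : ℝ) := by
    simp only [pgA]
    rw [Finset.sum_sub_distrib, Finset.sum_const, Finset.sum_comm, nsmul_eq_mul, hcard]
    congr 1
    exact Finset.sum_congr rfl fun m _ => (Finset.mul_sum _ _ _).symm
  rw [hswap]
  rcases Nat.eq_zero_or_pos l with hl0 | hlpos
  · subst hl0
    simp
  obtain ⟨k, rfl⟩ : ∃ k, l = k + 1 := ⟨l - 1, by omega⟩
  have hval : ∑ m ∈ Finset.range (k + 1), 2 * (((k + 1 : ℕ) : ℝ) - (m : ℝ)) *
        ∑ n ∈ Finset.Icc 1 (N - 1), Real.cos ((m : ℝ) * ((n : ℝ) * Real.pi / N))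
      = 2 * ((k : ℝ) + 1) * ((N : ℝ) - 1)
        - (((k : ℝ) + 1) ^ 2 / 2 - ((k : ℝ) + 1) + (1 - (-1 : ℝ) ^ (k + 1)) / 4) := by
    rw [Finset.sum_range_succ']
    have h0 : ∑ n ∈ Finset.Icc 1 (N - 1),
        Real.cos (((0 : ℕ) : ℝ) * ((n : ℝ) * Real.pi / N)) = (N : ℝ) - 1 := by
      simp only [Nat.cast_zero, zero_mul, Real.cos_zero]
      rw [Finset.sum_const, nsmul_eq_mul, mul_one, hcard]
    have h1 : ∑ i ∈ Finset.range k, 2 * (((k + 1 : ℕ) : ℝ) - ((i + 1 : ℕ) : ℝ)) *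
          ∑ n ∈ Finset.Icc 1 (N - 1), Real.cos (((i + 1 : ℕ) : ℝ) * ((n : ℝ) * Real.pi / N))
        = ∑ i ∈ Finset.range k, (((k : ℝ) + 1) - ((i : ℝ) + 1)) * ((-1 : ℝ) ^ i - 1) := by
      refine Finset.sum_congr rfl fun i hi => ?_
      have hik : i < k := Finset.mem_range.mp hi
      rw [pg_cos_sum N (i + 1) hN (by omega) (by omega)]
      push_cast
      ring
    rw [h1, pgW, h0]
    push_cast
    ring
  rw [hval]
  push_cast
  field_simp
  ring
end

section
/- Let N be a positive even integer and let l be an integer with 0 ≤ l ≤ N. Then (1/N) · Σ_{n=1}^{N/2} (1 − cos((2n−1) l π/N)) / (1 − cos((2n−1) π/N)) = l/2. -/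
open Real Finset

lemma tele (x : ℝ) (M : ℕ) :
    2 * Real.sin x * ∑ n ∈ Finset.Icc 1 M, Real.cos ((2 * (n : ℝ) - 1) * x)
      = Real.sin (2 * M * x) := by
  induction M with
  | zero => simp
  | succ k ih =>
    rw [Finset.sum_Icc_succ_top (by omega : 1 ≤ k + 1)]
    have h := Real.sin_sub_sin (2 * ((k : ℝ) + 1) * x) (2 * (k : ℝ) * x)
    have e1 : (2 * ((k : ℝ) + 1) * x - 2 * (k : ℝ) * x) / 2 = x := by ring
    have e2 : (2 * ((k : ℝ) + 1) * x + 2 * (k : ℝ) * x) / 2 = (2 * ((k : ℝ) + 1) - 1) * x := by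
      ring
    rw [e1, e2] at h
    push_cast
    linear_combination ih - h

lemma cos_sum_zero_s2 (N l : ℕ) (hN0 : 0 < N) (hNe : Even N) (h1 : 1 ≤ l) (h2 : l < N) :
    ∑ n ∈ Finset.Icc 1 (N / 2), Real.cos ((2 * (n : ℝ) - 1) * l * Real.pi / N) = 0 := by
  obtain ⟨k, hk⟩ := hNe
  have hk' : N = 2 * k := by omega
  subst hk'
  have hk0 : 0 < k := by omega
  set x : ℝ := l * Real.pi / (2 * k) with hx
  have hNx : ((2 * k : ℕ) : ℝ) ≠ 0 := by positivity
  have hxpos : 0 < x := by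
    apply div_pos (by positivity) (by positivity)
  have hxlt : x < Real.pi := by
    rw [hx, div_lt_iff₀ (by positivity)]
    have : (l : ℝ) < (2 * k : ℕ) := by exact_mod_cast h2
    push_cast at this ⊢
    nlinarith [Real.pi_pos]
  have hs : Real.sin x ≠ 0 := (Real.sin_pos_of_pos_of_lt_pi hxpos hxlt).ne'
  have key := tele x (k)
  have hdiv : (2 * k) / 2 = k := by omega
  rw [hdiv]
  push_cast
  have hsum : ∑ n ∈ Finset.Icc 1 k, Real.cos ((2 * (n : ℝ) - 1) * l * Real.pi / (2 * k)) =
      ∑ n ∈ Finset.Icc 1 k, Real.cos ((2 * (n : ℝ) - 1) * x) := by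
    apply Finset.sum_congr rfl
    intro n _
    congr 1
    rw [hx]
    push_cast
    ring
  rw [hsum]
  have hend : Real.sin (2 * (k : ℝ) * x) = 0 := by
    have : 2 * (k : ℝ) * x = l * Real.pi := by
      rw [hx]; field_simp
    rw [this]
    exact Real.sin_nat_mul_pi l
  rw [hend] at key
  have h2s : 2 * Real.sin x ≠ 0 := by positivity
  exact (mul_eq_zero.mp key).resolve_left h2s

lemma denom_pos (N n : ℕ) (hN : 0 < N) (h1 : 1 ≤ n) (h2 : n ≤ N / 2) :
    0 < 1 - Real.cos ((2 * (n : ℝ) - 1) * Real.pi / N) := by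
  have hθpos : 0 < (2 * (n : ℝ) - 1) * Real.pi / N := by
    have : (1 : ℝ) ≤ n := by exact_mod_cast h1
    have := Real.pi_pos
    apply div_pos (by nlinarith) (by positivity)
  have hθlt : (2 * (n : ℝ) - 1) * Real.pi / N ≤ Real.pi := by
    rw [div_le_iff₀ (by positivity)]
    have hn : (n : ℝ) ≤ N / 2 := by
      have : 2 * n ≤ N := by omega
      have : (2 * n : ℝ) ≤ N := by exact_mod_cast this
      linarith
    nlinarith [Real.pi_pos]
  have : Real.cos ((2 * (n : ℝ) - 1) * Real.pi / N) < Real.cos 0 := by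
    rcases lt_or_eq_of_le hθlt with h | h
    · exact Real.cos_lt_cos_of_nonneg_of_le_pi le_rfl (le_of_lt h) hθpos
    · rw [h, Real.cos_pi, Real.cos_zero]; norm_num
  rw [Real.cos_zero] at this
  linarith

lemma key_rec (θ : ℝ) (hθ : Real.cos θ ≠ 1) (m : ℝ) :
    (1 - Real.cos ((m + 2) * θ)) / (1 - Real.cos θ)
      = 2 * ((1 - Real.cos ((m + 1) * θ)) / (1 - Real.cos θ))
        - (1 - Real.cos (m * θ)) / (1 - Real.cos θ)
        + 2 * Real.cos ((m + 1) * θ) := by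
  have hd : 1 - Real.cos θ ≠ 0 := sub_ne_zero.mpr (Ne.symm hθ)
  have hcc : Real.cos ((m + 2) * θ) + Real.cos (m * θ)
      = 2 * Real.cos ((m + 1) * θ) * Real.cos θ := by
    rw [Real.cos_add_cos]
    ring_nf
  field_simp
  rw [mul_comm θ (m + 1)]
  linear_combination -hcc

theorem odd_angle_resistance_sum (N l : ℕ) (hN : 0 < N) (hNeven : Even N) (hl : l ≤ N) :
    (1 / (N : ℝ)) * ∑ n ∈ Finset.Icc 1 (N / 2),
      (1 - Real.cos ((2 * n - 1 : ℝ) * l * Real.pi / N)) /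
        (1 - Real.cos ((2 * n - 1 : ℝ) * Real.pi / N))
    = (l : ℝ) / 2 := by
  have hN0 : (N : ℝ) ≠ 0 := by positivity
  suffices h : ∀ l : ℕ, l ≤ N → ∑ n ∈ Finset.Icc 1 (N / 2),
      (1 - Real.cos ((2 * n - 1 : ℝ) * l * Real.pi / N)) /
        (1 - Real.cos ((2 * n - 1 : ℝ) * Real.pi / N)) = l * N / 2 by
    rw [h l hl]
    field_simp
  intro l
  induction l using Nat.strong_induction_on with
  | _ l IH =>
    match l with
    | 0 =>
      intro _
      simp
    | 1 =>
      intro _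
      have : ∑ n ∈ Finset.Icc 1 (N / 2),
          (1 - Real.cos ((2 * n - 1 : ℝ) * (1 : ℕ) * Real.pi / N)) /
            (1 - Real.cos ((2 * n - 1 : ℝ) * Real.pi / N)) = ∑ n ∈ Finset.Icc 1 (N / 2), (1:ℝ) := by
        apply Finset.sum_congr rfl
        intro n hn
        rw [Finset.mem_Icc] at hn
        have hd := denom_pos N n hN hn.1 hn.2
        rw [Nat.cast_one, mul_one, div_self hd.ne']
      rw [this, Finset.sum_const, Nat.card_Icc]
      obtain ⟨k, hk⟩ := hNeven
      have hk' : N = 2 * k := by omega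
      subst hk'
      simp
    | (m + 2) =>
      intro hle
      have h1 := IH m (by omega) (by omega)
      have h2 := IH (m + 1) (by omega) (by omega)
      have hcz := cos_sum_zero_s2 N (m + 1) hN hNeven (by omega) (by omega)
      have hstep : ∑ n ∈ Finset.Icc 1 (N / 2),
          (1 - Real.cos ((2 * n - 1 : ℝ) * (m + 2 : ℕ) * Real.pi / N)) /
            (1 - Real.cos ((2 * n - 1 : ℝ) * Real.pi / N))
          = ∑ n ∈ Finset.Icc 1 (N / 2),
            (2 * ((1 - Real.cos ((2 * n - 1 : ℝ) * (m + 1 : ℕ) * Real.pi / N)) /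
              (1 - Real.cos ((2 * n - 1 : ℝ) * Real.pi / N)))
            - (1 - Real.cos ((2 * n - 1 : ℝ) * (m : ℕ) * Real.pi / N)) /
              (1 - Real.cos ((2 * n - 1 : ℝ) * Real.pi / N))
            + 2 * Real.cos ((2 * n - 1 : ℝ) * (m + 1 : ℕ) * Real.pi / N)) := by
        apply Finset.sum_congr rfl
        intro n hn
        rw [Finset.mem_Icc] at hn
        have hd := denom_pos N n hN hn.1 hn.2
        have hθ : Real.cos ((2 * (n : ℝ) - 1) * Real.pi / N) ≠ 1 := by linarith
        have := key_rec ((2 * (n : ℝ) - 1) * Real.pi / N) hθ (m : ℝ)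
        have e2 : (2 * (n : ℝ) - 1) * (m + 2 : ℕ) * Real.pi / N
            = ((m : ℝ) + 2) * ((2 * (n : ℝ) - 1) * Real.pi / N) := by push_cast; ring
        have e1 : (2 * (n : ℝ) - 1) * (m + 1 : ℕ) * Real.pi / N
            = ((m : ℝ) + 1) * ((2 * (n : ℝ) - 1) * Real.pi / N) := by push_cast; ring
        have e0 : (2 * (n : ℝ) - 1) * (m : ℕ) * Real.pi / N
            = (m : ℝ) * ((2 * (n : ℝ) - 1) * Real.pi / N) := by push_cast; ring
        rw [e2, e1, e0]
        exact this
      rw [hstep]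
      rw [Finset.sum_add_distrib, Finset.sum_sub_distrib, ← Finset.mul_sum, ← Finset.mul_sum]
      rw [h1, h2, hcz]
      push_cast
      ring
end

section
/- For all integers N ≥ 1 and l with 0 ≤ l ≤ N, one has Σ_{n=1}^{N} cos((2n−1) l π/N) / (1 − cos((2n−1) π/N)) = N²/2 − N l. -/
open Real Finset

lemma minc_den_ne (N : ℕ) (hN : 1 ≤ N) (n : ℕ) :
    Real.cos ((2 * n - 1 : ℝ) * Real.pi / N) ≠ 1 := by
  intro h
  rw [Real.cos_eq_one_iff] at h
  obtain ⟨m, hm⟩ := h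
  have hNne : (N : ℝ) ≠ 0 := Nat.cast_ne_zero.mpr (by omega)
  have hpi := Real.pi_ne_zero
  field_simp at hm
  have h2 : (2 * (m:ℝ) * N) * Real.pi = (2 * n - 1) * Real.pi := by rw [← hm]; ring
  have h3 := mul_right_cancel₀ hpi h2
  have h4 : ((2 * m * N : ℤ) : ℝ) = ((2 * n - 1 : ℤ) : ℝ) := by push_cast; linarith
  have h6 := Int.cast_injective (α := ℝ) h4
  have h5 : (2:ℤ) ∣ 2 * m * ↑N := ⟨m * N, by ring⟩
  rw [h6] at h5
  omega

lemma minc_cos_sum_zero (N k : ℕ) (hk1 : 1 ≤ k) (hk2 : k < N) :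
    ∑ n ∈ Finset.Icc 1 N, Real.cos ((2 * n - 1 : ℝ) * k * Real.pi / N) = 0 := by
  have hNne : (N : ℝ) ≠ 0 := Nat.cast_ne_zero.mpr (by omega)
  have hNne' : (N : ℂ) ≠ 0 := Nat.cast_ne_zero.mpr (by omega)
  set ζ : ℂ := Complex.exp (2 * k * Real.pi * Complex.I / N) with hζ
  have hζN : ζ ^ N = 1 := by
    rw [← Complex.exp_nat_mul]
    have h : (N:ℂ) * (2 * k * Real.pi * Complex.I / N) = (k:ℤ) * (2 * Real.pi * Complex.I) := by
      rw [mul_comm, div_mul_cancel₀ _ hNne']; push_cast; ring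
    rw [h, Complex.exp_int_mul_two_pi_mul_I]
  have hζ1 : ζ ≠ 1 := by
    intro h
    rw [hζ, Complex.exp_eq_one_iff] at h
    obtain ⟨m, hm⟩ := h
    have hI : (Complex.I : ℂ) ≠ 0 := Complex.I_ne_zero
    have hpi : (Real.pi : ℂ) ≠ 0 := Complex.ofReal_ne_zero.mpr Real.pi_ne_zero
    have htpi : (2 * Real.pi * Complex.I : ℂ) ≠ 0 := by
      simp [hpi, Complex.I_ne_zero]
    have h2 : ((k:ℤ) : ℂ) * (2 * Real.pi * Complex.I)
        = ((m * N : ℤ) : ℂ) * (2 * Real.pi * Complex.I) := by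
      rw [div_eq_iff hNne'] at hm
      push_cast
      linear_combination hm
    have h3 : (k:ℤ) = m * N := by exact_mod_cast mul_right_cancel₀ htpi h2
    have hN0 : (0:ℤ) < N := by omega
    rcases le_or_gt m 0 with h|h
    · nlinarith [h3]
    · have : 1 ≤ m := h
      nlinarith [h3]
  have key : ∑ n ∈ Finset.Icc 1 N,
      Complex.exp (((2 * n - 1 : ℝ) * k * Real.pi / N : ℝ) * Complex.I) = 0 := by
    have hterm : ∀ n : ℕ, Complex.exp (((2 * n - 1 : ℝ) * k * Real.pi / N : ℝ) * Complex.I)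
        = Complex.exp (-(k * Real.pi * Complex.I) / N) * ζ ^ n := by
      intro n
      rw [hζ, ← Complex.exp_nat_mul, ← Complex.exp_add]
      congr 1
      push_cast
      field_simp
      ring
    simp only [hterm]
    rw [← Finset.mul_sum]
    have hs : ∑ n ∈ Finset.Icc 1 N, ζ ^ n = 0 := by
      rw [← Finset.Ico_add_one_right_eq_Icc, Finset.sum_Ico_eq_sum_range]
      have h1 : ∀ i, ζ ^ (1 + i) = ζ * ζ ^ i := by intro i; rw [pow_add, pow_one]
      simp only [h1]
      rw [← Finset.mul_sum, geom_sum_eq hζ1]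
      simp [Nat.succ_sub_one, hζN]
    rw [hs, mul_zero]
  have hc : ∀ n ∈ Finset.Icc 1 N, Real.cos ((2 * n - 1 : ℝ) * k * Real.pi / N)
      = (Complex.exp (((2 * n - 1 : ℝ) * k * Real.pi / N : ℝ) * Complex.I)).re :=
    fun n _ => (Complex.exp_ofReal_mul_I_re _).symm
  rw [Finset.sum_congr rfl hc, ← Complex.re_sum, key]
  simp

noncomputable def mincA (N l : ℕ) : ℝ :=
  ∑ n ∈ Finset.Icc 1 N,
    Real.cos ((2 * n - 1 : ℝ) * l * Real.pi / N) /
      (1 - Real.cos ((2 * n - 1 : ℝ) * Real.pi / N))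

lemma minc_cos_triple (a x : ℝ) :
    Real.cos ((a + 2) * x) = 2 * Real.cos x * Real.cos ((a + 1) * x) - Real.cos (a * x) := by
  have h1 := Real.cos_add ((a + 1) * x) x
  have h2 := Real.cos_sub ((a + 1) * x) x
  have e1 : (a + 1) * x + x = (a + 2) * x := by ring
  have e2 : (a + 1) * x - x = a * x := by ring
  rw [e1] at h1; rw [e2] at h2
  linarith

lemma minc_main (N : ℕ) (hN : 1 ≤ N) : ∀ l : ℕ, l ≤ N →
    mincA N l = (N : ℝ) ^ 2 / 2 - (N : ℝ) * l := by
  have hNne : (N : ℝ) ≠ 0 := Nat.cast_ne_zero.mpr (by omega)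
  have hD : ∀ n : ℕ, 1 - Real.cos ((2 * n - 1 : ℝ) * Real.pi / N) ≠ 0 :=
    fun n => sub_ne_zero_of_ne (Ne.symm (minc_den_ne N hN n))
  -- A 0
  have hA0 : mincA N 0 = ∑ n ∈ Finset.Icc 1 N,
      1 / (1 - Real.cos ((2 * n - 1 : ℝ) * Real.pi / N)) := by
    unfold mincA
    apply Finset.sum_congr rfl
    intro n _
    norm_num
  -- recurrence
  have hrec : ∀ l : ℕ, mincA N (l + 2) = 2 * mincA N (l + 1) - mincA N l
      - 2 * ∑ n ∈ Finset.Icc 1 N, Real.cos ((2 * n - 1 : ℝ) * (l + 1 : ℕ) * Real.pi / N) := by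
    intro l
    have hpt : ∀ n ∈ Finset.Icc 1 N,
        Real.cos ((2 * n - 1 : ℝ) * (l + 2 : ℕ) * Real.pi / N) /
            (1 - Real.cos ((2 * n - 1 : ℝ) * Real.pi / N))
        = 2 * (Real.cos ((2 * n - 1 : ℝ) * (l + 1 : ℕ) * Real.pi / N) /
            (1 - Real.cos ((2 * n - 1 : ℝ) * Real.pi / N)))
          - Real.cos ((2 * n - 1 : ℝ) * l * Real.pi / N) /
            (1 - Real.cos ((2 * n - 1 : ℝ) * Real.pi / N))
          - 2 * Real.cos ((2 * n - 1 : ℝ) * (l + 1 : ℕ) * Real.pi / N) := by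
      intro n _
      have e2 : (2 * n - 1 : ℝ) * (l + 2 : ℕ) * Real.pi / N
          = ((l : ℝ) + 2) * ((2 * n - 1 : ℝ) * Real.pi / N) := by push_cast; ring
      have e1 : (2 * n - 1 : ℝ) * (l + 1 : ℕ) * Real.pi / N
          = ((l : ℝ) + 1) * ((2 * n - 1 : ℝ) * Real.pi / N) := by push_cast; ring
      have e0 : (2 * n - 1 : ℝ) * (l : ℕ) * Real.pi / N
          = (l : ℝ) * ((2 * n - 1 : ℝ) * Real.pi / N) := by ring
      rw [e2, e1, e0, minc_cos_triple (l : ℝ) ((2 * n - 1 : ℝ) * Real.pi / N)]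
      have := hD n
      field_simp
      ring
    unfold mincA
    rw [Finset.sum_congr rfl hpt, Finset.sum_sub_distrib, Finset.sum_sub_distrib,
      ← Finset.mul_sum, ← Finset.mul_sum]
  -- A 1
  have hA1 : mincA N 1 = mincA N 0 - N := by
    have hpt : ∀ n ∈ Finset.Icc 1 N,
        Real.cos ((2 * n - 1 : ℝ) * (1 : ℕ) * Real.pi / N) /
            (1 - Real.cos ((2 * n - 1 : ℝ) * Real.pi / N))
        = 1 / (1 - Real.cos ((2 * n - 1 : ℝ) * Real.pi / N)) - 1 := by
      intro n _
      have e1 : (2 * n - 1 : ℝ) * (1 : ℕ) * Real.pi / N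
          = (2 * n - 1 : ℝ) * Real.pi / N := by push_cast; ring
      rw [e1]
      have := hD n
      field_simp
      ring
    have h1 : mincA N 1
        = (∑ n ∈ Finset.Icc 1 N, 1 / (1 - Real.cos ((2 * n - 1 : ℝ) * Real.pi / N)))
          - ∑ _n ∈ Finset.Icc 1 N, (1 : ℝ) := by
      unfold mincA
      rw [Finset.sum_congr rfl hpt, Finset.sum_sub_distrib]
    rw [h1, ← hA0, Finset.sum_const, Nat.card_Icc]
    simp
  -- linearity
  have hB : ∀ l : ℕ, l ≤ N → mincA N l = mincA N 0 - N * l := by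
    intro l
    induction l using Nat.strong_induction_on with
    | _ l ih =>
      rcases l with _ | _ | l
      · intro _; simp
      · intro _; rw [hA1]; push_cast; ring
      · intro h
        have e := hrec l
        rw [minc_cos_sum_zero N (l + 1) (by omega) (by omega)] at e
        rw [e, ih (l + 1) (by omega) (by omega), ih l (by omega) (by omega)]
        push_cast; ring
  -- A N = -A 0
  have hAN : mincA N N = - mincA N 0 := by
    have hpt : ∀ n ∈ Finset.Icc 1 N,
        Real.cos ((2 * n - 1 : ℝ) * (N : ℕ) * Real.pi / N) /
            (1 - Real.cos ((2 * n - 1 : ℝ) * Real.pi / N))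
        = - (1 / (1 - Real.cos ((2 * n - 1 : ℝ) * Real.pi / N))) := by
      intro n _
      have hcos : Real.cos ((2 * n - 1 : ℝ) * (N : ℕ) * Real.pi / N) = -1 := by
        have e : (2 * n - 1 : ℝ) * (N : ℕ) * Real.pi / N
            = ((n : ℤ) - 1 : ℤ) * (2 * Real.pi) + Real.pi := by
          push_cast
          field_simp
          ring
        rw [e, Real.cos_int_mul_two_pi_add_pi]
      rw [hcos]
      ring
    have h1 : mincA N N
        = - ∑ n ∈ Finset.Icc 1 N, 1 / (1 - Real.cos ((2 * n - 1 : ℝ) * Real.pi / N)) := by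
      unfold mincA
      rw [Finset.sum_congr rfl hpt, Finset.sum_neg_distrib]
    rw [h1, ← hA0]
  have hA0v : mincA N 0 = (N : ℝ) ^ 2 / 2 := by
    have h1 := hB N le_rfl
    rw [hAN] at h1
    have hsq : (N : ℝ) ^ 2 = (N : ℝ) * N := pow_two _
    linarith
  intro l hl
  rw [hB l hl, hA0v]

theorem minc_scott_sum (N l : ℕ) (hN : 1 ≤ N) (hl : l ≤ N) :
    ∑ n ∈ Finset.Icc 1 N,
      Real.cos ((2 * n - 1 : ℝ) * l * Real.pi / N) /
        (1 - Real.cos ((2 * n - 1 : ℝ) * Real.pi / N))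
    = (N : ℝ) ^ 2 / 2 - (N : ℝ) * l := by
  exact minc_main N hN l hl
end

section
/- For every integer k ≥ 0, one has ((k+2)/2)² · Σ_{n=1}^{k+1} 1 / sin⁴( n π/(k+2) ) = (1/5) · D · ( D + 2(k+2) ), where D = (k+1)(k+2)(k+3)/6. -/
open Real Finset
open Polynomial

set_option linter.unusedSectionVars false

/-- elementary symmetric sum -/
noncomputable def esum {α : Type*} [DecidableEq α] (s : Finset α) (f : α → ℂ) (j : ℕ) : ℂ :=
  ∑ A ∈ s.powersetCard j, ∏ n ∈ A, f n

/-- power sum -/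
noncomputable def psum {α : Type*} (s : Finset α) (f : α → ℂ) (j : ℕ) : ℂ :=
  ∑ n ∈ s, f n ^ j

section NewtonSmall
variable {α : Type*} [DecidableEq α]

lemma esum_zero (s : Finset α) (f : α → ℂ) : esum s f 0 = 1 := by
  simp [esum]

lemma esum_empty (f : α → ℂ) (j : ℕ) : esum ∅ f (j+1) = 0 := by
  unfold esum
  rw [show (∅ : Finset α).powersetCard (j+1) = ∅ from by
    ext A; simp [mem_powersetCard, Finset.subset_empty]; rintro rfl; simp]
  simp

lemma esum_insert {x : α} {s : Finset α} (h : x ∉ s) (f : α → ℂ) (j : ℕ) :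
    esum (insert x s) f (j+1) = f x * esum s f j + esum s f (j+1) := by
  unfold esum
  rw [powersetCard_succ_insert h, sum_union, sum_image]
  · rw [add_comm, mul_sum]
    congr 1
    refine sum_congr rfl fun A hA => ?_
    rw [mem_powersetCard] at hA
    rw [prod_insert (fun hx => h (hA.1 hx))]
  · intro A hA B hB hAB
    rw [Finset.mem_coe, mem_powersetCard] at hA hB
    have hxA : x ∉ A := fun hx => h (hA.1 hx)
    have hxB : x ∉ B := fun hx => h (hB.1 hx)
    rw [← erase_insert hxA, ← erase_insert hxB, hAB]
  · rw [disjoint_right]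
    intro A hA hA'
    simp only [mem_image] at hA
    obtain ⟨B, hB, rfl⟩ := hA
    rw [mem_powersetCard] at hA'
    exact h (hA'.1 (mem_insert_self x B))

lemma psum_insert {x : α} {s : Finset α} (h : x ∉ s) (f : α → ℂ) (j : ℕ) :
    psum (insert x s) f j = f x ^ j + psum s f j := by
  unfold psum; rw [sum_insert h]

lemma newton1 (s : Finset α) (f : α → ℂ) : esum s f 1 = psum s f 1 := by
  induction s using Finset.induction_on with
  | empty => simp [esum_empty, psum]
  | insert x s h ih =>
    rw [esum_insert h, psum_insert h, esum_zero, ih]; ring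

lemma newton2 (s : Finset α) (f : α → ℂ) :
    2 * esum s f 2 = psum s f 1 ^ 2 - psum s f 2 := by
  induction s using Finset.induction_on with
  | empty => simp [esum_empty, psum]
  | @insert x s h ih =>
    rw [esum_insert h, psum_insert h, psum_insert h]
    linear_combination ih + 2 * f x * (newton1 s f)

lemma newton3 (s : Finset α) (f : α → ℂ) :
    6 * esum s f 3 = psum s f 1 ^ 3 - 3 * psum s f 1 * psum s f 2 + 2 * psum s f 3 := by
  induction s using Finset.induction_on with
  | empty => simp [esum_empty, psum]
  | @insert x s h ih =>
    rw [esum_insert h, psum_insert h, psum_insert h, psum_insert h]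
    linear_combination ih + 3 * f x * (newton2 s f)

lemma newton4 (s : Finset α) (f : α → ℂ) :
    24 * esum s f 4 = psum s f 1 ^ 4 - 6 * psum s f 1 ^ 2 * psum s f 2
      + 3 * psum s f 2 ^ 2 + 8 * psum s f 1 * psum s f 3 - 6 * psum s f 4 := by
  induction s using Finset.induction_on with
  | empty => simp [esum_empty, psum]
  | @insert x s h ih =>
    rw [esum_insert h, psum_insert h, psum_insert h, psum_insert h, psum_insert h]
    linear_combination ih + 4 * f x * (newton3 s f)

lemma esum_reflect (s : Finset α) (f : α → ℂ)
    (hf : ∀ n ∈ s, f n ≠ 0) (j : ℕ) (hj : j ≤ #s) :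
    esum s (fun n => (f n)⁻¹) j * ∏ n ∈ s, f n = esum s f (#s - j) := by
  unfold esum
  rw [Finset.sum_mul]
  apply Finset.sum_nbij' (fun A => s \ A) (fun B => s \ B)
  · intro A hA
    rw [Finset.mem_powersetCard] at hA ⊢
    exact ⟨Finset.sdiff_subset, by rw [Finset.card_sdiff_of_subset hA.1, hA.2]⟩
  · intro B hB
    rw [Finset.mem_powersetCard] at hB ⊢
    refine ⟨Finset.sdiff_subset, ?_⟩
    rw [Finset.card_sdiff_of_subset hB.1, hB.2]
    omega
  · intro A hA
    rw [Finset.mem_powersetCard] at hA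
    exact Finset.sdiff_sdiff_eq_self hA.1
  · intro B hB
    rw [Finset.mem_powersetCard] at hB
    exact Finset.sdiff_sdiff_eq_self hB.1
  · intro A hA
    rw [Finset.mem_powersetCard] at hA
    rw [← Finset.prod_sdiff hA.1, Finset.prod_inv_distrib]
    have hne : ∏ x ∈ A, f x ≠ 0 := Finset.prod_ne_zero_iff.2 (fun n hn => hf n (hA.1 hn))
    field_simp

end NewtonSmall

lemma esum_card {α : Type*} [DecidableEq α] (s : Finset α) (f : α → ℂ) :
    esum s f (#s) = ∏ n ∈ s, f n := by
  rw [esum, Finset.powersetCard_self, Finset.sum_singleton]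

lemma chooseC2 (m : ℕ) : ((m.choose 2 : ℕ) : ℂ) * 2 = m * (m - 1) := by
  induction m with
  | zero => simp
  | succ n ih =>
    rw [Nat.choose_succ_succ]
    push_cast
    push_cast at ih
    rw [Nat.choose_one_right] at *
    linear_combination ih

lemma chooseC3 (m : ℕ) : ((m.choose 3 : ℕ) : ℂ) * 6 = m * (m - 1) * (m - 2) := by
  induction m with
  | zero => simp
  | succ n ih =>
    rw [Nat.choose_succ_succ]
    push_cast
    push_cast at ih
    linear_combination ih + 3 * chooseC2 n

lemma chooseC4 (m : ℕ) : ((m.choose 4 : ℕ) : ℂ) * 24 = m * (m - 1) * (m - 2) * (m - 3) := by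
  induction m with
  | zero => simp
  | succ n ih =>
    rw [Nat.choose_succ_succ]
    push_cast
    push_cast at ih
    linear_combination ih + 4 * chooseC3 n

lemma chooseC5 (m : ℕ) :
    ((m.choose 5 : ℕ) : ℂ) * 120 = m * (m - 1) * (m - 2) * (m - 3) * (m - 4) := by
  induction m with
  | zero => simp
  | succ n ih =>
    rw [Nat.choose_succ_succ]
    push_cast
    push_cast at ih
    linear_combination ih + 5 * chooseC4 n

section Roots
variable {m : ℕ}

lemma hockey (m i : ℕ) : ∑ j ∈ Finset.range m, j.choose i = m.choose (i+1) := by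
  induction m with
  | zero => simp
  | succ n ih => rw [Finset.sum_range_succ, ih, Nat.choose_succ_succ']; ring

lemma prod_range_X_sub (hm : 2 ≤ m) {z : ℂ} (hz : IsPrimitiveRoot z m) :
    ∏ n ∈ Finset.range m, (X - C (z ^ n)) = X ^ m - 1 := by
  have : NeZero m := ⟨by omega⟩
  rw [X_pow_sub_one_eq_prod (by omega) hz]
  apply Finset.prod_bij (fun n _ => z ^ n)
  · intro n _
    rw [Polynomial.mem_nthRootsFinset (by omega)]
    rw [← pow_mul, mul_comm, pow_mul, hz.pow_eq_one, one_pow]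
  · intro n hn n' hn' h
    exact hz.pow_inj (Finset.mem_range.1 hn) (Finset.mem_range.1 hn') h
  · intro x hx
    rw [Polynomial.mem_nthRootsFinset (by omega)] at hx
    obtain ⟨i, hi, rfl⟩ := hz.eq_pow_of_pow_eq_one hx
    exact ⟨i, Finset.mem_range.2 hi, rfl⟩
  · intro n _; rfl

lemma range_split (hm : 2 ≤ m) : Finset.range m = insert 0 (Finset.Icc 1 (m-1)) := by
  ext n; simp [Finset.mem_range, Finset.mem_Icc]; omega

lemma keyK (hm : 2 ≤ m) {z : ℂ} (hz : IsPrimitiveRoot z m) :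
    ∏ n ∈ Finset.Icc 1 (m-1), (X - C (z ^ n)) = ∑ j ∈ Finset.range m, (X : ℂ[X]) ^ j := by
  have h1 : (X - C (1:ℂ)) ≠ 0 := X_sub_C_ne_zero 1
  apply mul_left_cancel₀ h1
  have h2 := prod_range_X_sub hm hz
  rw [range_split hm, Finset.prod_insert (by simp), pow_zero] at h2
  rw [h2, Polynomial.C_1, mul_comm, geom_sum_mul]

lemma keyComp (hm : 2 ≤ m) {z : ℂ} (hz : IsPrimitiveRoot z m) :
    ∏ n ∈ Finset.Icc 1 (m-1), (X + C (1 - z ^ n)) =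
      ∑ j ∈ Finset.range m, ((X : ℂ[X]) + 1) ^ j := by
  have := congrArg (fun p : ℂ[X] => p.comp (X + 1)) (keyK hm hz)
  simpa [Polynomial.prod_comp, Polynomial.eval₂_finset_sum, Polynomial.sub_comp,
    Polynomial.pow_comp, Polynomial.X_comp, Polynomial.C_comp, map_sub,
    sub_eq_add_neg, add_comm, add_left_comm, add_assoc, Polynomial.sum_comp] using this

lemma esumA (hm : 2 ≤ m) {z : ℂ} (hz : IsPrimitiveRoot z m) {j : ℕ} (hj : j ≤ m - 1) :
    esum (Finset.Icc 1 (m-1)) (fun n => 1 - z ^ n) j = (m.choose (m - j) : ℂ) := by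
  have hcard : #(Finset.Icc 1 (m-1)) = m - 1 := by rw [Nat.card_Icc]; omega
  have hco := congrArg (fun p : ℂ[X] => p.coeff (m - 1 - j)) (keyComp hm hz)
  rw [Finset.prod_X_add_C_coeff _ _ (by omega : m - 1 - j ≤ #(Finset.Icc 1 (m-1)))] at hco
  rw [Polynomial.finset_sum_coeff] at hco
  simp only [Polynomial.coeff_X_add_one_pow] at hco
  have : #(Finset.Icc 1 (m-1)) - (m - 1 - j) = j := by omega
  rw [this] at hco
  rw [esum, hco, ← Nat.cast_sum, hockey]
  congr 2
  omega

lemma esumB (hm : 2 ≤ m) {z : ℂ} (hz : IsPrimitiveRoot z m) (j : ℕ) :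
    esum (Finset.Icc 1 (m-1)) (fun n => (1 - z ^ n)⁻¹) j * m = (m.choose (j+1) : ℂ) := by
  by_cases hj : j ≤ m - 1
  case neg =>
    have hcard : #(Finset.Icc 1 (m-1)) = m - 1 := by rw [Nat.card_Icc]; omega
    rw [esum, Finset.powersetCard_eq_empty.2 (by omega), Finset.sum_empty,
      Nat.choose_eq_zero_of_lt (by omega), Nat.cast_zero, zero_mul]
  have hcard : #(Finset.Icc 1 (m-1)) = m - 1 := by rw [Nat.card_Icc]; omega
  have ha : ∀ n ∈ Finset.Icc 1 (m-1), (1:ℂ) - z ^ n ≠ 0 := by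
    intro n hn
    rw [Finset.mem_Icc] at hn
    rw [sub_ne_zero]
    exact fun h => hz.pow_ne_one_of_pos_of_lt (by omega) (by omega) h.symm
  have h1 := esum_reflect (Finset.Icc 1 (m-1)) (fun n => 1 - z ^ n) ha j (by omega)
  rw [hcard] at h1
  have hfull : esum (Finset.Icc 1 (m-1)) (fun n => 1 - z ^ n) (m-1) =
      ∏ n ∈ Finset.Icc 1 (m-1), (1 - z ^ n) := by
    have h := esum_card (Finset.Icc 1 (m-1)) (fun n => 1 - z ^ n)
    rw [hcard] at h
    exact h
  have hm1 : esum (Finset.Icc 1 (m-1)) (fun n => 1 - z ^ n) (m-1) = (m : ℂ) := by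
    rw [esumA hm hz (le_refl (m-1))]
    rw [show m - (m-1) = 1 by omega, Nat.choose_one_right]
  rw [hfull] at hm1
  rw [hm1] at h1
  rw [h1, esumA hm hz (by omega : m - 1 - j ≤ m - 1)]
  congr 2
  omega

end Roots

lemma term_eq {m : ℕ} (hm : 2 ≤ m) {z : ℂ} (hz : IsPrimitiveRoot z m)
    (hzexp : ∀ n : ℕ, z ^ n = Complex.exp ((2 * Real.pi * (n : ℝ) / m : ℝ) * Complex.I))
    {n : ℕ} (hn1 : 1 ≤ n) (hn2 : n ≤ m - 1) :
    ((1 / Real.sin (n * Real.pi / m) ^ 4 : ℝ) : ℂ)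
      = 16 * (((1 - z ^ n)⁻¹) ^ 4 - 2 * ((1 - z ^ n)⁻¹) ^ 3 + ((1 - z ^ n)⁻¹) ^ 2) := by
  have hmR : (0:ℝ) < (m : ℝ) := by positivity
  set θ : ℝ := n * Real.pi / m with hθ
  set u : ℂ := Complex.exp ((θ : ℝ) * Complex.I) with hu
  have hu0 : u ≠ 0 := Complex.exp_ne_zero _
  have hu2 : u ^ 2 = z ^ n := by
    rw [hu, hzexp n, ← Complex.exp_nat_mul]
    congr 1
    push_cast [hθ]
    field_simp
  have hsin : ((Real.sin θ : ℝ) : ℂ) = (u⁻¹ - u) * Complex.I / 2 := by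
    rw [Complex.ofReal_sin, Complex.sin,
      show -(↑θ:ℂ) * Complex.I = -(↑θ * Complex.I) by ring, Complex.exp_neg, ← hu]
  have key : (u⁻¹ - u) * u = 1 - u ^ 2 := by field_simp
  have hs2 : ((Real.sin θ : ℝ) : ℂ) ^ 2 * (4 * z ^ n) = -((1 - z ^ n) ^ 2) := by
    rw [hsin, ← hu2]
    linear_combination (u⁻¹ - u) ^ 2 * u ^ 2 * Complex.I_sq
      - ((1 - u ^ 2) + (u⁻¹ - u) * u) * key
  have hs4 : ((Real.sin θ : ℝ) : ℂ) ^ 4 * (16 * (z ^ n) ^ 2) = (1 - z ^ n) ^ 4 := by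
    linear_combination (((Real.sin θ : ℝ) : ℂ) ^ 2 * (4 * z ^ n) - (1 - z ^ n) ^ 2) * hs2
  have hs0 : Real.sin θ ≠ 0 := by
    apply ne_of_gt
    apply Real.sin_pos_of_pos_of_lt_pi
    · rw [hθ]; positivity
    · rw [hθ, div_lt_iff₀ hmR]
      have hnm : (n : ℝ) < m := by exact_mod_cast (by omega : n < m)
      nlinarith [Real.pi_pos]
  have hsC : ((Real.sin θ : ℝ) : ℂ) ≠ 0 := by exact_mod_cast Complex.ofReal_ne_zero.2 hs0
  have ha : (1 : ℂ) - z ^ n ≠ 0 := by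
    rw [sub_ne_zero]
    exact fun h => hz.pow_ne_one_of_pos_of_lt (by omega) (by omega) h.symm
  have hzn0 : z ^ n ≠ 0 := by
    rw [← hu2]; exact pow_ne_zero _ hu0
  rw [Complex.ofReal_div, Complex.ofReal_one, Complex.ofReal_pow]
  have hrhs : ((1 - z^n)⁻¹)^4 - 2*((1-z^n)⁻¹)^3 + ((1-z^n)⁻¹)^2 = (z^n)^2/(1-z^n)^4 := by
    field_simp
    ring
  rw [hrhs, show (16:ℂ) * ((z^n)^2/(1-z^n)^4) = (16*(z^n)^2)/(1-z^n)^4 by ring,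
    div_eq_div_iff (pow_ne_zero 4 hsC) (pow_ne_zero 4 ha), one_mul]
  linear_combination -hs4


open Real in
theorem verlinde_dim_genus3 (k : ℕ) :
    (((k : ℝ) + 2) / 2) ^ 2 *
      ∑ n ∈ Finset.Icc 1 (k + 1), 1 / (Real.sin (n * Real.pi / (k + 2))) ^ 4
    = (1 / 5) * (((k : ℝ) + 1) * ((k : ℝ) + 2) * ((k : ℝ) + 3) / 6) *
        (((k : ℝ) + 1) * ((k : ℝ) + 2) * ((k : ℝ) + 3) / 6 + 2 * ((k : ℝ) + 2)) := by
  have hm : 2 ≤ k + 2 := by omega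
  set m : ℕ := k + 2 with hmdef
  have hz := Complex.isPrimitiveRoot_exp m (by omega)
  set z : ℂ := Complex.exp (2 * Real.pi * Complex.I / m) with hzdef
  have hzexp : ∀ n : ℕ, z ^ n = Complex.exp ((2 * Real.pi * (n : ℝ) / m : ℝ) * Complex.I) := by
    intro n
    rw [hzdef, ← Complex.exp_nat_mul]
    congr 1
    have hmne : ((m:ℕ):ℂ) ≠ 0 := by
      simp only [Ne, Nat.cast_eq_zero]; omega
    push_cast
    field_simp
  have hm1 : m - 1 = k + 1 := rfl
  have hmR : ((m:ℕ):ℝ) = (k:ℝ) + 2 := by rw [hmdef]; push_cast; ring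
  set b : ℕ → ℂ := fun n => (1 - z ^ n)⁻¹ with hbdef
  set S : Finset ℕ := Finset.Icc 1 (k+1) with hSdef
  have hterm : ∀ n ∈ S, ((1 / Real.sin (n * Real.pi / ((k:ℝ) + 2)) ^ 4 : ℝ) : ℂ)
      = 16 * ((b n)^4 - 2*(b n)^3 + (b n)^2) := by
    intro n hn
    rw [Finset.mem_Icc] at hn
    have h := term_eq hm hz hzexp hn.1 (by omega : n ≤ m - 1)
    rw [hmR] at h
    exact h
  have hsum : ((∑ n ∈ S, 1 / Real.sin (n * Real.pi / ((k:ℝ) + 2)) ^ 4 : ℝ) : ℂ)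
      = 16 * (psum S b 4 - 2 * psum S b 3 + psum S b 2) := by
    rw [Complex.ofReal_sum]
    rw [Finset.sum_congr rfl hterm]
    have e4 : (16:ℂ) * psum S b 4 = ∑ n ∈ S, 16 * (b n)^4 := Finset.mul_sum _ _ _
    have e3 : (32:ℂ) * psum S b 3 = ∑ n ∈ S, 32 * (b n)^3 := Finset.mul_sum _ _ _
    have e2 : (16:ℂ) * psum S b 2 = ∑ n ∈ S, 16 * (b n)^2 := Finset.mul_sum _ _ _
    calc ∑ n ∈ S, (16:ℂ) * ((b n)^4 - 2*(b n)^3 + (b n)^2)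
        = ∑ n ∈ S, ((16 * (b n)^4 - 32 * (b n)^3) + 16 * (b n)^2) :=
          Finset.sum_congr rfl (fun n _ => by ring)
      _ = (∑ n ∈ S, (16 * (b n)^4 - 32 * (b n)^3)) + ∑ n ∈ S, 16 * (b n)^2 :=
          Finset.sum_add_distrib
      _ = ((∑ n ∈ S, 16 * (b n)^4) - ∑ n ∈ S, 32 * (b n)^3) + ∑ n ∈ S, 16 * (b n)^2 := by
          rw [Finset.sum_sub_distrib]
      _ = (16 * psum S b 4 - 32 * psum S b 3) + 16 * psum S b 2 := by rw [← e4, ← e3, ← e2]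
      _ = 16 * (psum S b 4 - 2 * psum S b 3 + psum S b 2) := by ring
  apply Complex.ofReal_injective
  rw [Complex.ofReal_mul, hsum]
  push_cast
  -- now gather the symmetric function data
  have hmC : ((m:ℕ):ℂ) = (k:ℂ) + 2 := by rw [hmdef]; push_cast; ring
  have hM0 : ((k:ℂ) + 2) ≠ 0 := by
    have h : ((k+2 : ℕ) : ℂ) ≠ 0 := Nat.cast_ne_zero.2 (by omega)
    push_cast at h
    exact h
  have hE1 := esumB hm hz 1
  have hE2 := esumB hm hz 2
  have hE3 := esumB hm hz 3
  have hE4 := esumB hm hz 4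
  rw [hm1, hmC, ← hbdef, ← hSdef] at hE1 hE2 hE3 hE4
  have hc2 := chooseC2 m
  have hc3 := chooseC3 m
  have hc4 := chooseC4 m
  have hc5 := chooseC5 m
  rw [hmC] at hc2 hc3 hc4 hc5
  set M : ℂ := (k:ℂ) + 2 with hMdef
  have he1 : esum S b 1 * 2 = M - 1 :=
    mul_right_cancel₀ hM0 (by linear_combination 2 * hE1 + hc2)
  have he2 : esum S b 2 * 6 = (M - 1) * (M - 2) :=
    mul_right_cancel₀ hM0 (by linear_combination 6 * hE2 + hc3)
  have he3 : esum S b 3 * 24 = (M - 1) * (M - 2) * (M - 3) :=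
    mul_right_cancel₀ hM0 (by linear_combination 24 * hE3 + hc4)
  have he4 : esum S b 4 * 120 = (M - 1) * (M - 2) * (M - 3) * (M - 4) :=
    mul_right_cancel₀ hM0 (by linear_combination 120 * hE4 + hc5)
  have hP1 : psum S b 1 = (M - 1)/2 := by
    linear_combination he1/2 - newton1 S b
  have hP2 : psum S b 2 = (M - 1)*(5 - M)/12 := by
    linear_combination newton2 S b + (psum S b 1 + (M-1)/2) * hP1 - he2/3
  have hP3 : psum S b 3 = -((M - 1)*(M - 3))/8 := by
    linear_combination (-1/2 : ℂ) * newton3 S b + he3/8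
      - (1/2 : ℂ) * ((psum S b 1)^2 + psum S b 1*((M-1)/2) + ((M-1)/2)^2) * hP1
      + (3/2 : ℂ) * (psum S b 1 * hP2 + ((M-1)*(5-M)/12) * hP1)
  have hP4 : psum S b 4 = (M^4 - 110*M^2 + 360*M - 251)/720 := by
    linear_combination (1/6 : ℂ) * newton4 S b - he4/30
      + (1/6 : ℂ) * ((psum S b 1)^3 + (psum S b 1)^2*((M-1)/2)
          + psum S b 1*((M-1)/2)^2 + ((M-1)/2)^3) * hP1
      - ((psum S b 1)^2 * hP2 + ((M-1)*(5-M)/12)*(psum S b 1 + (M-1)/2) * hP1)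
      + (1/2 : ℂ) * (psum S b 2 + (M-1)*(5-M)/12) * hP2
      + (4/3 : ℂ) * (psum S b 1 * hP3 + (-((M - 1)*(M - 3))/8) * hP1)
  linear_combination (4*M^2) * hP4 - (8*M^2) * hP3 + (4*M^2) * hP2
end

section
/- For every integer k ≥ 0, one has ((k+2)/2)³ · Σ_{n=1}^{k+1} 1 / sin⁶( n π/(k+2) ) = (1/35) · D · ( D · ( 2(k+1)(k+2)(k+3) + 27(k+2) ) / 6 + 6(k+2)² ), where D = (k+1)(k+2)(k+3)/6. -/
open Real Finset

private noncomputable def auxF (N j : ℕ) (z : ℂ) : ℂ :=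
  ∑ m ∈ Finset.range N, (m.choose j : ℂ) * z ^ m

private noncomputable def auxL (N : ℕ) (z : ℂ) : ℂ :=
  ((22) + (-20)*(N:ℂ)^2 + (-2)*(N:ℂ)^4) * auxF N 1 z +
  ((-76) + (80)*(N:ℂ)^2 + (-4)*(N:ℂ)^4) * auxF N 2 z +
  ((1080) + (-1440)*(N:ℂ) + (360)*(N:ℂ)^2) * auxF N 3 z +
  ((5520) + (-2880)*(N:ℂ) + (240)*(N:ℂ)^2) * auxF N 4 z +
  ((7200) + (-1440)*(N:ℂ)) * auxF N 5 z +
  ((2880)) * auxF N 6 z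

private lemma choose_cast_rec (n j : ℕ) :
    (n.choose (j + 1) : ℂ) * ((j : ℂ) + 1) = (n.choose j : ℂ) * ((n : ℂ) - j) := by
  rcases le_or_gt j n with h | h
  · have h2 := Nat.choose_succ_right_eq n j
    calc (n.choose (j + 1) : ℂ) * ((j : ℂ) + 1)
        = ((n.choose (j + 1) * (j + 1) : ℕ) : ℂ) := by push_cast; ring
      _ = ((n.choose j * (n - j) : ℕ) : ℂ) := by rw [h2]
      _ = (n.choose j : ℂ) * ((n : ℂ) - j) := by push_cast [h]; ring
  · rw [Nat.choose_eq_zero_of_lt h, Nat.choose_eq_zero_of_lt (h.trans j.lt_succ_self)]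
    simp

private lemma sum_range_choose_eq (N j : ℕ) :
    ∑ m ∈ Finset.range N, m.choose j = N.choose (j + 1) := by
  induction N with
  | zero => simp
  | succ n ih =>
      rw [Finset.sum_range_succ, ih, Nat.choose_succ_succ]
      exact Nat.add_comm _ _

theorem verlinde_dim_genus4 (k : ℕ) :
    (((k : ℝ) + 2) / 2) ^ 3 *
      ∑ n ∈ Finset.Icc 1 (k + 1), 1 / (Real.sin (n * Real.pi / (k + 2))) ^ 6
    = (1 / 35) * (((k : ℝ) + 1) * ((k : ℝ) + 2) * ((k : ℝ) + 3) / 6) *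
        ((((k : ℝ) + 1) * ((k : ℝ) + 2) * ((k : ℝ) + 3) / 6) *
            (2 * ((k : ℝ) + 1) * ((k : ℝ) + 2) * ((k : ℝ) + 3) + 27 * ((k : ℝ) + 2)) / 6
          + 6 * ((k : ℝ) + 2) ^ 2) := by
  obtain ⟨N, hN⟩ : ∃ N : ℕ, N = k + 2 := ⟨k + 2, rfl⟩
  have hN0 : N ≠ 0 := by omega
  have hNpos : 0 < N := by omega
  haveI : NeZero N := ⟨hN0⟩
  have hNC : ((N : ℕ) : ℂ) ≠ 0 := Nat.cast_ne_zero.mpr hN0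
  set ζ : ℂ := Complex.exp (2 * (Real.pi : ℂ) * Complex.I / N) with hζdef
  have hζ : IsPrimitiveRoot ζ N := Complex.isPrimitiveRoot_exp N hN0
  have hζne : ζ ≠ 0 := Complex.exp_ne_zero _
  set S' : Finset ℂ := (Polynomial.nthRootsFinset N (1 : ℂ)).erase 1 with hS'
  have hmemS : ∀ z : ℂ, z ∈ Polynomial.nthRootsFinset N (1 : ℂ) ↔ z ^ N = 1 :=
    fun z => Polynomial.mem_nthRootsFinset hNpos 1
  have hone : (1 : ℂ) ∈ Polynomial.nthRootsFinset N (1 : ℂ) :=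
    Polynomial.one_mem_nthRootsFinset hNpos
  -- sums of powers over all N-th roots
  have hsum0 : ∀ m : ℕ, 0 < m → m < N →
      ∑ z ∈ Polynomial.nthRootsFinset N (1 : ℂ), z ^ m = 0 := by
    intro m hm1 hm2
    have hperm : ∑ z ∈ Polynomial.nthRootsFinset N (1 : ℂ), (ζ * z) ^ m
        = ∑ z ∈ Polynomial.nthRootsFinset N (1 : ℂ), z ^ m := by
      apply Finset.sum_bij (i := fun z _ => ζ * z)
      · intro a ha
        rw [hmemS] at ha ⊢
        rw [mul_pow, ha, hζ.pow_eq_one, one_mul]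
      · intro a _ b _ hab
        exact mul_left_cancel₀ hζne hab
      · intro b hb
        refine ⟨ζ⁻¹ * b, ?_, ?_⟩
        · rw [hmemS] at hb ⊢
          rw [mul_pow, inv_pow, hζ.pow_eq_one, inv_one, one_mul, hb]
        · field_simp
      · intro a _; rfl
    have hfac : ∑ z ∈ Polynomial.nthRootsFinset N (1 : ℂ), (ζ * z) ^ m
        = ζ ^ m * ∑ z ∈ Polynomial.nthRootsFinset N (1 : ℂ), z ^ m := by
      rw [Finset.mul_sum]
      exact Finset.sum_congr rfl fun z _ => by rw [mul_pow]
    have hζm : ζ ^ m ≠ 1 := hζ.pow_ne_one_of_pos_of_lt hm1.ne' hm2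
    have h2 : (ζ ^ m - 1) * ∑ z ∈ Polynomial.nthRootsFinset N (1 : ℂ), z ^ m = 0 := by
      linear_combination hfac.symm.trans hperm
    rcases mul_eq_zero.mp h2 with h | h
    · exact absurd (by linear_combination h) hζm
    · exact h
  have hS'pow : ∀ m : ℕ, m < N →
      ∑ z ∈ S', z ^ m = (if m = 0 then (N : ℂ) else 0) - 1 := by
    intro m hm
    rw [hS', Finset.sum_erase_eq_sub hone, one_pow]
    congr 1
    by_cases h : m = 0
    · subst h
      simp only [pow_zero, Finset.sum_const, nsmul_eq_mul, mul_one, if_pos]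
      rw [hζ.card_nthRootsFinset]
    · rw [if_neg h, hsum0 m (Nat.pos_of_ne_zero h) hm]
  -- sums of auxF over nontrivial roots
  have hSF : ∀ j : ℕ, 1 ≤ j → ∑ z ∈ S', auxF N j z = -(N.choose (j + 1) : ℂ) := by
    intro j hj
    simp only [auxF]
    rw [Finset.sum_comm]
    have h1 : ∀ m ∈ Finset.range N,
        ∑ z ∈ S', (m.choose j : ℂ) * z ^ m = -(m.choose j : ℂ) := by
      intro m hm
      rw [← Finset.mul_sum, hS'pow m (Finset.mem_range.mp hm)]
      by_cases h : m = 0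
      · subst h
        rw [Nat.choose_eq_zero_of_lt hj]
        simp
      · rw [if_neg h]; ring
    rw [Finset.sum_congr rfl h1, Finset.sum_neg_distrib, ← Nat.cast_sum,
      sum_range_choose_eq]
  -- the key recurrence
  have hkey : ∀ z ∈ S', ∀ j : ℕ,
      z * auxF N j z - (1 - z) * auxF N (j + 1) z = (N.choose (j + 1) : ℂ) := by
    intro z hz j
    have hzN : z ^ N = 1 := (hmemS z).mp (Finset.mem_of_mem_erase hz)
    have hterm : ∀ m ∈ Finset.range N,
        z * ((m.choose j : ℂ) * z ^ m) - (1 - z) * ((m.choose (j + 1) : ℂ) * z ^ m)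
        = ((m + 1).choose (j + 1) : ℂ) * z ^ (m + 1) - (m.choose (j + 1) : ℂ) * z ^ m := by
      intro m _
      rw [Nat.choose_succ_succ]
      push_cast
      ring
    calc z * auxF N j z - (1 - z) * auxF N (j + 1) z
        = ∑ m ∈ Finset.range N,
            (((m + 1).choose (j + 1) : ℂ) * z ^ (m + 1) - (m.choose (j + 1) : ℂ) * z ^ m) := by
          simp only [auxF, Finset.mul_sum, ← Finset.sum_sub_distrib]
          exact Finset.sum_congr rfl hterm
      _ = (N.choose (j + 1) : ℂ) * z ^ N - (Nat.choose 0 (j + 1) : ℂ) * z ^ 0 :=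
          Finset.sum_range_sub (fun m => ((m.choose (j + 1) : ℂ)) * z ^ m) N
      _ = (N.choose (j + 1) : ℂ) := by rw [hzN]; simp
  -- binomial coefficient values
  have hB1 : (N.choose 1 : ℂ) = (N : ℂ) := by rw [Nat.choose_one_right]
  have hB2 : (N.choose 2 : ℂ) = (N : ℂ) * ((N : ℂ) - 1) / 2 := by
    have h := choose_cast_rec N 1
    rw [Nat.choose_one_right] at h
    norm_num at h
    linear_combination h / 2
  have hB3 : (N.choose 3 : ℂ) = (N : ℂ) * ((N : ℂ) - 1) * ((N : ℂ) - 2) / 6 := by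
    have h := choose_cast_rec N 2
    rw [hB2] at h
    norm_num at h
    linear_combination h / 3
  have hB4 : (N.choose 4 : ℂ)
      = (N : ℂ) * ((N : ℂ) - 1) * ((N : ℂ) - 2) * ((N : ℂ) - 3) / 24 := by
    have h := choose_cast_rec N 3
    rw [hB3] at h
    norm_num at h
    linear_combination h / 4
  have hB5 : (N.choose 5 : ℂ)
      = (N : ℂ) * ((N : ℂ) - 1) * ((N : ℂ) - 2) * ((N : ℂ) - 3) * ((N : ℂ) - 4) / 120 := by
    have h := choose_cast_rec N 4
    rw [hB4] at h
    norm_num at h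
    linear_combination h / 5
  have hB6 : (N.choose 6 : ℂ)
      = (N : ℂ) * ((N : ℂ) - 1) * ((N : ℂ) - 2) * ((N : ℂ) - 3) * ((N : ℂ) - 4)
        * ((N : ℂ) - 5) / 720 := by
    have h := choose_cast_rec N 5
    rw [hB5] at h
    norm_num at h
    linear_combination h / 6
  have hB7 : (N.choose 7 : ℂ)
      = (N : ℂ) * ((N : ℂ) - 1) * ((N : ℂ) - 2) * ((N : ℂ) - 3) * ((N : ℂ) - 4)
        * ((N : ℂ) - 5) * ((N : ℂ) - 6) / 5040 := by
    have h := choose_cast_rec N 6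
    rw [hB6] at h
    norm_num at h
    linear_combination h / 7
  -- the per-root closed form
  have hclaim : ∀ z ∈ S', (1 - z) ^ 6 * auxL N z = -2880 * (N : ℂ) * z ^ 3 := by
    intro z hz
    have hz1 : z ≠ 1 := Finset.ne_of_mem_erase hz
    have hzN : z ^ N = 1 := (hmemS z).mp (Finset.mem_of_mem_erase hz)
    have hF0 : auxF N 0 z = 0 := by
      simp only [auxF, Nat.choose_zero_right, Nat.cast_one, one_mul]
      rw [geom_sum_eq hz1, hzN, sub_self, zero_div]
    have k0 := hkey z hz 0
    have k1 := hkey z hz 1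
    have k2 := hkey z hz 2
    have k3 := hkey z hz 3
    have k4 := hkey z hz 4
    have k5 := hkey z hz 5
    rw [hB1] at k0
    rw [hB2] at k1
    rw [hB3] at k2
    rw [hB4] at k3
    rw [hB5] at k4
    rw [hB6] at k5
    have hG1 : (1-z)^1 * auxF N 1 z = ((-1)*(N:ℂ)) := by
      linear_combination (-1 : ℂ) * k0 + z * hF0
    have hG2 : (1-z)^2 * auxF N 2 z = (((3)/2)*(N:ℂ) + ((-1)/2)*(N:ℂ)^2)*(1-z) + ((-1)*(N:ℂ)) := by
      linear_combination (-(1-z)^1) * k1 + z * hG1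
    have hG3 : (1-z)^3 * auxF N 3 z = (((-11)/6)*(N:ℂ) + (1)*(N:ℂ)^2 + ((-1)/6)*(N:ℂ)^3)*(1-z)^2 + (((5)/2)*(N:ℂ) + ((-1)/2)*(N:ℂ)^2)*(1-z) + ((-1)*(N:ℂ)) := by
      linear_combination (-(1-z)^2) * k2 + z * hG2
    have hG4 : (1-z)^4 * auxF N 4 z = (((25)/12)*(N:ℂ) + ((-35)/24)*(N:ℂ)^2 + ((5)/12)*(N:ℂ)^3 + ((-1)/24)*(N:ℂ)^4)*(1-z)^3 + (((-13)/3)*(N:ℂ) + ((3)/2)*(N:ℂ)^2 + ((-1)/6)*(N:ℂ)^3)*(1-z)^2 + (((7)/2)*(N:ℂ) + ((-1)/2)*(N:ℂ)^2)*(1-z) + ((-1)*(N:ℂ)) := by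
      linear_combination (-(1-z)^3) * k3 + z * hG3
    have hG5 : (1-z)^5 * auxF N 5 z = (((-137)/60)*(N:ℂ) + ((15)/8)*(N:ℂ)^2 + ((-17)/24)*(N:ℂ)^3 + ((1)/8)*(N:ℂ)^4 + ((-1)/120)*(N:ℂ)^5)*(1-z)^4 + (((77)/12)*(N:ℂ) + ((-71)/24)*(N:ℂ)^2 + ((7)/12)*(N:ℂ)^3 + ((-1)/24)*(N:ℂ)^4)*(1-z)^3 + (((-47)/6)*(N:ℂ) + (2)*(N:ℂ)^2 + ((-1)/6)*(N:ℂ)^3)*(1-z)^2 + (((9)/2)*(N:ℂ) + ((-1)/2)*(N:ℂ)^2)*(1-z) + ((-1)*(N:ℂ)) := by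
      linear_combination (-(1-z)^4) * k4 + z * hG4
    have hG6 : (1-z)^6 * auxF N 6 z = (((49)/20)*(N:ℂ) + ((-203)/90)*(N:ℂ)^2 + ((49)/48)*(N:ℂ)^3 + ((-35)/144)*(N:ℂ)^4 + ((7)/240)*(N:ℂ)^5 + ((-1)/720)*(N:ℂ)^6)*(1-z)^5 + (((-87)/10)*(N:ℂ) + ((29)/6)*(N:ℂ)^2 + ((-31)/24)*(N:ℂ)^3 + ((1)/6)*(N:ℂ)^4 + ((-1)/120)*(N:ℂ)^5)*(1-z)^4 + (((57)/4)*(N:ℂ) + ((-119)/24)*(N:ℂ)^2 + ((3)/4)*(N:ℂ)^3 + ((-1)/24)*(N:ℂ)^4)*(1-z)^3 + (((-37)/3)*(N:ℂ) + ((5)/2)*(N:ℂ)^2 + ((-1)/6)*(N:ℂ)^3)*(1-z)^2 + (((11)/2)*(N:ℂ) + ((-1)/2)*(N:ℂ)^2)*(1-z) + ((-1)*(N:ℂ)) := by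
      linear_combination (-(1-z)^5) * k5 + z * hG5
    simp only [auxL]
    linear_combination ((22) + (-20)*(N:ℂ)^2 + (-2)*(N:ℂ)^4)*(1-z)^5 * hG1 + ((-76) + (80)*(N:ℂ)^2 + (-4)*(N:ℂ)^4)*(1-z)^4 * hG2 + ((1080) + (-1440)*(N:ℂ) + (360)*(N:ℂ)^2)*(1-z)^3 * hG3 + ((5520) + (-2880)*(N:ℂ) + (240)*(N:ℂ)^2)*(1-z)^2 * hG4 + ((7200) + (-1440)*(N:ℂ))*(1-z) * hG5 + ((2880)) * hG6
  -- membership of the powers of ζ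
  have hmem' : ∀ n : ℕ, 1 ≤ n → n ≤ k + 1 → ζ ^ n ∈ S' := by
    intro n h1 h2
    rw [hS', Finset.mem_erase]
    constructor
    · exact hζ.pow_ne_one_of_pos_of_lt (by omega) (by omega)
    · rw [hmemS, ← pow_mul, mul_comm, pow_mul, hζ.pow_eq_one, one_pow]
  -- the bijection between the index set and the nontrivial roots
  have hbij : ∀ g : ℂ → ℂ, ∑ n ∈ Finset.Icc 1 (k + 1), g (ζ ^ n) = ∑ z ∈ S', g z := by
    intro g
    apply Finset.sum_bij (i := fun n _ => ζ ^ n)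
    · intro a ha
      rw [Finset.mem_Icc] at ha
      exact hmem' a ha.1 ha.2
    · intro a ha b hb hab
      rw [Finset.mem_Icc] at ha hb
      exact hζ.pow_inj (by omega) (by omega) hab
    · intro b hb
      rw [hS', Finset.mem_erase, hmemS] at hb
      obtain ⟨i, hiN, hib⟩ := hζ.eq_pow_of_pow_eq_one hb.2
      have hi0 : i ≠ 0 := by
        rintro rfl
        rw [pow_zero] at hib
        exact hb.1 hib.symm
      exact ⟨i, Finset.mem_Icc.mpr ⟨by omega, by omega⟩, hib⟩
    · intro a _; rfl
  -- the per-index evaluation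
  have hval : ∀ n ∈ Finset.Icc 1 (k + 1),
      (1 : ℂ) / (Complex.sin ((n : ℂ) * (Real.pi : ℂ) / ((k : ℂ) + 2))) ^ 6
        = auxL N (ζ ^ n) / (45 * (N : ℂ)) := by
    intro n hn
    rw [Finset.mem_Icc] at hn
    set x : ℝ := (n : ℝ) * Real.pi / ((k : ℝ) + 2) with hx
    have hsx : ((n : ℂ) * (Real.pi : ℂ) / ((k : ℂ) + 2)) = ((x : ℝ) : ℂ) := by
      rw [hx]; push_cast; ring
    have hn1 : (1 : ℝ) ≤ (n : ℝ) := by exact_mod_cast hn.1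
    have hxpos : 0 < x := by
      rw [hx]
      have := Real.pi_pos
      positivity
    have hxlt : x < Real.pi := by
      rw [hx, div_lt_iff₀ (by positivity)]
      have hlt : (n : ℝ) < (k : ℝ) + 2 := by exact_mod_cast (by omega : n < k + 2)
      nlinarith [Real.pi_pos]
    have hs0 : Real.sin x ≠ 0 := ne_of_gt (Real.sin_pos_of_pos_of_lt_pi hxpos hxlt)
    set z : ℂ := ζ ^ n with hzdef
    have hzS : z ∈ S' := hmem' n hn.1 hn.2
    have hz0 : z ≠ 0 := pow_ne_zero _ hζne
    set E : ℂ := Complex.exp ((x : ℂ) * Complex.I) with hE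
    set E' : ℂ := Complex.exp (-(x : ℂ) * Complex.I) with hE'
    have hEE' : E * E' = 1 := by
      rw [hE, hE', ← Complex.exp_add]
      rw [show (x : ℂ) * Complex.I + -(x : ℂ) * Complex.I = 0 by ring, Complex.exp_zero]
    have hzE : E ^ 2 = z := by
      rw [hzdef, hζdef, hE, ← Complex.exp_nat_mul, ← Complex.exp_nat_mul]
      congr 1
      rw [hx, hN]
      push_cast
      have h2 : ((k : ℂ) + 2) ≠ 0 := by
        intro hcon
        have : ((k : ℂ) + 2).re = 0 := by rw [hcon]; simp
        simp [Complex.add_re] at this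
        nlinarith
      field_simp
    have hsin : Complex.sin ((x : ℝ) : ℂ) = (E' - E) * Complex.I / 2 := by
      rw [Complex.sin, hE, hE']
    have h1 : 4 * z * (Complex.sin ((x : ℝ) : ℂ)) ^ 2 = -(1 - z) ^ 2 := by
      rw [hsin, ← hzE]
      linear_combination (E ^ 2 * (E' - E) ^ 2) * Complex.I_sq
        - (E * E' + 1 - 2 * E ^ 2) * hEE'
    have h2 : 64 * z ^ 3 * (Complex.sin ((x : ℝ) : ℂ)) ^ 6 = -(1 - z) ^ 6 := by
      linear_combination ((4 * z * (Complex.sin ((x : ℝ) : ℂ)) ^ 2) ^ 2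
        - (4 * z * (Complex.sin ((x : ℝ) : ℂ)) ^ 2) * ((1 - z) ^ 2) + (1 - z) ^ 4) * h1
    have h3 := hclaim z hzS
    have h4 : (-64 * z ^ 3) * ((Complex.sin ((x : ℝ) : ℂ)) ^ 6 * auxL N z)
        = (-64 * z ^ 3) * (45 * (N : ℂ)) := by
      linear_combination (-(auxL N z)) * h2 + h3
    have h5 : (Complex.sin ((x : ℝ) : ℂ)) ^ 6 * auxL N z = 45 * (N : ℂ) :=
      mul_left_cancel₀ (mul_ne_zero (by norm_num) (pow_ne_zero _ hz0)) h4
    have hsne : Complex.sin ((x : ℝ) : ℂ) ≠ 0 := by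
      rw [← Complex.ofReal_sin]
      exact Complex.ofReal_ne_zero.mpr hs0
    rw [hsx]
    have h45 : (45 : ℂ) * (N : ℂ) ≠ 0 := mul_ne_zero (by norm_num) hNC
    rw [div_eq_div_iff (pow_ne_zero 6 hsne) h45]
    linear_combination -h5
  -- put it together
  have hLsum : ∑ z ∈ S', auxL N z =
      ((22) + (-20)*(N:ℂ)^2 + (-2)*(N:ℂ)^4) * (-(N.choose 2 : ℂ)) +
      ((-76) + (80)*(N:ℂ)^2 + (-4)*(N:ℂ)^4) * (-(N.choose 3 : ℂ)) +
      ((1080) + (-1440)*(N:ℂ) + (360)*(N:ℂ)^2) * (-(N.choose 4 : ℂ)) +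
      ((5520) + (-2880)*(N:ℂ) + (240)*(N:ℂ)^2) * (-(N.choose 5 : ℂ)) +
      ((7200) + (-1440)*(N:ℂ)) * (-(N.choose 6 : ℂ)) +
      ((2880)) * (-(N.choose 7 : ℂ)) := by
    simp only [auxL]
    rw [Finset.sum_add_distrib, Finset.sum_add_distrib, Finset.sum_add_distrib,
      Finset.sum_add_distrib, Finset.sum_add_distrib]
    rw [← Finset.mul_sum, ← Finset.mul_sum, ← Finset.mul_sum, ← Finset.mul_sum,
      ← Finset.mul_sum, ← Finset.mul_sum]
    rw [hSF 1 (by norm_num), hSF 2 (by norm_num), hSF 3 (by norm_num),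
      hSF 4 (by norm_num), hSF 5 (by norm_num), hSF 6 (by norm_num)]
  have hSum : ∑ n ∈ Finset.Icc 1 (k + 1),
      (1 : ℂ) / (Complex.sin ((n : ℂ) * (Real.pi : ℂ) / ((k : ℂ) + 2))) ^ 6
      = (∑ z ∈ S', auxL N z) / (45 * (N : ℂ)) := by
    rw [Finset.sum_congr rfl hval, ← Finset.sum_div, hbij (auxL N)]
  -- final computation
  rw [← Complex.ofReal_inj]
  push_cast
  rw [hSum, hLsum, hB2, hB3, hB4, hB5, hB6, hB7, hN]
  push_cast
  have h2 : ((k : ℂ) + 2) ≠ 0 := by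
    intro hcon
    have : ((k : ℂ) + 2).re = 0 := by rw [hcon]; simp
    simp [Complex.add_re] at this
    nlinarith
  field_simp
  ring
end

section
/- Let N be a positive even integer, and let m, l be integers with 1 ≤ m ≤ l ≤ N/2. Then T^t_{2m}(l) = (1/2) · Σ_{s=1}^{m-1} (−1)^{s+1} · ( l/(l+s) ) · C(l+s, l−s) · 2^{2s} · T^t_{2(m−s)} + (−1)^{m+1} · 2^{2m−1} · ( (l+m−1)! / ( (l−m)! · (2m)! ) ) · l, where the first sum is empty when m = 1. -/
open Real Finset


noncomputable def cc (l s : ℕ) : ℝ :=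
  if s = 0 then 0 else
    (-1)^(s+1) * 2^(2*s-1) * l * ((l+s-1).descFactorial (2*s-1)) / (2*s).factorial

lemma cc_zero (l : ℕ) : cc l 0 = 0 := by simp [cc]

lemma cc_eq_zero {l s : ℕ} (h : l < s) : cc l s = 0 := by
  rcases Nat.eq_zero_or_pos s with rfl | hs
  · simp [cc]
  · have : l + s - 1 < 2*s - 1 := by omega
    simp [cc, Nat.ne_of_gt hs, Nat.descFactorial_of_lt this]

lemma cc_one (l : ℕ) : cc l 1 = (l:ℝ)^2 := by
  simp [cc, Nat.descFactorial_one, Nat.factorial]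
  ring

lemma cc_self {l : ℕ} (hl : 1 ≤ l) : cc l l = (-1)^(l+1) * 2^(2*l-2) := by
  obtain ⟨k, rfl⟩ := Nat.exists_eq_add_of_le hl
  have h1 : 1 + k + (1 + k) - 1 = 2*(1+k) - 1 := by omega
  have h2 : 2*(1+k) - 1 = 2*k+1 := by omega
  have h3 : 2*(1+k) = 2*k+2 := by omega
  have h4 : 2*(1+k)-2 = 2*k := by omega
  rw [cc, if_neg (by omega), h1, h2, Nat.descFactorial_self, h3, show 2*k+2-2 = 2*k from rfl]
  have hf : ((2*k+2).factorial : ℝ) = (2*(k:ℝ)+2) * (2*k+1).factorial := by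
    exact_mod_cast Nat.factorial_succ (2*k+1)
  have h0 : ((2*k+1).factorial : ℝ) ≠ 0 := by exact_mod_cast (Nat.factorial_pos _).ne'
  rw [hf]
  field_simp
  push_cast
  ring

lemma cc_rec {l s : ℕ} (hl : 1 ≤ l) (hs : 1 ≤ s) :
    cc (l+1) s = 2 * cc l s - cc (l-1) s - 4 * cc l (s-1) + (if s = 1 then 2 else 0) := by
  obtain ⟨t, rfl⟩ : ∃ t, s = t + 1 := ⟨s-1, by omega⟩
  rcases t with _ | σ
  · -- s = 1
    simp only [Nat.zero_add, show (0:ℕ)+1-1 = 0 from rfl, cc_one, cc_zero, if_pos rfl]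
    rw [Nat.cast_sub hl]
    push_cast
    ring
  · -- s = σ + 2
    rw [if_neg (by omega), show σ+1+1-1 = σ+1 from rfl]
    rcases lt_or_ge l (σ+1) with hc | hc
    · -- l ≤ σ : everything zero
      rw [cc_eq_zero (by omega), cc_eq_zero (by omega), cc_eq_zero (by omega),
        cc_eq_zero (by omega)]
      ring
    rcases eq_or_lt_of_le hc with rfl | hc2
    · -- l = σ + 1
      have z1 : cc (σ+1) (σ+1+1) = 0 := cc_eq_zero (by omega)
      have z2 : cc (σ+1-1) (σ+1+1) = 0 := cc_eq_zero (by omega)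
      rw [z1, z2, cc_self (show 1 ≤ σ+1+1 by omega), cc_self (show 1 ≤ σ+1 by omega)]
      rw [show 2*(σ+1+1)-2 = 2*σ+2 by omega, show 2*(σ+1)-2 = 2*σ by omega]
      ring
    · -- l ≥ σ + 2
      obtain ⟨b, rfl⟩ : ∃ b, l = σ + 2 + b := ⟨l - (σ+2), by omega⟩
      set D := (2*σ+2+b).descFactorial (2*σ+1) with hD
      have hD1 : (2*σ+4+b).descFactorial (2*σ+3) = (2*σ+4+b)*((2*σ+3+b)*D) := by
        rw [show 2*σ+4+b = (2*σ+3+b)+1 by omega, show 2*σ+3 = (2*σ+2)+1 by omega,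
          Nat.succ_descFactorial_succ, show 2*σ+3+b = (2*σ+2+b)+1 by omega,
          show 2*σ+2 = (2*σ+1)+1 by omega, Nat.succ_descFactorial_succ]
      have hD2 : (2*σ+3+b).descFactorial (2*σ+3) = (2*σ+3+b)*((b+1)*D) := by
        rw [show 2*σ+3+b = (2*σ+2+b)+1 by omega, show 2*σ+3 = (2*σ+2)+1 by omega,
          Nat.succ_descFactorial_succ, show 2*σ+2 = (2*σ+1)+1 by omega,
          Nat.descFactorial_succ, show 2*σ+2+b - (2*σ+1) = b+1 by omega]
      have hD3 : (2*σ+2+b).descFactorial (2*σ+3) = b*((b+1)*D) := by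
        rw [show 2*σ+3 = (2*σ+2)+1 by omega, Nat.descFactorial_succ,
          show 2*σ+2 = (2*σ+1)+1 by omega, Nat.descFactorial_succ,
          show 2*σ+2+b - (2*σ+2) = b by omega, show 2*σ+2+b - (2*σ+1) = b+1 by omega]
      have e1 : σ+2+b+1+(σ+1+1)-1 = 2*σ+4+b := by omega
      have e2 : σ+2+b+(σ+1+1)-1 = 2*σ+3+b := by omega
      have e3 : σ+2+b-1+(σ+1+1)-1 = 2*σ+2+b := by omega
      have e4 : σ+2+b+(σ+1)-1 = 2*σ+2+b := by omega
      have e5 : 2*(σ+1+1)-1 = 2*σ+3 := by omega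
      have e6 : 2*(σ+1)-1 = 2*σ+1 := by omega
      have e7 : 2*(σ+1+1) = 2*σ+4 := by omega
      have e8 : 2*(σ+1) = 2*σ+2 := by omega
      rw [cc, cc, cc, cc, if_neg (by omega), if_neg (by omega), if_neg (by omega),
        if_neg (by omega), e1, e2, e3, e4, e5, e6, e7, e8, hD1, hD2, hD3, ← hD,
        show σ+2+b-1 = σ+1+b by omega]
      have hf : ((2*σ+4).factorial : ℝ)
          = (2*(σ:ℝ)+4) * ((2*(σ:ℝ)+3) * (2*σ+2).factorial) := by
        rw [show 2*σ+4 = (2*σ+3)+1 by omega, Nat.factorial_succ,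
          show 2*σ+3 = (2*σ+2)+1 by omega, Nat.factorial_succ]
        push_cast
        ring
      have h0 : ((2*σ+2).factorial : ℝ) ≠ 0 := by
        exact_mod_cast (Nat.factorial_pos _).ne'
      rw [hf]
      field_simp
      push_cast
      ring

lemma sin_sq_expand (l : ℕ) (θ : ℝ) :
    Real.sin (l * θ) ^ 2 = ∑ s ∈ range (l+1), cc l s * Real.sin θ ^ (2*s) := by
  induction l using Nat.twoStepInduction with
  | zero => simp [cc_zero]
  | one =>
    rw [Finset.sum_range_succ, Finset.sum_range_one, cc_zero, cc_one]
    push_cast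
    norm_num
  | more n ih1 ih2 =>
    have key : Real.sin (((n:ℝ)+2) * θ) ^ 2
        = 2 * Real.sin (((n:ℝ)+1) * θ) ^ 2 + 2 * Real.sin θ ^ 2 - Real.sin ((n:ℝ) * θ) ^ 2
          - 4 * Real.sin θ ^ 2 * Real.sin (((n:ℝ)+1) * θ) ^ 2 := by
      have h1 : ((n:ℝ)+2) * θ = ((n:ℝ)+1) * θ + θ := by ring
      have h2 : (n:ℝ) * θ = ((n:ℝ)+1) * θ - θ := by ring
      rw [h1, h2, Real.sin_add, Real.sin_sub]
      nlinarith [Real.sin_sq_add_cos_sq (((n:ℝ)+1) * θ), Real.sin_sq_add_cos_sq θ]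
    have ih2' : Real.sin (((n:ℝ)+1) * θ) ^ 2
        = ∑ s ∈ range (n+2), cc (n+1) s * Real.sin θ ^ (2*s) := by
      rw [show ((n:ℝ)+1) = ((n+1:ℕ):ℝ) by push_cast; ring]
      exact ih2
    rw [show ((n+2:ℕ):ℝ) = (n:ℝ)+2 by push_cast; ring, key, ih1, ih2']
    -- extend all sums to range (n+3)
    have ext1 : ∑ s ∈ range (n+2), cc (n+1) s * Real.sin θ ^ (2*s)
        = ∑ s ∈ range (n+3), cc (n+1) s * Real.sin θ ^ (2*s) := by
      rw [Finset.sum_range_succ (n := n+2), cc_eq_zero (by omega), zero_mul, add_zero]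
    have ext2 : ∑ s ∈ range (n+1), cc n s * Real.sin θ ^ (2*s)
        = ∑ s ∈ range (n+3), cc n s * Real.sin θ ^ (2*s) := by
      rw [Finset.sum_range_succ (n := n+2), Finset.sum_range_succ (n := n+1),
        cc_eq_zero (show n < n+2 by omega), cc_eq_zero (show n < n+1 by omega)]
      ring
    have ext3 : 4 * Real.sin θ ^ 2 * ∑ s ∈ range (n+3), cc (n+1) s * Real.sin θ ^ (2*s)
        = ∑ s ∈ range (n+3), 4 * cc (n+1) (s-1) * Real.sin θ ^ (2*s) := by
      rw [← ext1, Finset.sum_range_succ' (fun s => 4 * cc (n+1) (s-1) * Real.sin θ ^ (2*s)) (n+2)]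
      simp only [Nat.add_sub_cancel, cc_zero, Finset.mul_sum]
      rw [show (0:ℕ)+1-1 = 0 from rfl]
      simp only [cc_zero]
      rw [mul_zero, zero_mul, add_zero]
      refine Finset.sum_congr rfl fun s _ => ?_
      rw [show 2*(s+1) = 2*s+2 by ring, pow_add]
      ring
    have ext4 : 2 * Real.sin θ ^ 2
        = ∑ s ∈ range (n+3), (if s = 1 then (2:ℝ) else 0) * Real.sin θ ^ (2*s) := by
      rw [Finset.sum_eq_single 1]
      · norm_num
      · intro b _ hb; simp [hb]
      · intro h; exact absurd (Finset.mem_range.2 (by omega)) h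
    rw [ext1, ext2, ext4, ext3, Finset.mul_sum, ← Finset.sum_add_distrib,
      ← Finset.sum_sub_distrib, ← Finset.sum_sub_distrib]
    refine Finset.sum_congr (by norm_num) fun s hs => ?_
    rcases Nat.eq_zero_or_pos s with rfl | hs1
    · simp [cc_zero]
    · have hr := cc_rec (l := n+1) (s := s) (by omega) hs1
      rw [Nat.add_sub_cancel] at hr
      rw [show n+1+1 = n+2 by omega] at hr
      rw [hr]
      ring


lemma sum_Icc_eq_sub {M : Type*} [AddCommGroup M] (N : ℕ) (hN : 0 < N) (f : ℕ → M) :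
    ∑ n ∈ Icc 1 (N-1), f n = (∑ n ∈ range N, f n) - f 0 := by
  rw [Finset.range_eq_Ico, Finset.sum_eq_sum_Ico_succ_bot hN,
    show Finset.Ico (0+1) N = Finset.Icc 1 (N-1) by
      rw [show (0:ℕ)+1 = 1 from rfl, ← Finset.Ico_add_one_right_eq_Icc]; congr 1; omega]
  abel

lemma moment_vanish (N j : ℕ) (hN : 0 < N) (hNe : Even N) (hj : 1 ≤ j) (hjN : 2*j < N) :
    ∑ n ∈ Icc 1 (N-1), (-1:ℝ)^(n+1) * (Real.sin (n*Real.pi/N))^(2*j) = 0 := by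
  have hNC : (N:ℂ) ≠ 0 := Nat.cast_ne_zero.mpr hN.ne'
  set w : ℂ := Complex.exp ((Real.pi : ℂ) * Complex.I / N) with hw
  have hw0 : w ≠ 0 := Complex.exp_ne_zero _
  have hwN : w ^ N = -1 := by
    rw [hw, ← Complex.exp_nat_mul,
      show (N:ℂ) * ((Real.pi:ℂ) * Complex.I / N) = Real.pi * Complex.I by field_simp,
      Complex.exp_pi_mul_I]
  -- the complex version of the sum
  suffices hC : ∑ n ∈ Icc 1 (N-1), (-1:ℂ)^(n+1) *
      (Complex.sin ((n:ℂ) * (Real.pi:ℂ) / N))^(2*j) = 0 by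
    have : ((∑ n ∈ Icc 1 (N-1), (-1:ℝ)^(n+1) * (Real.sin (n*Real.pi/N))^(2*j) : ℝ) : ℂ)
        = ∑ n ∈ Icc 1 (N-1), (-1:ℂ)^(n+1) * (Complex.sin ((n:ℂ) * (Real.pi:ℂ) / N))^(2*j) := by
      push_cast [Complex.ofReal_sin]
      exact Finset.sum_congr rfl fun n _ => by ring
    rw [hC] at this
    exact_mod_cast this
  -- main complex computation
  have hsin : ∀ n : ℕ, Complex.sin ((n:ℂ) * (Real.pi:ℂ) / N) = ((w^n)⁻¹ - w^n) * Complex.I / 2 := by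
    intro n
    have h1 : Complex.exp (((n:ℂ) * (Real.pi:ℂ) / N) * Complex.I) = w^n := by
      rw [hw, ← Complex.exp_nat_mul]
      congr 1
      ring
    have h2 : Complex.exp (-((n:ℂ) * (Real.pi:ℂ) / N) * Complex.I) = (w^n)⁻¹ := by
      rw [show -((n:ℂ) * (Real.pi:ℂ) / N) * Complex.I
          = -((((n:ℂ) * (Real.pi:ℂ) / N)) * Complex.I) by ring,
        Complex.exp_neg, h1]
    rw [Complex.sin, h1, h2]
  have hpow : ∀ n : ℕ, (Complex.sin ((n:ℂ) * (Real.pi:ℂ) / N))^(2*j)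
      = ((w^n)⁻¹ - w^n)^(2*j) * ((-1)^j/4^j) := by
    intro n
    rw [hsin n, div_pow, mul_pow,
      show Complex.I^(2*j) = (-1)^j by rw [pow_mul, Complex.I_sq],
      show ((2:ℂ))^(2*j) = 4^j by rw [pow_mul]; norm_num]
    ring
  have inner : ∀ r ∈ range (2*j+1),
      ∑ n ∈ Icc 1 (N-1), (-1:ℂ)^(n+1) * ((w^n)⁻¹)^r * (w^n)^(2*j-r) = 1 := by
    intro r hr
    rw [Finset.mem_range] at hr
    set e : ℤ := (N:ℤ) + 2*j - 2*r with he
    set z : ℂ := w ^ e with hzdef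
    have hz : z = -((w⁻¹)^r * w^(2*j-r)) := by
      rw [hzdef, show e = (N:ℤ) + ((2*j-r:ℕ):ℤ) - (r:ℤ) by
        rw [he]; push_cast [Nat.cast_sub (by omega : r ≤ 2*j)]; ring]
      rw [zpow_sub₀ hw0, zpow_add₀ hw0, zpow_natCast, zpow_natCast, zpow_natCast, hwN,
        inv_pow]
      field_simp
    have hterm : ∀ n : ℕ, (-1:ℂ)^(n+1) * ((w^n)⁻¹)^r * (w^n)^(2*j-r) = -(z^n) := by
      intro n
      rw [← inv_pow, pow_right_comm, pow_right_comm w n, hz]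
      ring
    have hzN : z ^ N = 1 := by
      rw [hzdef, ← zpow_natCast (w^e) N, ← zpow_mul, mul_comm, zpow_mul, zpow_natCast, hwN]
      have heven : Even e := by
        obtain ⟨t, ht⟩ := hNe
        exact ⟨t + j - r, by omega⟩
      exact heven.neg_one_zpow
    have hz1 : z ≠ 1 := by
      intro h
      have hze : z = Complex.exp ((e:ℂ) * ((Real.pi:ℂ) * Complex.I / N)) := by
        rw [hzdef, hw, Complex.exp_int_mul]
      rw [hze, Complex.exp_eq_one_iff] at h
      obtain ⟨k, hk⟩ := h
      have hπ : (Real.pi : ℂ) ≠ 0 := Complex.ofReal_ne_zero.mpr Real.pi_ne_zero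
      have h2 : (e:ℂ) * ((Real.pi:ℂ) * Complex.I) = (2*k*N) * ((Real.pi:ℂ) * Complex.I) := by
        field_simp at hk
        linear_combination ((Real.pi:ℂ) * Complex.I) * hk
      have h3 : (e:ℂ) = 2*k*N := by
        exact mul_right_cancel₀ (mul_ne_zero hπ Complex.I_ne_zero) h2
      have h4 : e = 2*k*N := by exact_mod_cast h3
      have he1 : 0 < e := by omega
      have he2 : e < 2*N := by omega
      have hNpos : (0:ℤ) < (N:ℤ) := by exact_mod_cast hN
      rcases le_or_gt k 0 with hk | hk
      · have hle : 2*k*(N:ℤ) ≤ 0 := by nlinarith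
        linarith
      · have hge : 2*(N:ℤ) ≤ 2*k*N := by nlinarith
        linarith
    have hgeom : ∑ n ∈ range N, z^n = 0 := by
      rw [geom_sum_eq hz1, hzN]
      simp
    have hIcc : ∑ n ∈ Icc 1 (N-1), z^n = -1 := by
      rw [sum_Icc_eq_sub N hN, hgeom, pow_zero]
      ring
    calc ∑ n ∈ Icc 1 (N-1), (-1:ℂ)^(n+1) * ((w^n)⁻¹)^r * (w^n)^(2*j-r)
        = ∑ n ∈ Icc 1 (N-1), -(z^n) := Finset.sum_congr rfl fun n _ => hterm n
      _ = -∑ n ∈ Icc 1 (N-1), z^n := by rw [Finset.sum_neg_distrib]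
      _ = 1 := by rw [hIcc]; ring
  have expand : ∀ n : ℕ, (-1:ℂ)^(n+1) * (Complex.sin ((n:ℂ) * (Real.pi:ℂ) / N))^(2*j)
      = ∑ r ∈ range (2*j+1), ((-1:ℂ)^(r+2*j) * (((2*j).choose r : ℕ) : ℂ) * ((-1)^j/4^j)) *
          ((-1:ℂ)^(n+1) * ((w^n)⁻¹)^r * (w^n)^(2*j-r)) := by
    intro n
    rw [hpow n, sub_pow, Finset.sum_mul, Finset.mul_sum]
    exact Finset.sum_congr rfl fun r _ => by ring
  rw [Finset.sum_congr rfl fun n _ => expand n, Finset.sum_comm]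
  have step : ∀ r ∈ range (2*j+1),
      ∑ n ∈ Icc 1 (N-1), ((-1:ℂ)^(r+2*j) * (((2*j).choose r : ℕ) : ℂ) * ((-1)^j/4^j)) *
        ((-1:ℂ)^(n+1) * ((w^n)⁻¹)^r * (w^n)^(2*j-r))
      = ((-1)^j/4^j) * ((-1:ℂ)^r * (((2*j).choose r : ℕ) : ℂ)) := by
    intro r hr
    rw [← Finset.mul_sum, inner r hr, mul_one, pow_add,
      show ((-1:ℂ))^(2*j) = 1 by rw [pow_mul]; norm_num]
    ring
  rw [Finset.sum_congr rfl step, ← Finset.mul_sum]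
  have hac : ∑ r ∈ range (2*j+1), (-1:ℂ)^r * (((2*j).choose r : ℕ):ℂ) = 0 := by
    have h := Int.alternating_sum_range_choose_of_ne (show 2*j ≠ 0 by omega)
    exact_mod_cast h
  rw [hac, mul_zero]

lemma sum_sign (N : ℕ) (hN : 0 < N) (hNe : Even N) :
    ∑ n ∈ Icc 1 (N-1), (-1:ℝ)^(n+1) = 1 := by
  rw [sum_Icc_eq_sub N hN]
  have h : ∑ n ∈ range N, (-1:ℝ)^(n+1) = -∑ n ∈ range N, (-1:ℝ)^n := by
    rw [← Finset.sum_neg_distrib]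
    exact Finset.sum_congr rfl fun n _ => by ring
  rw [h, neg_one_geom_sum, if_pos hNe]
  norm_num

lemma cc_eq_fact {l s : ℕ} (hs : 1 ≤ s) (hsl : s ≤ l) :
    cc l s = (-1:ℝ)^(s+1) * 2^(2*s-1) *
      (((l+s-1).factorial : ℝ) / (((l-s).factorial : ℝ) * ((2*s).factorial : ℝ))) * l := by
  rw [cc, if_neg (by omega)]
  have h := Nat.factorial_mul_descFactorial (show 2*s-1 ≤ l+s-1 by omega)
  rw [show l+s-1 - (2*s-1) = l-s by omega] at h
  have hD : ((l+s-1).descFactorial (2*s-1) : ℝ)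
      = ((l+s-1).factorial : ℝ) / ((l-s).factorial : ℝ) := by
    rw [eq_div_iff (show ((l-s).factorial:ℝ) ≠ 0 from by
      exact_mod_cast (Nat.factorial_pos _).ne')]
    have h'' : (l+s-1).descFactorial (2*s-1) * (l-s).factorial = (l+s-1).factorial := by
      rw [mul_comm]; exact h
    exact_mod_cast h''
  rw [hD]
  have h1 : ((l-s).factorial : ℝ) ≠ 0 := by exact_mod_cast (Nat.factorial_pos _).ne'
  have h2 : ((2*s).factorial : ℝ) ≠ 0 := by exact_mod_cast (Nat.factorial_pos _).ne'
  field_simp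

lemma cc_eq_choose {l s : ℕ} (hs : 1 ≤ s) (hsl : s ≤ l) :
    cc l s = (-1:ℝ)^(s+1) * ((l:ℝ)/((l:ℝ)+s)) * (((l+s).choose (l-s)) : ℝ) * 2^(2*s) / 2 := by
  rw [cc_eq_fact hs hsl]
  have hsym : (l+s).choose (l-s) = (l+s).choose (2*s) := by
    rw [show l - s = (l+s) - 2*s by omega, Nat.choose_symm (by omega)]
  have hch := Nat.choose_mul_factorial_mul_factorial (show 2*s ≤ l+s by omega)
  rw [show l+s - 2*s = l-s by omega] at hch
  have h1 : ((l-s).factorial : ℝ) ≠ 0 := by exact_mod_cast (Nat.factorial_pos _).ne'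
  have h2 : ((2*s).factorial : ℝ) ≠ 0 := by exact_mod_cast (Nat.factorial_pos _).ne'
  have h3 : ((l:ℝ)+(s:ℝ)) ≠ 0 := by
    have h4 : (0:ℝ) < s := by exact_mod_cast hs
    have h5 : (0:ℝ) ≤ l := Nat.cast_nonneg l
    exact ne_of_gt (by linarith)
  have hfs : ((l+s).factorial : ℝ) = ((l:ℝ)+s) * ((l+s-1).factorial : ℝ) := by
    rw [show l+s = (l+s-1)+1 by omega, Nat.factorial_succ]
    push_cast [show l+s-1+1 = l+s by omega]
    ring
  have hch' : (((l+s).choose (2*s)) : ℝ) * ((2*s).factorial : ℝ) * ((l-s).factorial : ℝ)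
      = ((l:ℝ)+s) * ((l+s-1).factorial : ℝ) := by
    rw [← hfs]; exact_mod_cast congrArg (Nat.cast (R := ℝ)) hch
  have hcval : (((l+s).choose (2*s)) : ℝ)
      = ((l:ℝ)+s) * ((l+s-1).factorial : ℝ)
        / (((2*s).factorial : ℝ) * ((l-s).factorial : ℝ)) := by
    rw [eq_div_iff (mul_ne_zero h2 h1)]
    linear_combination hch'
  have hpow2 : (2:ℝ)^(2*s) = 2 * 2^(2*s-1) := by
    conv_lhs => rw [show 2*s = (2*s-1)+1 by omega]
    rw [pow_succ]; ring
  rw [hsym, hcval, hpow2]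
  field_simp


theorem twisted_T2m_l_recursion (N m l : ℕ) (hN : 0 < N) (hNeven : Even N)
    (hm : 1 ≤ m) (hml : m ≤ l) (hl : l ≤ N / 2) :
    (∑ n ∈ Finset.Icc 1 (N - 1), (-1 : ℝ) ^ (n + 1) *
        (Real.sin (n * l * Real.pi / N)) ^ 2 / (Real.sin (n * Real.pi / N)) ^ (2 * m))
    = (1 / 2) * ∑ s ∈ Finset.Icc 1 (m - 1),
        (-1 : ℝ) ^ (s + 1) * ((l : ℝ) / ((l : ℝ) + s)) * (Nat.choose (l + s) (l - s)) *
          2 ^ (2 * s) *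
          (∑ n ∈ Finset.Icc 1 (N - 1), (-1 : ℝ) ^ (n + 1) /
            (Real.sin (n * Real.pi / N)) ^ (2 * (m - s)))
      + (-1 : ℝ) ^ (m + 1) * 2 ^ (2 * m - 1) *
          ((Nat.factorial (l + m - 1) : ℝ) /
            ((Nat.factorial (l - m) : ℝ) * (Nat.factorial (2 * m) : ℝ))) * l := by
  have hl1 : 1 ≤ l := hm.trans hml
  have h2l : 2*l ≤ N := by obtain ⟨t,ht⟩ := hNeven; omega
  have hsinne : ∀ n ∈ Finset.Icc 1 (N-1), Real.sin ((n:ℝ) * Real.pi / N) ≠ 0 := by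
    intro n hn
    rw [Finset.mem_Icc] at hn
    have hn1 : (1:ℝ) ≤ (n:ℝ) := by exact_mod_cast hn.1
    have hnN : (n:ℝ) < (N:ℝ) := by exact_mod_cast (show n < N by omega)
    have hNpos : (0:ℝ) < N := by exact_mod_cast hN
    have h1 : 0 < (n:ℝ) * Real.pi / N :=
      div_pos (mul_pos (by linarith) Real.pi_pos) hNpos
    have h2 : (n:ℝ) * Real.pi / N < Real.pi := by
      rw [div_lt_iff₀ hNpos]
      nlinarith [Real.pi_pos]
    exact ne_of_gt (Real.sin_pos_of_pos_of_lt_pi h1 h2)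
  set T : ℕ → ℝ := fun s => ∑ n ∈ Finset.Icc 1 (N-1),
    (-1:ℝ)^(n+1) * (Real.sin ((n:ℝ)*Real.pi/N))^(2*s)
      / (Real.sin ((n:ℝ)*Real.pi/N))^(2*m) with hT
  have hLHS : (∑ n ∈ Finset.Icc 1 (N - 1), (-1 : ℝ) ^ (n + 1) *
        (Real.sin (n * l * Real.pi / N)) ^ 2 / (Real.sin (n * Real.pi / N)) ^ (2 * m))
      = ∑ s ∈ range (l+1), cc l s * T s := by
    calc ∑ n ∈ Finset.Icc 1 (N - 1), (-1 : ℝ) ^ (n + 1) *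
          (Real.sin (n * l * Real.pi / N)) ^ 2 / (Real.sin (n * Real.pi / N)) ^ (2 * m)
        = ∑ n ∈ Finset.Icc 1 (N-1), ∑ s ∈ range (l+1), cc l s *
            ((-1:ℝ)^(n+1) * (Real.sin ((n:ℝ)*Real.pi/N))^(2*s)
              / (Real.sin ((n:ℝ)*Real.pi/N))^(2*m)) := by
          refine Finset.sum_congr rfl fun n hn => ?_
          rw [show (n:ℝ) * (l:ℝ) * Real.pi / (N:ℝ) = (l:ℝ) * ((n:ℝ)*Real.pi/(N:ℝ)) by ring]
          rw [sin_sq_expand l ((n:ℝ)*Real.pi/(N:ℝ)), Finset.mul_sum, Finset.sum_div]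
          exact Finset.sum_congr rfl fun s _ => by ring
      _ = ∑ s ∈ range (l+1), ∑ n ∈ Finset.Icc 1 (N-1), cc l s *
            ((-1:ℝ)^(n+1) * (Real.sin ((n:ℝ)*Real.pi/N))^(2*s)
              / (Real.sin ((n:ℝ)*Real.pi/N))^(2*m)) := Finset.sum_comm
      _ = ∑ s ∈ range (l+1), cc l s * T s :=
          Finset.sum_congr rfl fun s _ => (Finset.mul_sum _ _ _).symm
  have hsplit : ∑ s ∈ range (l+1), cc l s * T s
      = (∑ s ∈ Finset.Icc 1 (m-1), cc l s * T s) + (cc l m * T m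
        + ∑ s ∈ Finset.Icc (m+1) l, cc l s * T s) := by
    rw [Finset.range_eq_Ico,
      ← Finset.sum_Ico_consecutive _ (show 0 ≤ m by omega) (show m ≤ l+1 by omega)]
    have hIc1 : Finset.Ico (0+1) m = Finset.Icc 1 (m-1) := by
      ext x
      simp only [Finset.mem_Ico, Finset.mem_Icc]
      omega
    have hIc2 : Finset.Ico (m+1) (l+1) = Finset.Icc (m+1) l := by
      ext x
      simp only [Finset.mem_Ico, Finset.mem_Icc]
      omega
    rw [Finset.sum_eq_sum_Ico_succ_bot (show 0 < m by omega), cc_zero, zero_mul, zero_add,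
      Finset.sum_eq_sum_Ico_succ_bot (show m < l+1 by omega), hIc1, hIc2]
  have hTm : T m = 1 := by
    rw [hT]
    calc ∑ n ∈ Finset.Icc 1 (N-1), (-1:ℝ)^(n+1) * (Real.sin ((n:ℝ)*Real.pi/N))^(2*m)
          / (Real.sin ((n:ℝ)*Real.pi/N))^(2*m)
        = ∑ n ∈ Finset.Icc 1 (N-1), (-1:ℝ)^(n+1) := by
          refine Finset.sum_congr rfl fun n hn => ?_
          rw [mul_div_assoc, div_self (pow_ne_zero _ (hsinne n hn)), mul_one]
      _ = 1 := sum_sign N hN hNeven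
  have hTzero : ∀ s ∈ Finset.Icc (m+1) l, cc l s * T s = 0 := by
    intro s hs
    rw [Finset.mem_Icc] at hs
    have hTs : T s = ∑ n ∈ Finset.Icc 1 (N-1),
        (-1:ℝ)^(n+1) * (Real.sin ((n:ℝ)*Real.pi/N))^(2*(s-m)) := by
      rw [hT]
      refine Finset.sum_congr rfl fun n hn => ?_
      rw [show 2*s = 2*(s-m) + 2*m by omega,
        pow_add (Real.sin ((n:ℝ)*Real.pi/N)) (2*(s-m)) (2*m), ← mul_assoc, mul_div_assoc,
        div_self (pow_ne_zero _ (hsinne n hn)), mul_one]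
    rw [hTs, moment_vanish N (s-m) hN hNeven (by omega) (by omega), mul_zero]
  have hTval : ∀ s ∈ Finset.Icc 1 (m-1), T s = ∑ n ∈ Finset.Icc 1 (N-1),
      (-1:ℝ)^(n+1) / (Real.sin ((n:ℝ)*Real.pi/N))^(2*(m-s)) := by
    intro s hs
    rw [Finset.mem_Icc] at hs
    rw [hT]
    refine Finset.sum_congr rfl fun n hn => ?_
    rw [show 2*m = 2*(m-s) + 2*s by omega,
      pow_add (Real.sin ((n:ℝ)*Real.pi/N)) (2*(m-s)) (2*s),
      mul_div_mul_right _ _ (pow_ne_zero _ (hsinne n hn))]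
  have hfirst : ∑ s ∈ Finset.Icc 1 (m-1), cc l s * T s
      = (1/2) * ∑ s ∈ Finset.Icc 1 (m-1),
        (-1 : ℝ) ^ (s + 1) * ((l : ℝ) / ((l : ℝ) + s)) * (Nat.choose (l + s) (l - s)) *
          2 ^ (2 * s) *
          (∑ n ∈ Finset.Icc 1 (N - 1), (-1 : ℝ) ^ (n + 1) /
            (Real.sin ((n:ℝ) * Real.pi / N)) ^ (2 * (m - s))) := by
    rw [Finset.mul_sum]
    refine Finset.sum_congr rfl fun s hs => ?_
    have hs' := Finset.mem_Icc.mp hs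
    rw [hTval s hs, cc_eq_choose (by omega) (by omega : s ≤ l)]
    ring
  rw [hLHS, hsplit, Finset.sum_eq_zero hTzero, add_zero, hfirst, hTm, mul_one,
    cc_eq_fact hm hml]
end

section
/- Let N be a positive even integer and m an integer with 1 ≤ m ≤ N/2. Then T^t_{2m} = Σ_{s=1}^{m-1} (−1)^{s+1} · ( (N/2)/(N/2+s) ) · C(N/2+s, N/2−s) · 2^{2s} · T^t_{2(m−s)} + (−1)^{m+1} · 2^{2m} · ( (N/2+m−1)! / ( (N/2−m)! · (2m)! ) ) · (N/2) − T_{2m}, where the sum over s is empty when m = 1. -/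
open Real Finset

noncomputable def cR (M s : ℕ) : ℝ :=
  if s ≤ M then 4 ^ s * M * (Nat.factorial (M + s - 1)) /
    (Nat.factorial (M - s) * Nat.factorial (2 * s)) else 0

lemma cR_gt {M s : ℕ} (h : M < s) : cR M s = 0 := by
  simp [cR, Nat.not_le.mpr h]

lemma cR_zero {M : ℕ} (hM : 1 ≤ M) : cR M 0 = 1 := by
  obtain ⟨K, rfl⟩ := Nat.exists_eq_add_of_le hM
  rw [cR, if_pos (by omega)]
  rw [show 1 + K + 0 - 1 = K from by omega, show 1 + K - 0 = K + 1 from by omega]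
  rw [Nat.factorial_succ]
  push_cast
  have := (Nat.factorial_pos K)
  field_simp
  rw [Nat.factorial_zero]; push_cast; ring

lemma cR_succ (s t : ℕ) : cR (s + t + 1) (s + 1) =
    4 ^ (s + 1) * ((s : ℝ) + (t : ℝ) + 1) * (Nat.factorial (2 * s + t + 1)) /
      (Nat.factorial t * Nat.factorial (2 * s + 2)) := by
  rw [cR, if_pos (by omega)]
  rw [show s + t + 1 + (s + 1) - 1 = 2 * s + t + 1 from by omega,
      show s + t + 1 - (s + 1) = t from by omega,
      show 2 * (s + 1) = 2 * s + 2 from by omega]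
  push_cast
  ring

lemma fact1 (n : ℕ) : ((Nat.factorial (n + 1) : ℝ)) = ((n : ℝ) + 1) * Nat.factorial n := by
  rw [Nat.factorial_succ]; push_cast; ring

lemma fpos (n : ℕ) : (0 : ℝ) < Nat.factorial n := by
  exact_mod_cast Nat.factorial_pos n

lemma cR_diag (j : ℕ) : cR (j + 1) (j + 1) = 4 ^ (j + 1) / 2 := by
  have h := cR_succ j 0
  rw [show j + 0 + 1 = j + 1 from by omega, show 2 * j + 0 + 1 = 2 * j + 1 from by omega,
      show 2 * j + 2 = 2 * j + 1 + 1 from by omega, fact1 (2 * j + 1)] at h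
  rw [h]
  have h3 := fpos (2 * j + 1)
  norm_num [Nat.factorial]
  field_simp
  push_cast
  ring

lemma cR_one (K : ℕ) : cR (K + 1) 1 = 2 * ((K : ℝ) + 1) ^ 2 := by
  have h := cR_succ 0 K
  norm_num [Nat.factorial] at h
  rw [h]
  have h1 := fpos K
  field_simp
  ring

lemma L1 (t : ℕ) : cR (0 + (t + 2) + 1) (0 + 1) =
    2 * cR (0 + (t + 1) + 1) (0 + 1) + 4 * cR (t + 2) 0 - cR (0 + t + 1) (0 + 1) := by
  rw [cR_succ 0 (t + 2), cR_succ 0 (t + 1), cR_succ 0 t, cR_zero (show 1 ≤ t + 2 from by omega)]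
  rw [show (2 * 0 + (t + 2) + 1 : ℕ) = t + 1 + 1 + 1 from by omega,
      show (2 * 0 + (t + 1) + 1 : ℕ) = t + 1 + 1 from by omega,
      show (2 * 0 + t + 1 : ℕ) = t + 1 from by omega,
      show (2 * 0 + 2 : ℕ) = 2 from by omega]
  rw [fact1 (t + 1 + 1), fact1 (t + 1), fact1 t]
  have h1 := fpos t
  norm_num [Nat.factorial]
  field_simp
  ring

lemma L3 (j : ℕ) : cR ((j + 1) + 1 + 1) ((j + 1) + 1) =
    2 * cR ((j + 1) + 0 + 1) ((j + 1) + 1) + 4 * cR (j + 1 + 1) (j + 1)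
      - cR (j + 1) ((j + 1) + 1) := by
  rw [cR_gt (show j + 1 < (j + 1) + 1 from by omega)]
  rw [cR_succ (j + 1) 1, cR_succ (j + 1) 0, cR_succ j 1]
  rw [show (2 * (j + 1) + 1 + 1 : ℕ) = 2 * j + 2 + 1 + 1 from by omega,
      show (2 * (j + 1) + 0 + 1 : ℕ) = 2 * j + 2 + 1 from by omega,
      show (2 * j + 1 + 1 : ℕ) = 2 * j + 2 from by omega]
  rw [fact1 (2 * j + 2 + 1), fact1 (2 * j + 2)]
  have h2 := fpos (2 * j + 2)
  norm_num [Nat.factorial]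
  push_cast
  field_simp
  ring

lemma L4 (j : ℕ) : cR ((j + 1) + 0 + 1) ((j + 1) + 1) =
    2 * cR (j + 1) ((j + 1) + 1) + 4 * cR (j + 1) (j + 1) - cR j ((j + 1) + 1) := by
  rw [cR_gt (show j + 1 < (j + 1) + 1 from by omega), cR_gt (show j < (j + 1) + 1 from by omega)]
  rw [cR_succ (j + 1) 0, cR_diag j]
  rw [show (2 * (j + 1) + 0 + 1 : ℕ) = 2 * j + 1 + 1 + 1 from by omega,
      show (2 * (j + 1) + 2 : ℕ) = 2 * j + 1 + 1 + 1 + 1 from by omega]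
  rw [fact1 (2 * j + 1 + 1 + 1), fact1 (2 * j + 1 + 1), fact1 (2 * j + 1)]
  have h3 := fpos (2 * j + 1)
  norm_num [Nat.factorial]
  push_cast
  field_simp
  ring

lemma L2 (j t : ℕ) : cR ((j+1) + (t+2) + 1) ((j+1) + 1) =
    2 * cR ((j+1) + (t+1) + 1) ((j+1) + 1) + 4 * cR (j + (t+2) + 1) (j + 1)
      - cR ((j+1) + t + 1) ((j+1) + 1) := by
  rw [cR_succ (j+1) (t+2), cR_succ (j+1) (t+1), cR_succ j (t+2), cR_succ (j+1) t]
  rw [show (2 * (j+1) + (t+2) + 1 : ℕ) = 2*j+t+1+1+1+1+1 from by omega,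
      show (2 * (j+1) + (t+1) + 1 : ℕ) = 2*j+t+1+1+1+1 from by omega,
      show (2 * j + (t+2) + 1 : ℕ) = 2*j+t+1+1+1 from by omega,
      show (2 * (j+1) + t + 1 : ℕ) = 2*j+t+1+1+1 from by omega,
      show (t+2 : ℕ) = t+1+1 from by omega,
      show (2 * (j+1) + 2 : ℕ) = 2*j+2+1+1 from by omega]
  rw [fact1 (2*j+t+1+1+1+1), fact1 (2*j+t+1+1+1), fact1 (2*j+t+1+1),
      fact1 (t+1), fact1 t, fact1 (2*j+2+1), fact1 (2*j+2)]
  have h1 := fpos t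
  have h2 := fpos (2 * j + 2)
  have h3 := fpos (2 * j + t + 1)
  have n1 : (0:ℝ) ≤ (j:ℝ) := Nat.cast_nonneg j
  have n2 : (0:ℝ) ≤ (t:ℝ) := Nat.cast_nonneg t
  push_cast
  field_simp
  ring

lemma cRrec (M i : ℕ) (hM : 2 ≤ M) (hi : i ≤ M) :
    cR (M + 1) (i + 1) = 2 * cR M (i + 1) + 4 * cR M i - cR (M - 1) (i + 1) := by
  rcases Nat.lt_or_ge i (M - 1) with h1 | h1
  · rcases Nat.eq_zero_or_pos i with rfl | hipos
    · obtain ⟨t, rfl⟩ : ∃ t, M = t + 2 := ⟨M - 2, by omega⟩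
      rw [show t + 2 + 1 = 0 + (t + 2) + 1 from by omega,
          show t + 2 - 1 = 0 + t + 1 from by omega]
      nth_rewrite 2 [show (t : ℕ) + 2 = 0 + (t + 1) + 1 from by omega]
      exact L1 t
    · obtain ⟨j, rfl⟩ : ∃ j, i = j + 1 := ⟨i - 1, by omega⟩
      obtain ⟨t, rfl⟩ : ∃ t, M = j + t + 3 := ⟨M - j - 3, by omega⟩
      rw [show j + t + 3 + 1 = (j + 1) + (t + 2) + 1 from by omega,
          show j + t + 3 - 1 = (j + 1) + t + 1 from by omega]
      nth_rewrite 1 [show (j : ℕ) + t + 3 = (j + 1) + (t + 1) + 1 from by omega]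
      rw [show (j : ℕ) + t + 3 = j + (t + 2) + 1 from by omega]
      exact L2 j t
  · rcases Nat.eq_or_lt_of_le h1 with h2 | h2
    · obtain ⟨j, rfl⟩ : ∃ j, M = j + 2 := ⟨M - 2, by omega⟩
      have : i = j + 1 := by omega
      subst this
      rw [show j + 2 + 1 = (j + 1) + 1 + 1 from by omega,
          show j + 2 - 1 = j + 1 from by omega]
      nth_rewrite 1 [show (j : ℕ) + 2 = (j + 1) + 0 + 1 from by omega]
      rw [show (j : ℕ) + 2 = j + 1 + 1 from by omega]
      exact L3 j
    · have hMi : M = i := by omega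
      subst hMi
      obtain ⟨j, rfl⟩ : ∃ j, M = j + 1 := ⟨M - 1, by omega⟩
      rw [show j + 1 - 1 = j from by omega]
      nth_rewrite 1 [show j + 1 + 1 = (j + 1) + 0 + 1 from by omega]
      exact L4 j

lemma S_rec (M : ℕ) (hM : 2 ≤ M) (x : ℝ) :
    (∑ s ∈ range (M + 2), (-1 : ℝ) ^ s * cR (M + 1) s * x ^ (2 * s))
      = 2 * (1 - 2 * x ^ 2) * (∑ s ∈ range (M + 1), (-1 : ℝ) ^ s * cR M s * x ^ (2 * s))
        - ∑ s ∈ range M, (-1 : ℝ) ^ s * cR (M - 1) s * x ^ (2 * s) := by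
  have hf : (∑ s ∈ range (M + 2), (-1 : ℝ) ^ s * cR M s * x ^ (2 * s))
      = ∑ s ∈ range (M + 1), (-1 : ℝ) ^ s * cR M s * x ^ (2 * s) := by
    rw [Finset.sum_range_succ, cR_gt (Nat.lt_succ_self M)]; ring
  have hg : (∑ s ∈ range (M + 2), (-1 : ℝ) ^ s * cR (M - 1) s * x ^ (2 * s))
      = ∑ s ∈ range M, (-1 : ℝ) ^ s * cR (M - 1) s * x ^ (2 * s) := by
    rw [Finset.sum_range_succ, Finset.sum_range_succ,
        cR_gt (show M - 1 < M + 1 from by omega), cR_gt (show M - 1 < M from by omega)]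
    ring
  -- key combined sum identity
  have key : (∑ s ∈ range (M + 2), ((-1 : ℝ) ^ s * cR (M + 1) s * x ^ (2 * s)
        - 2 * ((-1 : ℝ) ^ s * cR M s * x ^ (2 * s))
        + (-1 : ℝ) ^ s * cR (M - 1) s * x ^ (2 * s)))
      = ∑ i ∈ range (M + 1), (-(4 * x ^ 2 * ((-1 : ℝ) ^ i * cR M i * x ^ (2 * i)))) := by
    rw [Finset.sum_range_succ']
    have h0 : (-1 : ℝ) ^ 0 * cR (M + 1) 0 * x ^ (2 * 0)
        - 2 * ((-1 : ℝ) ^ 0 * cR M 0 * x ^ (2 * 0))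
        + (-1 : ℝ) ^ 0 * cR (M - 1) 0 * x ^ (2 * 0) = 0 := by
      rw [cR_zero (by omega), cR_zero (by omega), cR_zero (by omega)]
      norm_num
    rw [h0, add_zero]
    refine Finset.sum_congr rfl ?_
    intro i hi
    rw [cRrec M i hM (Nat.lt_succ_iff.mp (Finset.mem_range.mp hi))]
    have hx : x ^ (2 * (i + 1)) = x ^ (2 * i) * x ^ 2 := by
      rw [← pow_add]
      ring_nf
    rw [hx]
    ring
  have hsplit := Finset.sum_add_distrib (s := range (M + 2))
    (f := fun s => (-1 : ℝ) ^ s * cR (M + 1) s * x ^ (2 * s)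
      - 2 * ((-1 : ℝ) ^ s * cR M s * x ^ (2 * s)))
    (g := fun s => (-1 : ℝ) ^ s * cR (M - 1) s * x ^ (2 * s))
  have hsplit2 := Finset.sum_sub_distrib (s := range (M + 2))
    (f := fun s => (-1 : ℝ) ^ s * cR (M + 1) s * x ^ (2 * s))
    (g := fun s => 2 * ((-1 : ℝ) ^ s * cR M s * x ^ (2 * s)))
  have h2 : (∑ s ∈ range (M + 2), 2 * ((-1 : ℝ) ^ s * cR M s * x ^ (2 * s)))
      = 2 * ∑ s ∈ range (M + 1), (-1 : ℝ) ^ s * cR M s * x ^ (2 * s) := by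
    rw [← Finset.mul_sum, hf]
  have h3 : (∑ i ∈ range (M + 1), (-(4 * x ^ 2 * ((-1 : ℝ) ^ i * cR M i * x ^ (2 * i)))))
      = -(4 * x ^ 2 * ∑ s ∈ range (M + 1), (-1 : ℝ) ^ s * cR M s * x ^ (2 * s)) := by
    rw [Finset.mul_sum, ← Finset.sum_neg_distrib]
  rw [hsplit, hsplit2, h2, hg, h3] at key
  linear_combination key

lemma cheb : ∀ M : ℕ, 1 ≤ M → ∀ θ : ℝ,
    Real.cos (2 * M * θ) = ∑ s ∈ range (M + 1), (-1 : ℝ) ^ s * cR M s * Real.sin θ ^ (2 * s) := by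
  intro M
  induction M using Nat.strong_induction_on with
  | _ M ih =>
    match M with
    | 0 => intro h; omega
    | 1 =>
      intro _ θ
      have h1 : cR 1 0 = 1 := cR_zero le_rfl
      have h2 : cR 1 1 = 2 := by have := cR_diag 0; norm_num at this; exact this
      rw [Finset.sum_range_succ, Finset.sum_range_one, h1, h2]
      have hpy := Real.sin_sq_add_cos_sq θ
      rw [show (2 : ℝ) * (1 : ℕ) * θ = 2 * θ by push_cast; ring, Real.cos_two_mul]
      norm_num
      linarith
    | 2 =>
      intro _ θ
      have h1 : cR 2 0 = 1 := cR_zero (by omega)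
      have h2 : cR 2 1 = 8 := by have := cR_one 1; norm_num at this; exact this
      have h3 : cR 2 2 = 8 := by have := cR_diag 1; norm_num at this; exact this
      rw [Finset.sum_range_succ, Finset.sum_range_succ, Finset.sum_range_one, h1, h2, h3]
      have hpy := Real.sin_sq_add_cos_sq θ
      rw [show (2 : ℝ) * (2 : ℕ) * θ = 2 * (2 * θ) by push_cast; ring, Real.cos_two_mul,
          Real.cos_two_mul]
      norm_num
      nlinarith [hpy]
    | (K + 3) =>
      intro _ θ
      have ih1 := ih (K + 2) (by omega) (by omega) θ
      have ih2 := ih (K + 1) (by omega) (by omega) θ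
      push_cast at ih1 ih2
      have trig : Real.cos (2 * ((K : ℝ) + 3) * θ)
          = 2 * Real.cos (2 * ((K : ℝ) + 2) * θ) * Real.cos (2 * θ)
            - Real.cos (2 * ((K : ℝ) + 1) * θ) := by
        have h := Real.cos_add_cos (2 * ((K : ℝ) + 3) * θ) (2 * ((K : ℝ) + 1) * θ)
        rw [show (2 * ((K : ℝ) + 3) * θ + 2 * ((K : ℝ) + 1) * θ) / 2 = 2 * ((K : ℝ) + 2) * θ
              by ring,
            show (2 * ((K : ℝ) + 3) * θ - 2 * ((K : ℝ) + 1) * θ) / 2 = 2 * θ by ring] at h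
        linarith
      have c2 : Real.cos (2 * θ) = 1 - 2 * Real.sin θ ^ 2 := by
        rw [Real.cos_two_mul]
        have := Real.sin_sq_add_cos_sq θ
        linarith
      have hrec := S_rec (K + 2) (by omega) (Real.sin θ)
      rw [show (((K : ℕ) + 3 : ℕ) : ℝ) = (K : ℝ) + 3 by push_cast; ring] at *
      rw [trig, c2]
      rw [show ((K : ℕ) + 3 + 1) = (K + 2) + 2 from by omega]
      rw [show ((K : ℕ) + 3) = (K + 2) + 1 from by omega] -- inside cR (K+3) s
      rw [show ((K : ℕ) + 2 - 1) = K + 1 from by omega] at hrec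
      rw [hrec]
      rw [show ((K : ℕ) + 1 + 1) = K + 2 from by omega] at ih2
      rw [← ih1, ← ih2]
      ring


lemma alt_one {N : ℕ} (hN : 0 < N) (hNe : Even N) :
    ∑ n ∈ Finset.Icc 1 (N - 1), (-1 : ℝ) ^ (n + 1) = 1 := by
  have h1 : Finset.Icc 1 (N - 1) = Finset.Ico 1 N := by
    rw [← Finset.Ico_add_one_right_eq_Icc]
    congr 1
    omega
  rw [h1, Finset.sum_Ico_eq_sub _ hN]
  have h2 : ∑ n ∈ range N, (-1 : ℝ) ^ (n + 1) = 0 := by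
    have h3 : ∑ n ∈ range N, (-1 : ℝ) ^ (n + 1) = -∑ n ∈ range N, (-1 : ℝ) ^ n := by
      rw [← Finset.sum_neg_distrib]
      refine Finset.sum_congr rfl fun i _ => ?_
      rw [pow_succ]
      ring
    rw [h3, neg_one_geom_sum, if_pos hNe, neg_zero]
  rw [h2]
  norm_num

lemma altsum_zero (N k : ℕ) (hNe : Even N) (hk : 1 ≤ k) (h2k : 2 * k < N) :
    ∑ n ∈ Finset.Icc 1 (N - 1), (-1 : ℝ) ^ (n + 1) * Real.sin (n * Real.pi / N) ^ (2 * k) = 0 := by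
  have hNpos : 0 < N := by omega
  have hN0 : (N : ℂ) ≠ 0 := Nat.cast_ne_zero.mpr (by omega)
  have main : ∑ n ∈ Finset.Icc 1 (N - 1),
      (-1 : ℂ) ^ (n + 1) * Complex.sin (n * Real.pi / N) ^ (2 * k) = 0 := by
    set u : ℂ := Complex.exp (Real.pi * Complex.I / N) with hu
    have hu0 : u ≠ 0 := Complex.exp_ne_zero _
    have huN : u ^ N = -1 := by
      rw [hu, ← Complex.exp_nat_mul]
      rw [show (N : ℂ) * (Real.pi * Complex.I / N) = Real.pi * Complex.I from by field_simp]
      exact Complex.exp_pi_mul_I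
    set e : ℕ → ℤ := fun j => (N : ℤ) + 2 * k - 2 * j with he
    have znat : ∀ (a : ℂ) (m : ℕ), a ^ m = a ^ (m : ℤ) := fun a m => (zpow_natCast a m).symm
    -- per-n expansion
    have key : ∀ n : ℕ, (-1 : ℂ) ^ (n + 1) * Complex.sin (n * Real.pi / N) ^ (2 * k)
        = -(-1/4 : ℂ) ^ k * ∑ j ∈ range (2 * k + 1),
            ((u ^ (e j)) ^ n * (-1 : ℂ) ^ (2 * k - j) * (Nat.choose (2 * k) j : ℂ)) := by
      intro n
      have e2 : Complex.exp ((↑n * ↑Real.pi / ↑N) * Complex.I) = u ^ n := by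
        rw [hu, ← Complex.exp_nat_mul]
        congr 1
        ring
      have e1 : Complex.exp (-(↑n * ↑Real.pi / ↑N) * Complex.I) = (u ^ n)⁻¹ := by
        rw [show (-(↑n * ↑Real.pi / ↑N) * Complex.I : ℂ)
            = -((↑n * ↑Real.pi / ↑N) * Complex.I) from by ring, Complex.exp_neg, e2]
      have hsin : Complex.sin (n * Real.pi / N) = ((u ^ n)⁻¹ - u ^ n) * Complex.I / 2 := by
        rw [Complex.sin, e1, e2]
      have hspow : Complex.sin (n * Real.pi / N) ^ (2 * k)
          = (-1/4 : ℂ) ^ k * ((u ^ n)⁻¹ - u ^ n) ^ (2 * k) := by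
        rw [hsin, div_pow, mul_pow,
            show Complex.I ^ (2 * k) = (-1 : ℂ) ^ k from by rw [pow_mul, Complex.I_sq],
            show (2 : ℂ) ^ (2 * k) = 4 ^ k from by rw [pow_mul]; norm_num,
            show (-1/4 : ℂ) ^ k = (-1 : ℂ) ^ k / 4 ^ k from by rw [div_pow]]
        ring
      have hun : u ^ n ≠ 0 := pow_ne_zero _ hu0
      have hexpand : ((u ^ n)⁻¹ - u ^ n) ^ (2 * k) * (u ^ (2 * k)) ^ n
          = (1 - (u ^ 2) ^ n) ^ (2 * k) := by
        rw [pow_right_comm u (2 * k) n, ← mul_pow]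
        congr 1
        rw [sub_mul, inv_mul_cancel₀ hun, pow_right_comm u 2 n]
        ring
      have hbin : (1 - (u ^ 2) ^ n) ^ (2 * k)
          = ∑ j ∈ range (2 * k + 1),
              (((u ^ 2) ^ n) ^ (2 * k - j) * (-1 : ℂ) ^ (2 * k - j) * (Nat.choose (2 * k) j : ℂ)) := by
        rw [sub_eq_add_neg, add_pow]
        refine Finset.sum_congr rfl fun j _ => ?_
        rw [one_pow, neg_pow]
        ring
      have hne2k : (u ^ (2 * k) : ℂ) ^ n ≠ 0 := pow_ne_zero _ (pow_ne_zero _ hu0)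
      have hBpow : ((u ^ n)⁻¹ - u ^ n) ^ (2 * k)
          = (∑ j ∈ range (2 * k + 1),
              (((u ^ 2) ^ n) ^ (2 * k - j) * (-1 : ℂ) ^ (2 * k - j) * (Nat.choose (2 * k) j : ℂ)))
            * ((u ^ (2 * k)) ^ n)⁻¹ := by
        rw [← hbin, ← hexpand, mul_assoc, mul_inv_cancel₀ hne2k, mul_one]
      have hmo : (-1 : ℂ) ^ (n + 1) = -((u ^ N) ^ n) := by
        rw [huN, pow_succ]
        ring
      rw [hspow, hBpow, hmo]
      rw [Finset.sum_mul, Finset.mul_sum, Finset.mul_sum, Finset.mul_sum]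
      refine Finset.sum_congr rfl fun j hj => ?_
      have hjle : j ≤ 2 * k := Nat.lt_succ_iff.mp (Finset.mem_range.mp hj)
      have hpowj : (u ^ (e j)) ^ n * (u ^ (2 * k)) ^ n
          = (u ^ N) ^ n * ((u ^ 2) ^ n) ^ (2 * k - j) := by
        rw [znat u N, znat u (2 * k), znat u 2]
        rw [znat (u ^ (e j : ℤ)) n, znat (u ^ ((N : ℕ) : ℤ)) n, znat (u ^ ((2 * k : ℕ) : ℤ)) n,
            znat (u ^ ((2 : ℕ) : ℤ)) n, znat ((u ^ (((2 : ℕ) : ℤ))) ^ ((n : ℕ) : ℤ)) (2 * k - j)]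
        rw [← zpow_mul, ← zpow_mul, ← zpow_mul, ← zpow_mul, ← zpow_mul, ← zpow_add₀ hu0,
            ← zpow_add₀ hu0]
        congr 1
        rw [he]
        push_cast [Nat.cast_sub hjle]
        ring
      have hrw : (u ^ (e j)) ^ n = (u ^ N) ^ n * ((u ^ 2) ^ n) ^ (2 * k - j)
          * ((u ^ (2 * k)) ^ n)⁻¹ := by
        field_simp [← hpowj]
        exact hpowj
      rw [hrw]
      field_simp
    rw [Finset.sum_congr rfl fun n _ => key n]
    rw [← Finset.mul_sum, Finset.sum_comm]
    -- inner geometric sums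
    have geo : ∀ j ∈ range (2 * k + 1),
        (∑ n ∈ Finset.Icc 1 (N - 1), ((u ^ (e j)) ^ n)) = -1 := by
      intro j hj
      have hjle : j ≤ 2 * k := Nat.lt_succ_iff.mp (Finset.mem_range.mp hj)
      set w : ℂ := u ^ (e j) with hw
      have hepos : 1 ≤ e j := by rw [he]; simp only []; omega
      have helt : e j < 2 * N := by rw [he]; simp only []; omega
      obtain ⟨p, hp⟩ := hNe
      have heven : ∃ c : ℤ, e j = c + c := ⟨(p : ℤ) + k - j, by rw [he]; simp only []; omega⟩
      have hwN : w ^ N = 1 := by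
        obtain ⟨c, hc⟩ := heven
        calc w ^ N = (u ^ (e j)) ^ (N : ℤ) := by rw [hw, znat]
        _ = (u ^ (N : ℤ)) ^ (e j) := by rw [← zpow_mul, ← zpow_mul, mul_comm]
        _ = ((-1 : ℂ)) ^ (e j) := by rw [← znat, huN]
        _ = 1 := by
            rw [hc, zpow_add₀ (by norm_num : (-1 : ℂ) ≠ 0), ← mul_zpow]
            norm_num
      have hw1 : w ≠ 1 := by
        intro hcon
        rw [hw, hu, ← Complex.exp_int_mul, Complex.exp_eq_one_iff] at hcon
        obtain ⟨m, hm⟩ := hcon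
        have hπ : (Real.pi : ℂ) ≠ 0 := by exact_mod_cast Real.pi_ne_zero
        have hI := Complex.I_ne_zero
        field_simp at hm
        have hm2 : ((e j : ℤ) : ℂ) = 2 * m * N := by
          have h' : ((e j : ℤ) : ℂ) * ((Real.pi : ℂ) * Complex.I)
              = (2 * m * N) * ((Real.pi : ℂ) * Complex.I) := by linear_combination ((Real.pi : ℂ) * Complex.I) * hm
          exact mul_right_cancel₀ (mul_ne_zero hπ hI) h'
        have hm3 : e j = 2 * m * N := by exact_mod_cast hm2
        have hN1 : (0 : ℤ) < (N : ℤ) := by exact_mod_cast hNpos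
        rcases le_or_gt m 0 with hm0 | hm0
        · nlinarith
        · have hm1 : (1 : ℤ) ≤ m := hm0
          nlinarith
      have hgeo : ∑ n ∈ range N, w ^ n = 0 := by
        rw [geom_sum_eq hw1, hwN, sub_self, zero_div]
      have h1 : Finset.Icc 1 (N - 1) = Finset.Ico 1 N := by
        rw [← Finset.Ico_add_one_right_eq_Icc]; congr 1; omega
      rw [h1, Finset.sum_Ico_eq_sub _ hNpos, hgeo]
      norm_num
    have inner : ∀ j ∈ range (2 * k + 1),
        (∑ n ∈ Finset.Icc 1 (N - 1),
          ((u ^ (e j)) ^ n * (-1 : ℂ) ^ (2 * k - j) * (Nat.choose (2 * k) j : ℂ)))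
        = -((-1 : ℂ) ^ (2 * k - j) * (Nat.choose (2 * k) j : ℂ)) := by
      intro j hj
      rw [show (∑ n ∈ Finset.Icc 1 (N - 1),
          ((u ^ (e j)) ^ n * (-1 : ℂ) ^ (2 * k - j) * (Nat.choose (2 * k) j : ℂ)))
        = (∑ n ∈ Finset.Icc 1 (N - 1), ((u ^ (e j)) ^ n))
            * ((-1 : ℂ) ^ (2 * k - j) * (Nat.choose (2 * k) j : ℂ)) from by
          rw [Finset.sum_mul]
          exact Finset.sum_congr rfl fun n _ => by ring]
      rw [geo j hj]
      ring
    rw [Finset.sum_congr rfl inner]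
    have zsum : ∑ j ∈ range (2 * k + 1), ((-1 : ℂ) ^ (2 * k - j) * (Nat.choose (2 * k) j : ℂ))
        = 0 := by
      have hap := add_pow (1 : ℂ) (-1) (2 * k)
      rw [show ((1 : ℂ) + -1) = 0 from by norm_num, zero_pow (by omega : 2 * k ≠ 0)] at hap
      rw [show (∑ j ∈ range (2 * k + 1), ((-1 : ℂ) ^ (2 * k - j) * (Nat.choose (2 * k) j : ℂ)))
        = ∑ j ∈ range (2 * k + 1),
            ((1 : ℂ) ^ j * (-1) ^ (2 * k - j) * (Nat.choose (2 * k) j : ℂ)) from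
        Finset.sum_congr rfl fun j _ => by ring]
      exact hap.symm
    rw [Finset.sum_neg_distrib, zsum]
    norm_num
  have cast : ((∑ n ∈ Finset.Icc 1 (N - 1),
      (-1 : ℝ) ^ (n + 1) * Real.sin (n * Real.pi / N) ^ (2 * k) : ℝ) : ℂ) = 0 := by
    push_cast [Complex.ofReal_sin]
    exact main
  exact_mod_cast cast


lemma coeff_eq (M s : ℕ) (hs1 : 1 ≤ s) (hsM : s ≤ M) :
    ((M : ℝ) / ((M : ℝ) + s)) * (Nat.choose (M + s) (M - s) : ℝ) * 2 ^ (2 * s) = cR M s := by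
  rw [cR, if_pos hsM]
  rw [Nat.cast_choose ℝ (show M - s ≤ M + s from by omega)]
  rw [show (M + s) - (M - s) = 2 * s from by omega]
  obtain ⟨L, hL⟩ : ∃ L, M + s = L + 1 := ⟨M + s - 1, by omega⟩
  rw [show M + s - 1 = L from by omega, hL, fact1 L]
  have h1 := fpos L
  have h2 := fpos (M - s)
  have h3 := fpos (2 * s)
  have h4 : ((M : ℝ) + s) ≠ 0 := by
    have : (0:ℝ) < (M:ℝ) + s := by
      have : (0:ℝ) < (s:ℝ) := by exact_mod_cast hs1
      have : (0:ℝ) ≤ (M:ℝ) := Nat.cast_nonneg M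
      linarith
    linarith
  have hL1 : ((L : ℝ) + 1) = (M : ℝ) + s := by
    have : ((L + 1 : ℕ) : ℝ) = ((M + s : ℕ) : ℝ) := by rw [← hL]
    push_cast at this
    linarith
  rw [show (2:ℝ) ^ (2 * s) = 4 ^ s from by rw [pow_mul]; norm_num]
  field_simp
  rw [hL1]

theorem twisted_T2m_recursion (N m : ℕ) (hN : 0 < N) (hNeven : Even N)
    (hm : 1 ≤ m) (hmN : m ≤ N / 2) :
    (∑ n ∈ Finset.Icc 1 (N - 1), (-1 : ℝ) ^ (n + 1) / (Real.sin (n * Real.pi / N)) ^ (2 * m))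
    = (∑ s ∈ Finset.Icc 1 (m - 1),
        (-1 : ℝ) ^ (s + 1) * (((N / 2 : ℕ) : ℝ) / (((N / 2 : ℕ) : ℝ) + s)) *
          (Nat.choose (N / 2 + s) (N / 2 - s)) * 2 ^ (2 * s) *
          (∑ n ∈ Finset.Icc 1 (N - 1), (-1 : ℝ) ^ (n + 1) /
            (Real.sin (n * Real.pi / N)) ^ (2 * (m - s))))
      + (-1 : ℝ) ^ (m + 1) * 2 ^ (2 * m) *
          ((Nat.factorial (N / 2 + m - 1) : ℝ) /
            ((Nat.factorial (N / 2 - m) : ℝ) * (Nat.factorial (2 * m) : ℝ))) * ((N / 2 : ℕ) : ℝ)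
      - ∑ n ∈ Finset.Icc 1 (N - 1), 1 / (Real.sin (n * Real.pi / N)) ^ (2 * m) := by
  obtain ⟨p, hp⟩ := hNeven
  set M := N / 2 with hM
  have hN2M : N = 2 * M := by omega
  have hM1 : 1 ≤ M := by omega
  have hmM : m ≤ M := hmN
  have hM0 : ((M : ℝ)) ≠ 0 := by
    have : (0:ℝ) < M := by exact_mod_cast hM1
    linarith
  have hMR : (N : ℝ) = 2 * M := by exact_mod_cast congrArg (fun x : ℕ => (x : ℝ)) hN2M
  have hsin0 : ∀ n ∈ Finset.Icc 1 (N - 1), Real.sin (n * Real.pi / N) ≠ 0 := by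
    intro n hn
    obtain ⟨h1, h2⟩ := Finset.mem_Icc.mp hn
    have hn0 : (0:ℝ) < n := by exact_mod_cast (show 0 < n from by omega)
    have hnN : (n:ℝ) < N := by exact_mod_cast (show n < N from by omega)
    have hNr : (0:ℝ) < N := by exact_mod_cast hN
    apply ne_of_gt
    apply Real.sin_pos_of_pos_of_lt_pi
    · positivity
    · rw [div_lt_iff₀ hNr]
      nlinarith [Real.pi_pos]
  have keyn : ∀ n ∈ Finset.Icc 1 (N - 1),
      -(1 / Real.sin (n * Real.pi / N) ^ (2 * m))
        = ∑ s ∈ range (M + 1), ((-1:ℝ) ^ s * cR M s *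
            ((-1:ℝ) ^ (n + 1) *
              (Real.sin (n * Real.pi / N) ^ (2 * s) / Real.sin (n * Real.pi / N) ^ (2 * m)))) := by
    intro n hn
    have hB := cheb M hM1 (n * Real.pi / N)
    have harg : 2 * (M:ℝ) * (n * Real.pi / N) = n * Real.pi := by
      rw [hMR]
      field_simp
    rw [harg] at hB
    have hcos : Real.cos ((n:ℝ) * Real.pi) = (-1:ℝ) ^ n := by
      have := Real.cos_nat_mul_pi_sub 0 n
      simpa using this
    rw [hcos] at hB
    have hsq : ((-1:ℝ)) ^ n * (-1:ℝ) ^ n = 1 := by rw [← mul_pow]; norm_num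
    calc -(1 / Real.sin (n * Real.pi / N) ^ (2 * m))
        = ((-1:ℝ) ^ (n+1) / Real.sin (n * Real.pi / N) ^ (2 * m)) * ((-1:ℝ) ^ n) := by
          have h1 : ((-1:ℝ)) ^ (n + 1) * (-1:ℝ) ^ n = -1 := by
            rw [pow_succ]
            linear_combination (-1 : ℝ) * hsq
          rw [div_mul_eq_mul_div, h1, neg_div]
      _ = ((-1:ℝ) ^ (n+1) / Real.sin (n * Real.pi / N) ^ (2 * m)) *
            (∑ s ∈ range (M + 1), (-1:ℝ) ^ s * cR M s * Real.sin (n * Real.pi / N) ^ (2 * s)) := by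
          rw [← hB]
      _ = _ := by
          rw [Finset.mul_sum]
          exact Finset.sum_congr rfl fun s _ => by ring
  have E : -(∑ n ∈ Finset.Icc 1 (N - 1), 1 / Real.sin (n * Real.pi / N) ^ (2 * m))
      = ∑ s ∈ range (M + 1), ((-1:ℝ) ^ s * cR M s *
          (∑ n ∈ Finset.Icc 1 (N - 1), (-1:ℝ) ^ (n + 1) *
            (Real.sin (n * Real.pi / N) ^ (2 * s) / Real.sin (n * Real.pi / N) ^ (2 * m)))) := by
    rw [← Finset.sum_neg_distrib, Finset.sum_congr rfl keyn, Finset.sum_comm]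
    exact Finset.sum_congr rfl fun s _ => by rw [← Finset.mul_sum]
  -- split the s-sum
  have hsplit : (∑ s ∈ range (M + 1), ((-1:ℝ) ^ s * cR M s *
          (∑ n ∈ Finset.Icc 1 (N - 1), (-1:ℝ) ^ (n + 1) *
            (Real.sin (n * Real.pi / N) ^ (2 * s) / Real.sin (n * Real.pi / N) ^ (2 * m)))))
      = (∑ s ∈ range (m + 1), ((-1:ℝ) ^ s * cR M s *
          (∑ n ∈ Finset.Icc 1 (N - 1), (-1:ℝ) ^ (n + 1) *
            (Real.sin (n * Real.pi / N) ^ (2 * s) / Real.sin (n * Real.pi / N) ^ (2 * m)))))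
        + ∑ s ∈ Finset.Ico (m + 1) (M + 1), ((-1:ℝ) ^ s * cR M s *
          (∑ n ∈ Finset.Icc 1 (N - 1), (-1:ℝ) ^ (n + 1) *
            (Real.sin (n * Real.pi / N) ^ (2 * s) / Real.sin (n * Real.pi / N) ^ (2 * m)))) := by
    rw [Finset.range_eq_Ico, ← Finset.sum_Ico_consecutive _ (Nat.zero_le (m + 1))
      (by omega : m + 1 ≤ M + 1), Finset.range_eq_Ico]
  have hgt : ∀ s ∈ Finset.Ico (m + 1) (M + 1), ((-1:ℝ) ^ s * cR M s *
          (∑ n ∈ Finset.Icc 1 (N - 1), (-1:ℝ) ^ (n + 1) *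
            (Real.sin (n * Real.pi / N) ^ (2 * s) / Real.sin (n * Real.pi / N) ^ (2 * m)))) = 0 := by
    intro s hs
    obtain ⟨hs1, hs2⟩ := Finset.mem_Ico.mp hs
    have hinner : (∑ n ∈ Finset.Icc 1 (N - 1), (-1:ℝ) ^ (n + 1) *
        (Real.sin (n * Real.pi / N) ^ (2 * s) / Real.sin (n * Real.pi / N) ^ (2 * m))) = 0 := by
      have hc : ∀ n ∈ Finset.Icc 1 (N - 1), (-1:ℝ) ^ (n + 1) *
          (Real.sin (n * Real.pi / N) ^ (2 * s) / Real.sin (n * Real.pi / N) ^ (2 * m))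
          = (-1:ℝ) ^ (n + 1) * Real.sin (n * Real.pi / N) ^ (2 * (s - m)) := by
        intro n hn
        have hne : Real.sin (n * Real.pi / N) ^ (2 * m) ≠ 0 :=
          pow_ne_zero _ (hsin0 n hn)
        have hpowsplit : Real.sin (n * Real.pi / N) ^ (2 * s)
            = Real.sin (n * Real.pi / N) ^ (2 * m) * Real.sin (n * Real.pi / N) ^ (2 * (s - m)) := by
          rw [← pow_add]
          congr 1
          omega
        rw [hpowsplit, mul_comm (Real.sin (n * Real.pi / N) ^ (2 * m)) _, mul_div_assoc,
            div_self hne, mul_one]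
      rw [Finset.sum_congr rfl hc]
      exact altsum_zero N (s - m) ⟨p, hp⟩ (by omega) (by omega)
    rw [hinner, mul_zero]
  have hIco0 : (∑ s ∈ Finset.Ico (m + 1) (M + 1), ((-1:ℝ) ^ s * cR M s *
          (∑ n ∈ Finset.Icc 1 (N - 1), (-1:ℝ) ^ (n + 1) *
            (Real.sin (n * Real.pi / N) ^ (2 * s) / Real.sin (n * Real.pi / N) ^ (2 * m))))) = 0 :=
    Finset.sum_eq_zero hgt
  have hBm : (∑ n ∈ Finset.Icc 1 (N - 1), (-1:ℝ) ^ (n + 1) *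
        (Real.sin (n * Real.pi / N) ^ (2 * m) / Real.sin (n * Real.pi / N) ^ (2 * m))) = 1 := by
    have hc : ∀ n ∈ Finset.Icc 1 (N - 1), (-1:ℝ) ^ (n + 1) *
        (Real.sin (n * Real.pi / N) ^ (2 * m) / Real.sin (n * Real.pi / N) ^ (2 * m))
        = (-1:ℝ) ^ (n + 1) := by
      intro n hn
      rw [div_self (pow_ne_zero _ (hsin0 n hn)), mul_one]
    rw [Finset.sum_congr rfl hc]
    exact alt_one hN ⟨p, hp⟩
  have hBlt : ∀ s ∈ range m, (∑ n ∈ Finset.Icc 1 (N - 1), (-1:ℝ) ^ (n + 1) *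
        (Real.sin (n * Real.pi / N) ^ (2 * s) / Real.sin (n * Real.pi / N) ^ (2 * m)))
      = ∑ n ∈ Finset.Icc 1 (N - 1), (-1:ℝ) ^ (n + 1) /
          Real.sin (n * Real.pi / N) ^ (2 * (m - s)) := by
    intro s hs
    have hsm : s < m := Finset.mem_range.mp hs
    refine Finset.sum_congr rfl fun n hn => ?_
    have hne : Real.sin (n * Real.pi / N) ^ (2 * s) ≠ 0 := pow_ne_zero _ (hsin0 n hn)
    have hpowsplit : Real.sin (n * Real.pi / N) ^ (2 * m)
        = Real.sin (n * Real.pi / N) ^ (2 * s) * Real.sin (n * Real.pi / N) ^ (2 * (m - s)) := by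
      rw [← pow_add]
      congr 1
      omega
    rw [hpowsplit, div_mul_eq_div_div, div_self hne]
    ring
  -- combine into the master equation
  rw [hsplit, hIco0, add_zero, Finset.sum_range_succ, hBm] at E
  have hBlt2 : (∑ x ∈ range m, ((-1:ℝ) ^ x * cR M x *
        ∑ n ∈ Finset.Icc 1 (N - 1), (-1:ℝ) ^ (n + 1) *
          (Real.sin (n * Real.pi / N) ^ (2 * x) / Real.sin (n * Real.pi / N) ^ (2 * m))))
      = ∑ x ∈ range m, ((-1:ℝ) ^ x * cR M x *
        ∑ n ∈ Finset.Icc 1 (N - 1), (-1:ℝ) ^ (n + 1) /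
          Real.sin (n * Real.pi / N) ^ (2 * (m - x))) :=
    Finset.sum_congr rfl fun s hs => by rw [hBlt s hs]
  rw [hBlt2] at E
  -- peel off s = 0
  have hpeel := Finset.sum_range_succ' (fun s => ((-1:ℝ) ^ s * cR M s *
      (∑ n ∈ Finset.Icc 1 (N - 1), (-1:ℝ) ^ (n + 1) /
        Real.sin (n * Real.pi / N) ^ (2 * (m - s))))) (m - 1)
  rw [show m - 1 + 1 = m from by omega] at hpeel
  rw [hpeel, cR_zero hM1] at E
  simp only [pow_zero, one_mul, Nat.sub_zero] at E
  -- transform the target sum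
  have hIcc : Finset.Icc 1 (m - 1) = Finset.Ico 1 m := by
    rw [← Finset.Ico_add_one_right_eq_Icc]
    congr 1
    omega
  have htarget : (∑ s ∈ Finset.Icc 1 (m - 1),
        (-1 : ℝ) ^ (s + 1) * (((M : ℕ) : ℝ) / (((M : ℕ) : ℝ) + s)) *
          (Nat.choose (M + s) (M - s)) * 2 ^ (2 * s) *
          (∑ n ∈ Finset.Icc 1 (N - 1), (-1 : ℝ) ^ (n + 1) /
            (Real.sin (n * Real.pi / N)) ^ (2 * (m - s))))
      = -(∑ i ∈ range (m - 1), ((-1:ℝ) ^ (i + 1) * cR M (i + 1) *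
          (∑ n ∈ Finset.Icc 1 (N - 1), (-1:ℝ) ^ (n + 1) /
            Real.sin (n * Real.pi / N) ^ (2 * (m - (i + 1)))))) := by
    rw [hIcc, Finset.sum_Ico_eq_sum_range, ← Finset.sum_neg_distrib]
    rw [show m - 1 = m - 1 from rfl]
    refine Finset.sum_congr rfl fun i hi => ?_
    have hi1 : i < m - 1 := Finset.mem_range.mp hi
    rw [show 1 + i = i + 1 from by omega]
    rw [← coeff_eq M (i + 1) (by omega) (by omega)]
    rw [show (-1:ℝ) ^ (i + 1 + 1) = -(-1:ℝ) ^ (i + 1) from by rw [pow_succ]; ring]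
    ring
  have hconst : (-1 : ℝ) ^ (m + 1) * 2 ^ (2 * m) *
          ((Nat.factorial (M + m - 1) : ℝ) /
            ((Nat.factorial (M - m) : ℝ) * (Nat.factorial (2 * m) : ℝ))) * ((M : ℕ) : ℝ)
      = -((-1:ℝ) ^ m * cR M m) := by
    rw [cR, if_pos hmM]
    rw [show (-1:ℝ) ^ (m + 1) = -(-1:ℝ) ^ m from by rw [pow_succ]; ring]
    rw [show (2:ℝ) ^ (2 * m) = 4 ^ m from by rw [pow_mul]; norm_num]
    ring
  rw [htarget, hconst]
  linarith [E]
end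

section
/- For every positive even integer N, one has Σ_{n=1}^{N-1} (−1)^{n+1} / sin⁴(n π/N) = ( 7N⁴ + 40N² + 88 ) / 360. -/
open Real Finset

noncomputable def QQ (N : ℕ) (x : ℂ) : ℂ :=
  (-2) * (x ^ 4 - (2 * (N : ℂ) - 8) * x ^ 3
    + ((N : ℂ) ^ 2 - 12 * (N : ℂ) + 22) * x ^ 2 + (4 * (N : ℂ) ^ 2 - 22 * (N : ℂ) + 24) * x)

lemma shift_sum (N : ℕ) (ω : ℂ) (hω : ω ^ N = 1) (g : ℂ → ℂ) :
    ω * ∑ k ∈ Finset.range N, g k * ω ^ k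
      = (∑ k ∈ Finset.range N, g ((k : ℂ) - 1) * ω ^ k) + g ((N : ℂ) - 1) - g (-1) := by
  have h1 : ω * ∑ k ∈ Finset.range N, g k * ω ^ k
      = ∑ k ∈ Finset.range N, g (((k + 1 : ℕ) : ℂ) - 1) * ω ^ (k + 1) := by
    rw [Finset.mul_sum]
    refine Finset.sum_congr rfl fun k _ => ?_
    have hc : (((k + 1 : ℕ) : ℂ) - 1) = (k : ℂ) := by push_cast; ring
    rw [hc]; ring
  have h2 := Finset.sum_range_succ' (fun k => g ((k : ℂ) - 1) * ω ^ k) N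
  rw [Finset.sum_range_succ] at h2
  simp only [Nat.cast_zero, zero_sub, pow_zero, mul_one, hω] at h2
  rw [h1]
  linear_combination -h2

lemma sum_quartic (c4 c3 c2 c1 : ℂ) (n : ℕ) :
    ∑ k ∈ Finset.range n, (c4 * (k : ℂ) ^ 4 + c3 * (k : ℂ) ^ 3 + c2 * (k : ℂ) ^ 2 + c1 * (k : ℂ))
      = c4 * ((n : ℂ) ^ 5 / 5 - (n : ℂ) ^ 4 / 2 + (n : ℂ) ^ 3 / 3 - (n : ℂ) / 30)
        + c3 * ((n : ℂ) ^ 4 / 4 - (n : ℂ) ^ 3 / 2 + (n : ℂ) ^ 2 / 4)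
        + c2 * ((n : ℂ) ^ 3 / 3 - (n : ℂ) ^ 2 / 2 + (n : ℂ) / 6)
        + c1 * ((n : ℂ) ^ 2 / 2 - (n : ℂ) / 2) := by
  induction n with
  | zero => simp
  | succ n ih => rw [Finset.sum_range_succ, ih]; push_cast; ring

lemma key_lemma (N : ℕ) (ω : ℂ) (hωN : ω ^ N = 1) (hω1 : ω ≠ 1) :
    (ω - 1) ^ 4 * ∑ k ∈ Finset.range N, QQ N (k : ℂ) * ω ^ k = 48 * (N : ℂ) := by
  have hgeom : ∑ k ∈ Finset.range N, ω ^ k = 0 := by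
    rw [geom_sum_eq hω1, hωN]; simp
  have hc1 : QQ N ((N : ℂ) - 1) - QQ N (-1) = 0 := by
    simp only [QQ]; ring
  have hc2 : QQ N ((N : ℂ) - 1 - 1) - QQ N (-1 - 1) = 0 := by
    simp only [QQ]; ring
  have hc3 : QQ N ((N : ℂ) - 1 - 1 - 1) - QQ N (-1 - 1 - 1) = 0 := by
    simp only [QQ]; ring
  have hc4 : QQ N ((N : ℂ) - 1 - 1 - 1 - 1) - QQ N (-1 - 1 - 1 - 1) = 48 * (N : ℂ) := by
    simp only [QQ]; ring
  have hS0 := shift_sum N ω hωN (fun x => QQ N x)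
  have hS1 := shift_sum N ω hωN (fun x => QQ N (x - 1))
  have hS2 := shift_sum N ω hωN (fun x => QQ N (x - 1 - 1))
  have hS3 := shift_sum N ω hωN (fun x => QQ N (x - 1 - 1 - 1))
  set F0 := ∑ k ∈ Finset.range N, QQ N (k : ℂ) * ω ^ k with hF0
  set F1 := ∑ k ∈ Finset.range N, QQ N ((k : ℂ) - 1) * ω ^ k with hF1
  set F2 := ∑ k ∈ Finset.range N, QQ N ((k : ℂ) - 1 - 1) * ω ^ k with hF2
  set F3 := ∑ k ∈ Finset.range N, QQ N ((k : ℂ) - 1 - 1 - 1) * ω ^ k with hF3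
  set F4 := ∑ k ∈ Finset.range N, QQ N ((k : ℂ) - 1 - 1 - 1 - 1) * ω ^ k with hF4
  have hE0 : ω * F0 = F1 := by linear_combination hS0 + hc1
  have hE1 : ω * F1 = F2 := by linear_combination hS1 + hc2
  have hE2 : ω * F2 = F3 := by linear_combination hS2 + hc3
  have hE3 : ω * F3 = F4 + 48 * (N : ℂ) := by linear_combination hS3 + hc4
  have hcomb : F4 - 4 * F3 + 6 * F2 - 4 * F1 + F0 = 0 := by
    have hpt : ∀ k ∈ Finset.range N,
        QQ N ((k : ℂ) - 1 - 1 - 1 - 1) * ω ^ k - 4 * (QQ N ((k : ℂ) - 1 - 1 - 1) * ω ^ k)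
          + 6 * (QQ N ((k : ℂ) - 1 - 1) * ω ^ k) - 4 * (QQ N ((k : ℂ) - 1) * ω ^ k)
          + QQ N (k : ℂ) * ω ^ k = (-48) * ω ^ k := by
      intro k _
      simp only [QQ]; ring
    calc F4 - 4 * F3 + 6 * F2 - 4 * F1 + F0
        = ∑ k ∈ Finset.range N,
            (QQ N ((k : ℂ) - 1 - 1 - 1 - 1) * ω ^ k - 4 * (QQ N ((k : ℂ) - 1 - 1 - 1) * ω ^ k)
              + 6 * (QQ N ((k : ℂ) - 1 - 1) * ω ^ k) - 4 * (QQ N ((k : ℂ) - 1) * ω ^ k)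
              + QQ N (k : ℂ) * ω ^ k) := by
          rw [hF0, hF1, hF2, hF3, hF4]
          simp only [Finset.mul_sum, ← Finset.sum_sub_distrib, ← Finset.sum_add_distrib]
      _ = ∑ k ∈ Finset.range N, (-48 : ℂ) * ω ^ k := Finset.sum_congr rfl hpt
      _ = (-48 : ℂ) * ∑ k ∈ Finset.range N, ω ^ k := by rw [Finset.mul_sum]
      _ = 0 := by rw [hgeom, mul_zero]
  linear_combination (ω ^ 3 - 4 * ω ^ 2 + 6 * ω - 4) * hE0 + (ω ^ 2 - 4 * ω + 6) * hE1
    + (ω - 4) * hE2 + hE3 + hcomb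

theorem twisted_T4 (N : ℕ) (hN : 0 < N) (hNeven : Even N) :
    ∑ n ∈ Finset.Icc 1 (N - 1), (-1 : ℝ) ^ (n + 1) / (Real.sin (n * Real.pi / N)) ^ 4
    = (7 * (N : ℝ) ^ 4 + 40 * (N : ℝ) ^ 2 + 88) / 360 := by
  obtain ⟨m, hm⟩ := hNeven
  rcases Nat.lt_or_ge m 2 with hm2 | hm2
  · -- N = 2
    have hm1 : m = 1 := by omega
    subst hm1
    subst hm
    rw [show (1+1-1 : ℕ) = 1 from rfl, Finset.Icc_self, Finset.sum_singleton]
    rw [show ((1:ℕ):ℝ)*π/((1+1:ℕ):ℝ) = π/2 by norm_num]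
    rw [Real.sin_pi_div_two]
    norm_num
  · -- main case : m ≥ 2
    have hm0 : (m:ℂ) ≠ 0 := Nat.cast_ne_zero.mpr (by omega)
    have hNne : N ≠ 0 := by omega
    have hNC : (N:ℂ) ≠ 0 := Nat.cast_ne_zero.mpr hNne
    have h3N : (3:ℂ) * (N:ℂ) ≠ 0 := by simp [hNC]
    have hN2 : (N:ℂ) = 2*(m:ℂ) := by rw [hm]; push_cast; ring
    set ζ : ℂ := Complex.exp (2*π*Complex.I/N) with hζdef
    have hζ : IsPrimitiveRoot ζ N := Complex.isPrimitiveRoot_exp N hNne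
    have hζm : ζ^m = -1 := by
      rw [hζdef, ← Complex.exp_nat_mul]
      rw [show (m:ℂ) * (2*(π:ℂ)*Complex.I/(N:ℂ)) = (π:ℂ)*Complex.I by
        rw [hN2, mul_div_assoc', div_eq_iff (by simpa using hm0 : 2*(m:ℂ) ≠ 0)]; ring]
      exact Complex.exp_pi_mul_I
    have hterm : ∀ n ∈ Finset.Icc 1 (N-1),
        (-1:ℂ)^(n+1) / ((Real.sin ((n:ℝ)*π/(N:ℝ)) : ℝ) : ℂ)^4 * (3*(N:ℂ))
          = ∑ k ∈ Finset.range N, (-QQ N (k:ℂ)) * (ζ^(k+(m+2)))^n := by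
      intro n hn
      rw [Finset.mem_Icc] at hn
      obtain ⟨hn1, hn2⟩ := hn
      have hnN : n < N := by omega
      set ω := ζ^n with hω
      have hωN : ω^N = 1 := by
        rw [hω, ← pow_mul, Nat.mul_comm, pow_mul, hζ.pow_eq_one, one_pow]
      have hω1 : ω ≠ 1 := hζ.pow_ne_one_of_pos_of_lt (by omega) hnN
      have hω0 : ω ≠ 0 := pow_ne_zero _ (Complex.exp_ne_zero _)
      set θ : ℝ := (n:ℝ)*π/(N:ℝ) with hθ
      have hn0 : (0:ℝ) < n := by exact_mod_cast hn1
      have hN0 : (0:ℝ) < N := by exact_mod_cast hN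
      have hθpos : 0 < θ := by rw [hθ]; positivity
      have hθlt : θ < π := by
        rw [hθ, div_lt_iff₀ hN0]
        have h : (n:ℝ) < N := by exact_mod_cast hnN
        nlinarith [Real.pi_pos]
      have hsinpos : 0 < Real.sin θ := Real.sin_pos_of_pos_of_lt_pi hθpos hθlt
      have hs : ((Real.sin θ : ℝ) : ℂ) ≠ 0 := by exact_mod_cast hsinpos.ne'
      have he : Complex.exp ((θ:ℂ)*Complex.I)^2 = ω := by
        rw [hω, hζdef, ← Complex.exp_nat_mul, ← Complex.exp_nat_mul]
        congr 1
        rw [hθ]; push_cast; ring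
      have hinv : Complex.exp ((θ:ℂ)*Complex.I) * Complex.exp (-(θ:ℂ)*Complex.I) = 1 := by
        rw [← Complex.exp_add, show ((θ:ℂ)*Complex.I + -(θ:ℂ)*Complex.I) = 0 by ring,
          Complex.exp_zero]
      have hsin : Complex.exp ((θ:ℂ)*Complex.I) - Complex.exp (-(θ:ℂ)*Complex.I)
          = 2*((Real.sin θ : ℝ):ℂ)*Complex.I := by
        have h1 : Complex.exp (-(θ:ℂ)*Complex.I) = Complex.cos θ - Complex.sin θ * Complex.I := by
          rw [show (-(θ:ℂ)*Complex.I) = (-θ:ℂ)*Complex.I by ring, Complex.exp_mul_I,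
            Complex.cos_neg, Complex.sin_neg]
          ring
        rw [Complex.exp_mul_I, h1, Complex.ofReal_sin]; ring
      have hss : (Complex.exp ((θ:ℂ)*Complex.I) - Complex.exp (-(θ:ℂ)*Complex.I))^2
          = -4*((Real.sin θ : ℝ):ℂ)^2 := by
        rw [hsin, show (2*((Real.sin θ : ℝ):ℂ)*Complex.I)^2
          = 4*((Real.sin θ : ℝ):ℂ)^2*Complex.I^2 by ring, Complex.I_sq]
        ring
      have h4 : ω - 1 = Complex.exp ((θ:ℂ)*Complex.I)
          * (Complex.exp ((θ:ℂ)*Complex.I) - Complex.exp (-(θ:ℂ)*Complex.I)) := by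
        rw [← he]; linear_combination hinv
      have hquart : (ω - 1)^4 = ω^2 * (16*((Real.sin θ : ℝ):ℂ)^4) := by
        calc (ω-1)^4 = ((ω-1)^2)^2 := by ring
          _ = (Complex.exp ((θ:ℂ)*Complex.I)^2
              * ((Complex.exp ((θ:ℂ)*Complex.I) - Complex.exp (-(θ:ℂ)*Complex.I))^2))^2 := by
              rw [h4]; ring
          _ = (ω * (-4*((Real.sin θ : ℝ):ℂ)^2))^2 := by rw [hss, he]
          _ = ω^2 * (16*((Real.sin θ : ℝ):ℂ)^4) := by ring
      have hkey := key_lemma N ω hωN hω1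
      have hωsub : ω - 1 ≠ 0 := sub_ne_zero.mpr hω1
      have hF : ∑ k ∈ Finset.range N, QQ N (k:ℂ) * ω^k = 48*(N:ℂ) / (ω-1)^4 := by
        rw [eq_div_iff (pow_ne_zero 4 hωsub)]; linear_combination hkey
      have hsum : ∑ k ∈ Finset.range N, (-QQ N (k:ℂ)) * (ζ^(k+(m+2)))^n
          = -ω^(m+2) * ∑ k ∈ Finset.range N, QQ N (k:ℂ) * ω^k := by
        rw [Finset.mul_sum]
        refine Finset.sum_congr rfl fun k _ => ?_
        rw [show (ζ^(k+(m+2)))^n = ω^(k+(m+2)) by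
          rw [hω, ← pow_mul, ← pow_mul, Nat.mul_comm], pow_add]
        ring
      rw [hsum, hF, hquart]
      have hωm : ω^m = (-1)^n := by
        rw [hω, ← pow_mul, Nat.mul_comm, pow_mul, hζm]
      rw [show ω^(m+2) = ω^m * ω^2 from pow_add ω m 2, hωm]
      clear_value ω θ
      have hww : ω^2 * ω⁻¹^2 = (1:ℂ) := by rw [← mul_pow, mul_inv_cancel₀ hω0, one_pow]
      field_simp
      ring
    -- the complex-valued sum
    have main : (∑ n ∈ Finset.Icc 1 (N-1),
          ((-1:ℂ)^(n+1) / ((Real.sin ((n:ℝ)*π/(N:ℝ)) : ℝ) : ℂ)^4)) * (3*(N:ℂ))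
        = (7*(N:ℂ)^4 + 40*(N:ℂ)^2 + 88)/360 * (3*(N:ℂ)) := by
      rw [Finset.sum_mul]
      rw [Finset.sum_congr rfl hterm, Finset.sum_comm]
      have hIcc : Finset.Icc 1 (N-1) = Finset.range N \ {0} := by
        ext x
        simp only [Finset.mem_Icc, Finset.mem_sdiff, Finset.mem_range, Finset.mem_singleton]
        omega
      have hdvd : ∀ k, k < N → (N ∣ k + (m+2) ↔ k = m - 2) := by
        intro k hk
        constructor
        · rintro ⟨c, hc⟩
          have hcl : N*c < N*2 := by rw [← hc]; omega
          have hc2 : c < 2 := Nat.lt_of_mul_lt_mul_left hcl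
          have hc0 : c ≠ 0 := by rintro rfl; omega
          have hc1 : c = 1 := by omega
          subst hc1; omega
        · rintro rfl; exact ⟨1, by omega⟩
      have hinner : ∀ k ∈ Finset.range N,
          ∑ n ∈ Finset.Icc 1 (N-1), (ζ^(k+(m+2)))^n = (if k = m-2 then (N:ℂ) else 0) - 1 := by
        intro k hk
        rw [hIcc, Finset.sum_sdiff_eq_sub (Finset.singleton_subset_iff.mpr
          (Finset.mem_range.mpr hN)), Finset.sum_singleton, pow_zero]
        congr 1
        by_cases hkm : k = m - 2
        · subst hkm
          have h1 : ζ^(m-2+(m+2)) = 1 := by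
            rw [show m-2+(m+2) = N by omega, hζ.pow_eq_one]
          simp [h1]
        · have hnd : ¬ N ∣ k + (m+2) := fun h => hkm ((hdvd k (Finset.mem_range.mp hk)).mp h)
          have hμ1 : ζ^(k+(m+2)) ≠ 1 := by
            rw [Ne, hζ.pow_eq_one_iff_dvd]; exact hnd
          have hμN : (ζ^(k+(m+2)))^N = 1 := by
            rw [← pow_mul, Nat.mul_comm, pow_mul, hζ.pow_eq_one, one_pow]
          rw [geom_sum_eq hμ1, hμN, if_neg hkm]; simp
      calc ∑ k ∈ Finset.range N, ∑ n ∈ Finset.Icc 1 (N-1), (-QQ N (k:ℂ)) * (ζ^(k+(m+2)))^n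
          = ∑ k ∈ Finset.range N, (-QQ N (k:ℂ)) * ((if k = m-2 then (N:ℂ) else 0) - 1) := by
            refine Finset.sum_congr rfl fun k hk => ?_
            rw [← Finset.mul_sum, hinner k hk]
        _ = ∑ k ∈ Finset.range N, ((if k = m-2 then (-QQ N (k:ℂ))*(N:ℂ) else 0) + QQ N (k:ℂ)) := by
            refine Finset.sum_congr rfl fun k _ => ?_
            by_cases h : k = m-2 <;> simp [h] <;> ring
        _ = (-QQ N ((m-2:ℕ):ℂ))*(N:ℂ) + ∑ k ∈ Finset.range N, QQ N (k:ℂ) := by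
            rw [Finset.sum_add_distrib, Finset.sum_ite_eq' (Finset.range N) (m-2)
              (fun k => (-QQ N (k:ℂ))*(N:ℂ)), if_pos (Finset.mem_range.mpr (by omega))]
        _ = (7*(N:ℂ)^4 + 40*(N:ℂ)^2 + 88)/360 * (3*(N:ℂ)) := by
            have hexp : ∑ k ∈ Finset.range N, QQ N (k:ℂ)
                = ∑ k ∈ Finset.range N, ((-2:ℂ) * (k:ℂ)^4
                  + ((-2:ℂ) * (-(2*(N:ℂ)-8))) * (k:ℂ)^3
                  + ((-2:ℂ) * ((N:ℂ)^2-12*(N:ℂ)+22)) * (k:ℂ)^2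
                  + ((-2:ℂ) * (4*(N:ℂ)^2-22*(N:ℂ)+24)) * (k:ℂ)) :=
              Finset.sum_congr rfl fun k _ => by simp only [QQ]; ring
            rw [hexp, sum_quartic]
            have hcast : ((m-2:ℕ):ℂ) = (m:ℂ) - 2 := by
              rw [Nat.cast_sub hm2]; norm_num
            rw [hcast]
            simp only [QQ]
            rw [hN2]
            field_simp
            ring
    have main2 : ∑ n ∈ Finset.Icc 1 (N-1),
          ((-1:ℂ)^(n+1) / ((Real.sin ((n:ℝ)*π/(N:ℝ)) : ℝ) : ℂ)^4)
        = (7*(N:ℂ)^4 + 40*(N:ℂ)^2 + 88)/360 :=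
      mul_right_cancel₀ h3N main
    rw [← Complex.ofReal_inj]
    push_cast
    push_cast at main2
    exact main2
end

section
/- For every integer N ≥ 1, one has Σ_{n=1}^{N-1} 1 / ( 1 − (2/3) cos²( n π/(2N) ) ) = −2 + 6N (2−√3)^{2N} / ( √3 ( 1 − (2−√3)^{2N} ) ) + √3 · N. -/
open Real Finset
set_option maxHeartbeats 1000000

private lemma sumA {M : ℕ} (hM : 0 < M) {ζ x : ℂ} (hζ : IsPrimitiveRoot ζ M) (hx : x ^ M ≠ 1) :
    ∑ i ∈ Finset.range M, 1 / (x - ζ ^ i) = M * x ^ (M - 1) / (x ^ M - 1) := by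
  have hζM : ζ ^ M = 1 := hζ.pow_eq_one
  have hD : x ^ M - 1 ≠ 0 := sub_ne_zero.mpr hx
  have hne : ∀ i, x - ζ ^ i ≠ 0 := by
    intro i h
    apply hx
    rw [sub_eq_zero] at h
    rw [h, ← pow_mul, mul_comm, pow_mul, hζM, one_pow]
  have step1 : ∀ i, 1 / (x - ζ ^ i)
      = (∑ k ∈ Finset.range M, x ^ k * (ζ ^ i) ^ (M - 1 - k)) / (x ^ M - 1) := by
    intro i
    rw [div_eq_div_iff (hne i) hD, one_mul, geom_sum₂_mul,
      ← pow_mul, mul_comm i M, pow_mul, hζM, one_pow]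
  simp only [step1, ← Finset.sum_div]
  congr 1
  rw [Finset.sum_comm]
  have inner : ∀ k ∈ Finset.range M, (∑ i ∈ Finset.range M, x ^ k * (ζ ^ i) ^ (M - 1 - k))
      = if k = M - 1 then (M : ℂ) * x ^ (M - 1) else 0 := by
    intro k hk
    simp only [Finset.mem_range] at hk
    by_cases h : k = M - 1
    · subst h
      simp [Nat.sub_self, mul_comm]
    · have h1 : 0 < M - 1 - k := by omega
      have h2 : M - 1 - k < M := by omega
      have hz : ζ ^ (M - 1 - k) ≠ 1 := hζ.pow_ne_one_of_pos_of_lt h1.ne' h2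
      have key : ∑ i ∈ Finset.range M, (ζ ^ i) ^ (M - 1 - k) = 0 := by
        have e1 : ∑ i ∈ Finset.range M, (ζ ^ i) ^ (M - 1 - k)
            = ∑ i ∈ Finset.range M, (ζ ^ (M - 1 - k)) ^ i :=
          Finset.sum_congr rfl fun i _ => by rw [← pow_mul, mul_comm, pow_mul]
        rw [e1, geom_sum_eq hz, ← pow_mul, mul_comm, pow_mul, hζM, one_pow, sub_self, zero_div]
      rw [← Finset.mul_sum, key, mul_zero, if_neg h]
  rw [Finset.sum_congr rfl inner, Finset.sum_ite_eq' (Finset.range M)]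
  simp [Nat.sub_lt hM]

private lemma termB (θ : ℝ) :
    ((3 / (2 - Real.cos θ) : ℝ) : ℂ)
      = (Real.sqrt 3 : ℂ) * (Complex.exp (θ * Complex.I) / (Complex.exp (θ * Complex.I) - (2 - (Real.sqrt 3:ℂ)))
        - Complex.exp (θ * Complex.I) / (Complex.exp (θ * Complex.I) - (2 + (Real.sqrt 3:ℂ)))) := by
  set s : ℂ := (Real.sqrt 3 : ℂ) with hs
  set z : ℂ := Complex.exp (θ * Complex.I) with hzdef
  have h3 : s ^ 2 = 3 := by
    rw [hs, ← Complex.ofReal_pow, Real.sq_sqrt (by norm_num : (3:ℝ) ≥ 0)]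
    norm_num
  have hz0 : z ≠ 0 := Complex.exp_ne_zero _
  have habs : ‖z‖ = 1 := Complex.norm_exp_ofReal_mul_I θ
  have hs13 : (1:ℝ) < Real.sqrt 3 := by
    have := Real.lt_sqrt (x := 1) (y := 3) (by norm_num)
    rw [this]; norm_num
  have hs2 : Real.sqrt 3 < 2 := by
    nlinarith [Real.sq_sqrt (by norm_num : (3:ℝ) ≥ 0), Real.sqrt_nonneg 3]
  have hP : z - (2 - s) ≠ 0 := by
    intro h
    rw [sub_eq_zero] at h
    have : ‖z‖ = |2 - Real.sqrt 3| := by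
      rw [h, hs]; rw [show (2:ℂ) - (Real.sqrt 3:ℂ) = ((2 - Real.sqrt 3 : ℝ):ℂ) by push_cast; ring,
        Complex.norm_real, Real.norm_eq_abs]
    rw [habs] at this
    rw [abs_of_pos (by linarith)] at this
    linarith
  have hQ : z - (2 + s) ≠ 0 := by
    intro h
    rw [sub_eq_zero] at h
    have : ‖z‖ = |2 + Real.sqrt 3| := by
      rw [h, hs]; rw [show (2:ℂ) + (Real.sqrt 3:ℂ) = ((2 + Real.sqrt 3 : ℝ):ℂ) by push_cast; ring,
        Complex.norm_real, Real.norm_eq_abs]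
    rw [habs, abs_of_pos (by linarith)] at this
    linarith
  have hcosR : (2:ℝ) - Real.cos θ ≠ 0 := by
    have := Real.cos_le_one θ; intro h; linarith
  have hcos : ((Real.cos θ : ℝ) : ℂ) = (z + z⁻¹) / 2 := by
    rw [Complex.ofReal_cos, Complex.cos, hzdef, ← Complex.exp_neg]
    ring_nf
  have hden : (2:ℂ) - (Real.cos θ : ℝ) ≠ 0 := by
    rw [show (2:ℂ) - ((Real.cos θ:ℝ):ℂ) = (((2 - Real.cos θ : ℝ)):ℂ) by push_cast; ring]
    exact_mod_cast Complex.ofReal_ne_zero.mpr hcosR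
  push_cast
  rw [Complex.ofReal_cos] at hden
  rw [show Complex.cos (θ:ℂ) = (z + z⁻¹)/2 by rw [← Complex.ofReal_cos]; exact hcos] at hden ⊢
  have hq : z ^ 2 - 4 * z + 1 ≠ 0 := by
    intro h
    rcases mul_eq_zero.mp (show (z - (2 - s)) * (z - (2 + s)) = 0 by linear_combination h - h3) with h' | h'
    exacts [hP h', hQ h']
  rw [div_sub_div _ _ hP hQ, ← mul_div_assoc, div_eq_div_iff hden (mul_ne_zero hP hQ)]
  have hzinv : z * z⁻¹ = 1 := mul_inv_cancel₀ hz0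
  linear_combination (-3 - z^2 + 4*z - z*z⁻¹) * h3 + (-3) * hzinv

theorem kirchhoff_index_sum_2xN (N : ℕ) (hN : 1 ≤ N) :
    ∑ n ∈ Finset.Icc 1 (N - 1),
      1 / (1 - (2 / 3) * (Real.cos (n * Real.pi / (2 * N))) ^ 2)
    = -2 + 6 * (N : ℝ) * (2 - Real.sqrt 3) ^ (2 * N) /
        (Real.sqrt 3 * (1 - (2 - Real.sqrt 3) ^ (2 * N))) +
      Real.sqrt 3 * N := by
  have hNR : (N : ℝ) ≠ 0 := Nat.cast_ne_zero.mpr (by omega)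
  set g : ℕ → ℝ := fun n => 3 / (2 - Real.cos (n * π / N)) with hg
  -- basic sqrt facts
  have hs3 : Real.sqrt 3 ^ 2 = 3 := Real.sq_sqrt (by norm_num)
  have hs13 : (1:ℝ) < Real.sqrt 3 := by
    nlinarith [Real.sqrt_nonneg 3]
  have hs2 : Real.sqrt 3 < 2 := by
    nlinarith [Real.sqrt_nonneg 3]
  set r : ℝ := (2 - Real.sqrt 3) ^ (2 * N) with hrdef
  set u : ℝ := (2 + Real.sqrt 3) ^ (2 * N) with hudef
  have hr0 : 0 < r := pow_pos (by linarith) _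
  have hr1 : r < 1 := pow_lt_one₀ (by linarith) (by linarith) (by omega)
  have hu1 : 1 < u := one_lt_pow₀ (by linarith) (by omega)
  have hru : r * u = 1 := by
    rw [hrdef, hudef, ← mul_pow]
    have : (2 - Real.sqrt 3) * (2 + Real.sqrt 3) = 1 := by nlinarith
    rw [this, one_pow]
  -- Step 1: rewrite each summand
  have step1 : ∑ n ∈ Finset.Icc 1 (N - 1),
      1 / (1 - (2 / 3) * (Real.cos (n * Real.pi / (2 * N))) ^ 2)
      = ∑ n ∈ Finset.Icc 1 (N - 1), g n := by
    refine Finset.sum_congr rfl fun n _ => ?_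
    have hc2 : Real.cos ((n:ℝ) * π / N) = 2 * Real.cos ((n:ℝ) * π / (2 * N)) ^ 2 - 1 := by
      rw [show (n:ℝ) * π / N = 2 * ((n:ℝ) * π / (2 * N)) by field_simp, Real.cos_two_mul]
    have hb : Real.cos ((n:ℝ) * π / (2 * N)) ^ 2 ≤ 1 := by
      nlinarith [Real.neg_one_le_cos ((n:ℝ) * π / (2*N)), Real.cos_le_one ((n:ℝ) * π / (2*N))]
    have h1 : 1 - (2 / 3) * (Real.cos ((n:ℝ) * π / (2 * N))) ^ 2 ≠ 0 := by nlinarith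
    have h2 : 2 - Real.cos ((n:ℝ) * π / N) ≠ 0 := by
      have := Real.cos_le_one ((n:ℝ) * π / N); intro h; linarith
    rw [hg]
    rw [div_eq_div_iff h1 h2, hc2]
    ring
  rw [step1]
  -- reflection property
  have hrefl : ∀ n, n ≤ 2 * N → g (2 * N - n) = g n := by
    intro n hn
    have hcast : ((2 * N - n : ℕ) : ℝ) = 2 * N - n := by
      push_cast [Nat.cast_sub hn]; ring
    rw [hg]
    simp only [hcast]
    rw [show (2 * (N:ℝ) - n) * π / N = 2 * π - (n:ℝ) * π / N by field_simp,
      Real.cos_two_pi_sub]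
  -- Step 2: the big sum over range (2N)
  have hg0 : g 0 = 3 := by norm_num [hg]
  have hgN : g N = 1 := by
    show 3 / (2 - Real.cos ((N:ℝ) * π / N)) = 1
    rw [show (N:ℝ) * π / N = π by field_simp, Real.cos_pi]
    norm_num
  have split : ∑ n ∈ Finset.range (2 * N), g n
      = 4 + 2 * ∑ n ∈ Finset.Icc 1 (N - 1), g n := by
    have e0 : ∑ n ∈ Finset.range (2 * N), g n
        = ∑ n ∈ Finset.Ico 0 N, g n + ∑ n ∈ Finset.Ico N (2 * N), g n := by
      rw [Finset.range_eq_Ico, ← Finset.sum_Ico_consecutive g (Nat.zero_le N) (by omega)]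
    have e1 : ∑ n ∈ Finset.Ico N (2 * N), g n = ∑ n ∈ Finset.Ico 1 (N + 1), g n := by
      refine Finset.sum_nbij' (fun n => 2 * N - n) (fun n => 2 * N - n) ?_ ?_ ?_ ?_ ?_
      · intro a ha; simp only [Finset.mem_Ico] at *; omega
      · intro a ha; simp only [Finset.mem_Ico] at *; omega
      · intro a ha; simp only [Finset.mem_Ico] at ha; omega
      · intro a ha; simp only [Finset.mem_Ico] at ha; omega
      · intro a ha; simp only [Finset.mem_Ico] at ha
        rw [hrefl a (by omega)]
    have e2 : ∑ n ∈ Finset.Ico 0 N, g n = g 0 + ∑ n ∈ Finset.Ico 1 N, g n := by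
      rw [show Finset.Ico 0 N = insert 0 (Finset.Ico 1 N) by
          ext x; simp [Finset.mem_Ico]; omega,
        Finset.sum_insert (by simp)]
    have e3 : ∑ n ∈ Finset.Ico 1 (N + 1), g n = ∑ n ∈ Finset.Ico 1 N, g n + g N :=
      Finset.sum_Ico_succ_top (by omega) g
    have e4 : Finset.Ico 1 N = Finset.Icc 1 (N - 1) := by
      rw [← Finset.Ico_add_one_right_eq_Icc]
      congr 1
      omega
    rw [e0, e1, e2, e3, e4, hg0, hgN]
    ring
  -- Step 3: evaluate the big sum via roots of unity
  set s : ℂ := (Real.sqrt 3 : ℂ) with hs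
  set ζ : ℂ := Complex.exp (2 * (π:ℂ) * Complex.I / ((2 * N : ℕ) : ℂ)) with hζdef
  have hζ : IsPrimitiveRoot ζ (2 * N) := Complex.isPrimitiveRoot_exp (2 * N) (by omega)
  have hMne : (2 * N : ℕ) ≠ 0 := by omega
  have hPM : ((2:ℂ) - s) ^ (2 * N) = (r : ℝ) := by
    rw [hrdef]; push_cast; ring
  have hQM : ((2:ℂ) + s) ^ (2 * N) = (u : ℝ) := by
    rw [hudef]; push_cast; ring
  have hPne : ((2:ℂ) - s) ^ (2 * N) ≠ 1 := by
    rw [hPM]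
    intro h
    have : r = 1 := by exact_mod_cast h
    linarith
  have hQne : ((2:ℂ) + s) ^ (2 * N) ≠ 1 := by
    rw [hQM]
    intro h
    have : u = 1 := by exact_mod_cast h
    linarith
  have hexp : ∀ n : ℕ, Complex.exp (((n : ℝ) * π / N : ℝ) * Complex.I) = ζ ^ n := by
    intro n
    rw [hζdef, ← Complex.exp_nat_mul]
    congr 1
    push_cast
    field_simp
  have hzP : ∀ n : ℕ, ζ ^ n - (2 - s) ≠ 0 := by
    intro n h
    apply hPne
    rw [sub_eq_zero] at h
    rw [← h, ← pow_mul, mul_comm n (2*N), pow_mul, hζ.pow_eq_one, one_pow]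
  have hzQ : ∀ n : ℕ, ζ ^ n - (2 + s) ≠ 0 := by
    intro n h
    apply hQne
    rw [sub_eq_zero] at h
    rw [← h, ← pow_mul, mul_comm n (2*N), pow_mul, hζ.pow_eq_one, one_pow]
  have hterm : ∀ n : ℕ, ((g n : ℝ) : ℂ)
      = s * ((1 - (2 - s) * (1 / ((2 - s) - ζ ^ n))) - (1 - (2 + s) * (1 / ((2 + s) - ζ ^ n)))) := by
    intro n
    rw [hg]
    have := termB ((n : ℝ) * π / N)
    rw [hexp n] at this
    rw [this]
    congr 1
    have gen : ∀ a w : ℂ, w - a ≠ 0 → w / (w - a) = 1 - a * (1 / (a - w)) := by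
      intro a w h
      have h' : a - w ≠ 0 := fun hh => h (by linear_combination -hh)
      field_simp
      ring
    rw [gen _ _ (hzP n), gen _ _ (hzQ n)]
  have hbig : ((∑ n ∈ Finset.range (2 * N), g n : ℝ) : ℂ)
      = s * ((2 * N) / (1 - ((r:ℝ) : ℂ)) - (2 * N) / (1 - ((u:ℝ) : ℂ))) := by
    push_cast [Complex.ofReal_sum]
    calc ∑ n ∈ Finset.range (2 * N), ((g n : ℝ) : ℂ)
        = ∑ n ∈ Finset.range (2 * N),
            s * ((1 - (2 - s) * (1 / ((2 - s) - ζ ^ n))) - (1 - (2 + s) * (1 / ((2 + s) - ζ ^ n)))) :=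
          Finset.sum_congr rfl fun n _ => hterm n
      _ = s * (((2 * N : ℕ) - (2 - s) * ∑ n ∈ Finset.range (2 * N), 1 / ((2 - s) - ζ ^ n))
            - ((2 * N : ℕ) - (2 + s) * ∑ n ∈ Finset.range (2 * N), 1 / ((2 + s) - ζ ^ n))) := by
          rw [← Finset.mul_sum]
          congr 1
          simp only [Finset.sum_sub_distrib, ← Finset.mul_sum, Finset.sum_const,
            Finset.card_range, nsmul_eq_mul, mul_one]
      _ = s * (((2 * N : ℕ) - (2 - s) * ((2 * N : ℕ) * (2 - s) ^ (2 * N - 1) / ((2 - s) ^ (2 * N) - 1)))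
            - ((2 * N : ℕ) - (2 + s) * ((2 * N : ℕ) * (2 + s) ^ (2 * N - 1) / ((2 + s) ^ (2 * N) - 1)))) := by
          rw [sumA (by omega) hζ hPne, sumA (by omega) hζ hQne]
      _ = s * ((2 * N) / (1 - ((r:ℝ):ℂ)) - (2 * N) / (1 - ((u:ℝ):ℂ))) := by
          have hp1 : (2 - s) * (2 - s) ^ (2 * N - 1) = ((r:ℝ):ℂ) := by
            rw [← pow_succ', Nat.sub_add_cancel (by omega), hPM]
          have hq1 : (2 + s) * (2 + s) ^ (2 * N - 1) = ((u:ℝ):ℂ) := by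
            rw [← pow_succ', Nat.sub_add_cancel (by omega), hQM]
          have hrne : ((r:ℝ):ℂ) - 1 ≠ 0 := by
            rw [sub_ne_zero]
            intro h; have : r = 1 := by exact_mod_cast h
            linarith
          have hune : ((u:ℝ):ℂ) - 1 ≠ 0 := by
            rw [sub_ne_zero]
            intro h; have : u = 1 := by exact_mod_cast h
            linarith
          rw [hPM, hQM]
          rw [mul_div_assoc' (2 - s), mul_div_assoc' (2 + s), ← mul_assoc, ← mul_assoc,
            mul_comm ((2:ℂ) - s) ((2*N : ℕ):ℂ), mul_comm ((2:ℂ) + s) ((2*N : ℕ):ℂ),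
            mul_assoc, mul_assoc, hp1, hq1]
          have h1 : (1:ℂ) - ((r:ℝ):ℂ) ≠ 0 := fun h => hrne (by linear_combination -h)
          have h2 : (1:ℂ) - ((u:ℝ):ℂ) ≠ 0 := fun h => hune (by linear_combination -h)
          field_simp
          push_cast
          ring
  -- convert hbig to a real equation
  have hbigR : ∑ n ∈ Finset.range (2 * N), g n
      = Real.sqrt 3 * ((2 * N) / (1 - r) - (2 * N) / (1 - u)) := by
    have h1r : (1:ℝ) - r ≠ 0 := by linarith
    have h1u : (1:ℝ) - u ≠ 0 := by linarith
    apply Complex.ofReal_injective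
    rw [hbig]
    push_cast
    ring
  rw [split] at hbigR
  -- final algebra
  have h1r : (1:ℝ) - r ≠ 0 := by linarith
  have h1u : (1:ℝ) - u ≠ 0 := by linarith
  have hsne : Real.sqrt 3 ≠ 0 := by linarith
  have : ∑ n ∈ Finset.Icc 1 (N - 1), g n
      = (Real.sqrt 3 * ((2 * N) / (1 - r) - (2 * N) / (1 - u)) - 4) / 2 := by
    linarith
  rw [this]
  have hu2 : (2*(N:ℝ))/(1-u) = -(2*N*r)/(1-r) := by
    rw [div_eq_div_iff h1u h1r]
    linear_combination (-2*(N:ℝ))*hru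
  rw [hu2]
  rw [hrdef] at h1r ⊢
  field_simp
  ring_nf
  linear_combination (4*(N:ℝ)*((2-Real.sqrt 3)^(2*N))) * hs3
end

section
/- Let N be a positive even integer and l an integer with 0 ≤ l ≤ N/2. Then Σ_{n=1}^{N-1} (−1)^n · sin²(n l π/N) / sin²(n π/N) = −l². -/
open Real Finset

lemma cos_nat_pi (n : ℕ) : Real.cos (n * Real.pi) = (-1) ^ n := by
  simpa using Real.cos_nat_mul_pi_sub 0 n

lemma cos_sum (N m : ℕ) (hN0 : 0 < N) (hNe : Even N) (hm : 2 * m < N) :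
    ∑ n ∈ Finset.Icc 1 (N - 1), (-1 : ℝ) ^ n * Real.cos (2 * m * n * Real.pi / N) = -1 := by
  have hNR : (N : ℝ) ≠ 0 := Nat.cast_ne_zero.mpr hN0.ne'
  set θ : ℝ := ((2 * m + N : ℕ) : ℝ) * Real.pi / N with hθ
  set z : ℂ := Complex.exp (θ * Complex.I) with hz
  obtain ⟨q, hq⟩ := hNe
  have hzN : z ^ N = 1 := by
    rw [hz, ← Complex.exp_nat_mul]
    have harg : (N : ℂ) * (θ * Complex.I) = ((m + q : ℕ) : ℤ) * (2 * Real.pi * Complex.I) := by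
      rw [hθ]
      push_cast
      have hNC : (N : ℂ) ≠ 0 := Nat.cast_ne_zero.mpr hN0.ne'
      field_simp
      rw [hq]; push_cast; ring
    rw [harg, Complex.exp_int_mul_two_pi_mul_I]
  have hz1 : z ≠ 1 := by
    intro h
    rw [hz, Complex.exp_eq_one_iff] at h
    obtain ⟨k, hk⟩ := h
    have hI : (Complex.I : ℂ) ≠ 0 := Complex.I_ne_zero
    have h2 : (θ : ℂ) = (k : ℂ) * (2 * Real.pi) := by
      have := hk
      rw [show (k : ℂ) * (2 * Real.pi * Complex.I) = ((k : ℂ) * (2 * Real.pi)) * Complex.I by ring] at this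
      exact mul_right_cancel₀ hI this
    have h3 : θ = (k : ℝ) * (2 * Real.pi) := by
      exact_mod_cast h2
    rw [hθ] at h3
    have hπ : Real.pi ≠ 0 := Real.pi_ne_zero
    field_simp at h3
    have h4 : ((2 * m + N : ℕ) : ℝ) = (k : ℝ) * 2 * N := by
      apply mul_right_cancel₀ hπ
      push_cast
      push_cast at h3; linear_combination Real.pi * h3
    have h5 : ((2 * m + N : ℕ) : ℤ) = k * 2 * N := by exact_mod_cast h4
    have hN1 : (1 : ℤ) ≤ (N : ℤ) := by exact_mod_cast hN0
    have hmZ : 2 * (m : ℤ) < N := by exact_mod_cast hm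
    have h5' : 2 * (m : ℤ) + N = 2 * (k * N) := by push_cast at h5; linear_combination h5
    rcases le_or_gt k 0 with hk0 | hk0
    · have hkn : k * (N : ℤ) ≤ 0 := mul_nonpos_of_nonpos_of_nonneg hk0 (by positivity)
      linarith
    · have hkn : (N : ℤ) ≤ k * N := le_mul_of_one_le_left (by positivity) hk0
      linarith
  have hgeom : ∑ n ∈ Finset.range N, z ^ n = 0 := by
    rw [geom_sum_eq hz1, hzN]
    simp
  have hre : ∀ n : ℕ, (z ^ n).re = (-1 : ℝ) ^ n * Real.cos (2 * m * n * Real.pi / N) := by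
    intro n
    rw [hz, ← Complex.exp_nat_mul]
    have : (n : ℂ) * (θ * Complex.I) = ((n * θ : ℝ) : ℂ) * Complex.I := by push_cast; ring
    rw [this, Complex.exp_ofReal_mul_I_re]
    have harg : n * θ = 2 * m * n * Real.pi / N + n * Real.pi := by
      rw [hθ]; field_simp; push_cast; ring
    rw [harg, Real.cos_add, Real.sin_nat_mul_pi, cos_nat_pi]
    ring
  have hsumre : ∑ n ∈ Finset.range N, (-1 : ℝ) ^ n * Real.cos (2 * m * n * Real.pi / N) = 0 := by
    have := congrArg Complex.re hgeom
    rw [Complex.re_sum] at this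
    simpa [hre] using this
  have hsplit : ∑ n ∈ Finset.range N, (-1 : ℝ) ^ n * Real.cos (2 * m * n * Real.pi / N)
      = 1 + ∑ n ∈ Finset.Icc 1 (N - 1), (-1 : ℝ) ^ n * Real.cos (2 * m * n * Real.pi / N) := by
    rw [Finset.range_eq_Ico, Finset.sum_eq_sum_Ico_succ_bot hN0]
    have : Finset.Ico 1 N = Finset.Icc 1 (N - 1) := by
      rw [show N = (N - 1) + 1 by omega, Finset.Ico_add_one_right_eq_Icc]
      congr 1
    rw [this]
    norm_num
  linarith [hsumre, hsplit.symm ▸ hsumre]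
lemma trig_id (a x : ℝ) :
    Real.sin (a + x) ^ 2 + Real.sin (a - x) ^ 2 - 2 * Real.sin a ^ 2
      = 2 * Real.cos (2 * a) * Real.sin x ^ 2 := by
  rw [Real.sin_add, Real.sin_sub, Real.cos_two_mul]
  nlinarith [Real.sin_sq_add_cos_sq a, Real.sin_sq_add_cos_sq x]

lemma key (N : ℕ) (hN : 0 < N) (hNeven : Even N) :
    ∀ l : ℕ, l ≤ N / 2 →
    ∑ n ∈ Finset.Icc 1 (N - 1),
      (-1 : ℝ) ^ n * (Real.sin (n * l * Real.pi / N)) ^ 2 / (Real.sin (n * Real.pi / N)) ^ 2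
    = -(l : ℝ) ^ 2 := by
  have hNR : (0:ℝ) < N := by exact_mod_cast hN
  have hsin : ∀ n ∈ Finset.Icc 1 (N - 1), Real.sin (n * Real.pi / N) ≠ 0 := by
    intro n hn
    rw [Finset.mem_Icc] at hn
    have hn1 : (0:ℝ) < n := by exact_mod_cast (by omega : 0 < n)
    have hnN : (n:ℝ) < N := by exact_mod_cast (by omega : n < N)
    have h1 : 0 < (n:ℝ) * Real.pi / N := by positivity
    have h2 : (n:ℝ) * Real.pi / N < Real.pi := by
      rw [div_lt_iff₀ hNR]
      nlinarith [Real.pi_pos]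
    exact (Real.sin_pos_of_pos_of_lt_pi h1 h2).ne'
  intro l
  induction l using Nat.strong_induction_on with
  | _ l ih =>
    intro hl
    rcases l with _ | l1
    · simp
    rcases l1 with _ | k
    · have hc := cos_sum N 0 hN hNeven (by omega)
      have hpt : ∀ n ∈ Finset.Icc 1 (N - 1),
          (-1 : ℝ) ^ n * (Real.sin (n * (1:ℕ) * Real.pi / N)) ^ 2 / (Real.sin (n * Real.pi / N)) ^ 2
          = (-1 : ℝ) ^ n * Real.cos (2 * (0:ℕ) * n * Real.pi / N) := by
        intro n hn
        have hs := hsin n hn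
        push_cast
        rw [mul_one, show 2 * (0:ℝ) * n * Real.pi / N = 0 by ring, Real.cos_zero]
        field_simp
      rw [Finset.sum_congr rfl hpt, hc]
      norm_num
    · have h1 := ih (k + 1) (by omega) (by omega)
      have h0 := ih k (by omega) (by omega)
      obtain ⟨q, hq⟩ := hNeven
      have hc := cos_sum N (k + 1) hN ⟨q, hq⟩ (by omega)
      have hpt : ∀ n ∈ Finset.Icc 1 (N - 1),
          (-1 : ℝ) ^ n * (Real.sin (n * (k+1+1:ℕ) * Real.pi / N)) ^ 2 / (Real.sin (n * Real.pi / N)) ^ 2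
          = 2 * ((-1 : ℝ) ^ n * (Real.sin (n * (k+1:ℕ) * Real.pi / N)) ^ 2 / (Real.sin (n * Real.pi / N)) ^ 2)
            - ((-1 : ℝ) ^ n * (Real.sin (n * (k:ℕ) * Real.pi / N)) ^ 2 / (Real.sin (n * Real.pi / N)) ^ 2)
            + 2 * ((-1 : ℝ) ^ n * Real.cos (2 * (k+1:ℕ) * n * Real.pi / N)) := by
        intro n hn
        have hs := hsin n hn
        have hid := trig_id ((n:ℝ) * ((k:ℝ) + 1) * Real.pi / N) ((n:ℝ) * Real.pi / N)
        have e1 : (n:ℝ) * ((k:ℝ) + 1) * Real.pi / N + (n:ℝ) * Real.pi / N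
            = (n:ℝ) * ((k:ℝ) + 1 + 1) * Real.pi / N := by ring
        have e2 : (n:ℝ) * ((k:ℝ) + 1) * Real.pi / N - (n:ℝ) * Real.pi / N
            = (n:ℝ) * (k:ℝ) * Real.pi / N := by ring
        have e3 : 2 * ((n:ℝ) * ((k:ℝ) + 1) * Real.pi / N)
            = 2 * ((k:ℝ) + 1) * (n:ℝ) * Real.pi / N := by ring
        rw [e1, e2, e3] at hid
        push_cast
        generalize Real.cos (2 * ((k:ℝ) + 1) * n * Real.pi / N) = c at hid ⊢
        field_simp
        linear_combination hid
      rw [Finset.sum_congr rfl hpt]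
      rw [Finset.sum_add_distrib, Finset.sum_sub_distrib, ← Finset.mul_sum, ← Finset.mul_sum]
      rw [h1, h0, hc]
      push_cast
      ring

theorem alternating_cycle_sum (N l : ℕ) (hN : 0 < N) (hNeven : Even N) (hl : l ≤ N / 2) :
    ∑ n ∈ Finset.Icc 1 (N - 1),
      (-1 : ℝ) ^ n * (Real.sin (n * l * Real.pi / N)) ^ 2 / (Real.sin (n * Real.pi / N)) ^ 2
    = -(l : ℝ) ^ 2 := by
  exact key N hN hNeven l hl
end
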